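/- arXiv:2410.06868 — 15 statements merged into one kernel-verified Lean document; each statement's English description precedes it below -/
import Mathlib

section
/- Let I be a finite set, let λ : I → ℝ with λ_i > 0 for all i ∈ I, and let x : I → ℝ with x_i ≥ 0 for all i ∈ I. Suppose that for every subset S ⊆ I one has ∑_{i∈S} x_i ≤ 1 − exp(−∑_{i∈S} λ_i). Then for every convex function f : [0,1] → ℝ with f(0) = 0 and f ≥ 0, one has ∑_{i∈I} λ_i · f(x_i / λ_i) ≤ ∫_0^∞ f(e^{−λ}) dλ (where the right-hand side is allowed to be +∞). -/
open MeasureTheory Set Finset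

namespace ConverseJensenAux

variable {f : ℝ → ℝ}

lemma slope_comm (u v a b : ℝ) : (u - v) / (a - b) = (v - u) / (b - a) := by
  rw [← neg_sub v u, ← neg_sub b a, neg_div_neg_eq]

lemma f_mono (hconv : ConvexOn ℝ (Set.Icc 0 1) f) (hf0 : f 0 = 0)
    (hfnonneg : ∀ t ∈ Set.Icc (0:ℝ) 1, 0 ≤ f t) :
    ∀ s ∈ Set.Icc (0:ℝ) 1, ∀ s' ∈ Set.Icc (0:ℝ) 1, s ≤ s' → f s ≤ f s' := by
  intro s hs s' hs' hss
  rcases eq_or_lt_of_le hs'.1 with h0 | h0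
  · have hs0 : s = 0 := le_antisymm (h0 ▸ hss) hs.1
    rw [hs0, ← h0]
  · have hθ0 : 0 ≤ s / s' := div_nonneg hs.1 h0.le
    have hθ1 : s / s' ≤ 1 := (div_le_one h0).2 hss
    have h2 : (0:ℝ) ∈ Set.Icc (0:ℝ) 1 := ⟨le_refl _, zero_le_one⟩
    have key := hconv.2 hs' h2 hθ0 (by linarith : (0:ℝ) ≤ 1 - s / s') (by ring)
    simp only [smul_eq_mul, hf0, mul_zero, add_zero] at key
    rw [div_mul_cancel₀ s h0.ne'] at key
    calc f s ≤ s / s' * f s' := key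
      _ ≤ 1 * f s' := mul_le_mul_of_nonneg_right hθ1 (hfnonneg s' hs')
      _ = f s' := one_mul _

/-- sup of left secant slopes: a subgradient of `f` at `r`. -/
noncomputable def gsub (f : ℝ → ℝ) (r : ℝ) : ℝ :=
  sSup ((fun a => (f r - f a) / (r - a)) '' Set.Ico 0 r)

lemma gsub_zero : gsub f 0 = 0 := by
  simp [gsub, Real.sSup_empty]

lemma gsub_bdd (hconv : ConvexOn ℝ (Set.Icc 0 1) f) {r : ℝ} (hr0 : 0 ≤ r) (hr1 : r < 1) :
    BddAbove ((fun a => (f r - f a) / (r - a)) '' Set.Ico 0 r) := by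
  refine ⟨(f 1 - f r) / (1 - r), ?_⟩
  rintro _ ⟨a, ha, rfl⟩
  show (f r - f a) / (r - a) ≤ (f 1 - f r) / (1 - r)
  rw [slope_comm (f r) (f a) r a]
  exact hconv.secant_mono ⟨hr0, hr1.le⟩ ⟨ha.1, (ha.2.trans hr1).le⟩ ⟨zero_le_one, le_refl 1⟩
    ha.2.ne hr1.ne' ((ha.2.trans hr1).le)

lemma gsub_nonneg (hconv : ConvexOn ℝ (Set.Icc 0 1) f) (hf0 : f 0 = 0)
    (hfnonneg : ∀ t ∈ Set.Icc (0:ℝ) 1, 0 ≤ f t) {r : ℝ} (hr0 : 0 ≤ r) (hr1 : r < 1) :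
    0 ≤ gsub f r := by
  rcases eq_or_lt_of_le hr0 with h | h
  · rw [← h, gsub_zero]
  · have hmem : (f r - f 0) / (r - 0) ∈ (fun a => (f r - f a) / (r - a)) '' Set.Ico 0 r :=
      ⟨0, ⟨le_refl 0, h⟩, rfl⟩
    have h1 : (f r - f 0) / (r - 0) ≤ gsub f r := le_csSup (gsub_bdd hconv hr0 hr1) hmem
    have h2 : 0 ≤ (f r - f 0) / (r - 0) := by
      apply div_nonneg _ (by linarith)
      rw [hf0]
      linarith [hfnonneg r ⟨hr0, hr1.le⟩]
    linarith

lemma gsub_subgrad (hconv : ConvexOn ℝ (Set.Icc 0 1) f) (hf0 : f 0 = 0)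
    (hfnonneg : ∀ t ∈ Set.Icc (0:ℝ) 1, 0 ≤ f t) {r s : ℝ} (hr0 : 0 ≤ r) (hr1 : r < 1)
    (hs : s ∈ Set.Icc (0:ℝ) 1) : f r + gsub f r * (s - r) ≤ f s := by
  rcases lt_trichotomy s r with hsr | rfl | hrs
  · have hmem : (f r - f s) / (r - s) ∈ (fun a => (f r - f a) / (r - a)) '' Set.Ico 0 r :=
      ⟨s, ⟨hs.1, hsr⟩, rfl⟩
    have h1 : (f r - f s) / (r - s) ≤ gsub f r := le_csSup (gsub_bdd hconv hr0 hr1) hmem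
    have hpos : (0:ℝ) < r - s := by linarith
    rw [div_le_iff₀ hpos] at h1
    nlinarith
  · simp
  · rcases eq_or_lt_of_le hr0 with h | h
    · rw [← h, gsub_zero, hf0]
      simpa using hfnonneg s hs
    · have hne : ((fun a => (f r - f a) / (r - a)) '' Set.Ico 0 r).Nonempty :=
        ⟨_, ⟨0, ⟨le_refl 0, h⟩, rfl⟩⟩
      have h1 : gsub f r ≤ (f s - f r) / (s - r) := by
        apply csSup_le hne
        rintro _ ⟨a, ha, rfl⟩
        show (f r - f a) / (r - a) ≤ (f s - f r) / (s - r)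
        rw [slope_comm (f r) (f a) r a]
        exact hconv.secant_mono ⟨hr0, hr1.le⟩ ⟨ha.1, by linarith [ha.2, hs.2]⟩ hs
          ha.2.ne hrs.ne' (by linarith [ha.2])
      have hpos : (0:ℝ) < s - r := by linarith
      rw [le_div_iff₀ hpos] at h1
      linarith

lemma gsub_mono (hconv : ConvexOn ℝ (Set.Icc 0 1) f) (hf0 : f 0 = 0)
    (hfnonneg : ∀ t ∈ Set.Icc (0:ℝ) 1, 0 ≤ f t) {r r' : ℝ} (hr0 : 0 ≤ r)
    (hrr : r ≤ r') (hr1 : r' < 1) : gsub f r ≤ gsub f r' := by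
  rcases eq_or_lt_of_le hr0 with h | h
  · rw [← h, gsub_zero]
    exact gsub_nonneg hconv hf0 hfnonneg (h ▸ hrr) hr1
  · refine csSup_le ⟨_, ⟨0, ⟨le_refl 0, h⟩, rfl⟩⟩ ?_
    rintro _ ⟨a, ha, rfl⟩
    show (f r - f a) / (r - a) ≤ gsub f r'
    have hr'0 : 0 ≤ r' := hr0.trans hrr
    have h1 : (f r - f a) / (r - a) ≤ (f r' - f a) / (r' - a) :=
      hconv.secant_mono ⟨ha.1, by linarith [ha.2]⟩
        ⟨hr0, by linarith⟩ ⟨hr'0, hr1.le⟩ ha.2.ne' (lt_of_lt_of_le ha.2 hrr).ne' hrr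
    exact h1.trans (le_csSup (gsub_bdd hconv hr'0 hr1)
      ⟨a, ⟨ha.1, lt_of_lt_of_le ha.2 hrr⟩, rfl⟩)

lemma abel_aux (φ d : ℕ → ℝ) (hφ : ∀ k, φ (k + 1) ≤ φ k) (n : ℕ)
    (hD : ∀ m ≤ n, 0 ≤ ∑ k ∈ Finset.range m, d k) :
    ∀ m, m ≤ n → φ m * ∑ k ∈ Finset.range m, d k ≤ ∑ k ∈ Finset.range m, φ k * d k := by
  intro m
  induction m with
  | zero => intro _; simp
  | succ m ih =>
    intro hm
    have h1 := ih (Nat.le_of_succ_le hm)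
    have h2 : φ (m + 1) * ∑ k ∈ Finset.range (m + 1), d k
        ≤ φ m * ∑ k ∈ Finset.range (m + 1), d k :=
      mul_le_mul_of_nonneg_right (hφ m) (hD (m + 1) hm)
    rw [Finset.sum_range_succ] at h2 ⊢
    rw [Finset.sum_range_succ (fun k => φ k * d k)]
    have h3 : φ m * (∑ k ∈ Finset.range m, d k + d m)
        = φ m * ∑ k ∈ Finset.range m, d k + φ m * d m := by ring
    linarith

lemma exp_mem (t : ℝ) : Real.exp (-(max t 0)) ∈ Set.Icc (0:ℝ) 1 :=
  ⟨(Real.exp_pos _).le, by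
    rw [← Real.exp_zero]
    exact Real.exp_le_exp.2 (neg_nonpos.2 (le_max_right t 0))⟩

lemma core (f : ℝ → ℝ) (hconv : ConvexOn ℝ (Set.Icc 0 1) f) (hf0 : f 0 = 0)
    (hfnonneg : ∀ t ∈ Set.Icc (0:ℝ) 1, 0 ≤ f t)
    (n : ℕ) (L R : ℕ → ℝ) (hL : ∀ k, 0 < L k) (hR0 : ∀ k, 0 ≤ R k) (hR1 : ∀ k, R k < 1)
    (hRa : ∀ k l, k ≤ l → R l ≤ R k)
    (hC : ∀ m ≤ n, ∑ k ∈ Finset.range m, L k * R k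
      ≤ 1 - Real.exp (-(∑ k ∈ Finset.range m, L k))) :
    ∑ k ∈ Finset.range n, L k * f (R k) ≤
      ∫ t in (0:ℝ)..(∑ k ∈ Finset.range n, L k), f (Real.exp (-(max t 0))) := by
  have fm := f_mono hconv hf0 hfnonneg
  set G : ℝ → ℝ := fun t => f (Real.exp (-(max t 0))) with hG
  set Λ : ℕ → ℝ := fun m => ∑ k ∈ Finset.range m, L k with hΛdef
  have hGanti : Antitone G := by
    intro t t' htt
    exact fm _ (exp_mem t') _ (exp_mem t)
      (Real.exp_le_exp.2 (neg_le_neg (max_le_max htt (le_refl 0))))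
  have hGint : ∀ a b : ℝ, IntervalIntegrable G volume a b := fun a b =>
    hGanti.intervalIntegrable
  have hΛ0 : ∀ m, 0 ≤ Λ m := fun m => Finset.sum_nonneg fun k _ => (hL k).le
  have hΛsucc : ∀ m, Λ (m + 1) = Λ m + L m := fun m => Finset.sum_range_succ L m
  set φ : ℕ → ℝ := fun k => gsub f (R k) with hφdef
  have hφanti : ∀ k, φ (k + 1) ≤ φ k := fun k =>
    gsub_mono hconv hf0 hfnonneg (hR0 (k + 1)) (hRa k (k + 1) (Nat.le_succ k)) (hR1 k)
  have hφnn : ∀ k, 0 ≤ φ k := fun k => gsub_nonneg hconv hf0 hfnonneg (hR0 k) (hR1 k)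
  set d : ℕ → ℝ := fun k => (Real.exp (-(Λ k)) - Real.exp (-(Λ (k + 1)))) - L k * R k
    with hddef
  have piece : ∀ k, L k * f (R k) + φ k * d k ≤ ∫ t in (Λ k)..(Λ (k + 1)), G t := by
    intro k
    have hab : Λ k ≤ Λ (k + 1) := by rw [hΛsucc]; linarith [hL k]
    have hlow : ∀ t ∈ Set.Icc (Λ k) (Λ (k + 1)),
        (f (R k) - φ k * R k) + φ k * Real.exp (-t) ≤ G t := by
      intro t ht
      have ht0 : 0 ≤ t := le_trans (hΛ0 k) ht.1
      have hmax : max t 0 = t := max_eq_left ht0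
      have h := gsub_subgrad hconv hf0 hfnonneg (hR0 k) (hR1 k) (exp_mem t)
      calc (f (R k) - φ k * R k) + φ k * Real.exp (-t)
          = f (R k) + gsub f (R k) * (Real.exp (-(max t 0)) - R k) := by
            rw [hmax, hφdef]; ring
        _ ≤ f (Real.exp (-(max t 0))) := h
        _ = G t := by rw [hG]
    have hlowint : IntervalIntegrable
        (fun t => (f (R k) - φ k * R k) + φ k * Real.exp (-t)) volume (Λ k) (Λ (k + 1)) :=
      (Continuous.intervalIntegrable (by fun_prop) _ _)
    have hmono := intervalIntegral.integral_mono_on hab hlowint (hGint _ _) hlow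
    have hexpint : ∫ t in (Λ k)..(Λ (k + 1)), Real.exp (-t)
        = Real.exp (-(Λ k)) - Real.exp (-(Λ (k + 1))) := by
      rw [intervalIntegral.integral_comp_neg (fun t => Real.exp t), integral_exp]
    have hcalc : (∫ t in (Λ k)..(Λ (k + 1)), ((f (R k) - φ k * R k) + φ k * Real.exp (-t)))
        = (Λ (k + 1) - Λ k) * (f (R k) - φ k * R k)
          + φ k * (Real.exp (-(Λ k)) - Real.exp (-(Λ (k + 1)))) := by
      rw [intervalIntegral.integral_add (intervalIntegrable_const)
          (Continuous.intervalIntegrable (by fun_prop) _ _),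
        intervalIntegral.integral_const, intervalIntegral.integral_const_mul, hexpint]
      simp [smul_eq_mul]
    rw [hcalc] at hmono
    have hba : Λ (k + 1) - Λ k = L k := by rw [hΛsucc]; ring
    rw [hba] at hmono
    calc L k * f (R k) + φ k * d k
        = L k * (f (R k) - φ k * R k)
          + φ k * (Real.exp (-(Λ k)) - Real.exp (-(Λ (k + 1)))) := by
          simp only [hddef]; ring
      _ ≤ _ := hmono
  have hsum := intervalIntegral.sum_integral_adjacent_intervals
    (a := Λ) (μ := volume) (f := G) (n := n) (fun k _ => hGint _ _)
  have hΛzero : Λ 0 = 0 := Finset.sum_range_zero L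
  have hDnn : ∀ m ≤ n, 0 ≤ ∑ k ∈ Finset.range m, d k := by
    intro m hm
    have htel : ∑ k ∈ Finset.range m, (Real.exp (-(Λ k)) - Real.exp (-(Λ (k + 1))))
        = Real.exp (-(Λ 0)) - Real.exp (-(Λ m)) :=
      Finset.sum_range_sub' (fun k => Real.exp (-(Λ k))) m
    have heq : ∑ k ∈ Finset.range m, d k
        = (1 - Real.exp (-(Λ m))) - ∑ k ∈ Finset.range m, L k * R k := by
      simp only [hddef]
      rw [Finset.sum_sub_distrib, htel, hΛzero, neg_zero, Real.exp_zero]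
    rw [heq]
    linarith [hC m hm]
  have habel : 0 ≤ ∑ k ∈ Finset.range n, φ k * d k := by
    have h1 := abel_aux φ d hφanti n hDnn n (le_refl n)
    have h0 : 0 ≤ φ n * ∑ k ∈ Finset.range n, d k :=
      mul_nonneg (hφnn n) (hDnn n (le_refl n))
    linarith
  have h1 : ∑ k ∈ Finset.range n, (L k * f (R k) + φ k * d k)
      ≤ ∑ k ∈ Finset.range n, ∫ t in (Λ k)..(Λ (k + 1)), G t :=
    Finset.sum_le_sum fun k _ => piece k
  rw [hsum, hΛzero] at h1
  rw [Finset.sum_add_distrib] at h1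
  linarith

lemma final_step (f : ℝ → ℝ) (hconv : ConvexOn ℝ (Set.Icc 0 1) f) (hf0 : f 0 = 0)
    (hfnonneg : ∀ t ∈ Set.Icc (0:ℝ) 1, 0 ≤ f t) (c : ℝ) (hc : 0 ≤ c) (y : ℝ)
    (hy : y ≤ ∫ t in (0:ℝ)..c, f (Real.exp (-(max t 0)))) :
    ENNReal.ofReal y ≤ ∫⁻ t in Set.Ioi (0:ℝ), ENNReal.ofReal (f (Real.exp (-t))) := by
  have fm := f_mono hconv hf0 hfnonneg
  set G : ℝ → ℝ := fun t => f (Real.exp (-(max t 0))) with hG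
  have hGanti : Antitone G := by
    intro t t' htt
    exact fm _ (exp_mem t') _ (exp_mem t)
      (Real.exp_le_exp.2 (neg_le_neg (max_le_max htt (le_refl 0))))
  have hGnn : ∀ t, 0 ≤ G t := fun t => hfnonneg _ (exp_mem t)
  have hint : IntegrableOn G (Set.Ioc 0 c) volume :=
    (hGanti.intervalIntegrable (a := 0) (b := c)).1
  have h1 : ENNReal.ofReal y ≤ ENNReal.ofReal (∫ t in (0:ℝ)..c, G t) :=
    ENNReal.ofReal_le_ofReal hy
  rw [intervalIntegral.integral_of_le hc] at h1
  rw [ofReal_integral_eq_lintegral_ofReal hint (ae_of_all _ hGnn)] at h1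
  calc ENNReal.ofReal y ≤ ∫⁻ t in Set.Ioc 0 c, ENNReal.ofReal (G t) := h1
    _ ≤ ∫⁻ t in Set.Ioi 0, ENNReal.ofReal (G t) := lintegral_mono_set Set.Ioc_subset_Ioi_self
    _ = ∫⁻ t in Set.Ioi 0, ENNReal.ofReal (f (Real.exp (-t))) := by
        apply setLIntegral_congr_fun measurableSet_Ioi
        exact fun t ht => by rw [hG]; simp [max_eq_left (le_of_lt (Set.mem_Ioi.mp ht))]

end ConverseJensenAux

open ConverseJensenAux in
/-- Converse Jensen Inequality for solutions of the Natural LP: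
if `∑_{i∈S} x i ≤ 1 - exp(-∑_{i∈S} λ i)` for all subsets `S`, then for every convex
nonnegative `f : [0,1] → ℝ` with `f 0 = 0`,
`∑ i, λ i * f (x i / λ i) ≤ ∫_0^∞ f (e^{-t}) dt` (right-hand side possibly `+∞`). -/
theorem converse_jensen {ι : Type*} [Fintype ι] (lam x : ι → ℝ)
    (hlam : ∀ i, 0 < lam i) (hx : ∀ i, 0 ≤ x i)
    (hLP : ∀ S : Finset ι, ∑ i ∈ S, x i ≤ 1 - Real.exp (-(∑ i ∈ S, lam i)))
    (f : ℝ → ℝ) (hconv : ConvexOn ℝ (Set.Icc 0 1) f) (hf0 : f 0 = 0)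
    (hfnonneg : ∀ t ∈ Set.Icc (0:ℝ) 1, 0 ≤ f t) :
    ENNReal.ofReal (∑ i, lam i * f (x i / lam i)) ≤
      ∫⁻ t in Set.Ioi (0:ℝ), ENNReal.ofReal (f (Real.exp (-t))) := by
  classical
  set n := Fintype.card ι with hn
  set e₀ : Fin n ≃ ι := (Fintype.equivFin ι).symm with he₀
  set r : ι → ℝ := fun i => x i / lam i with hr
  set σ : Equiv.Perm (Fin n) := Tuple.sort (r ∘ e₀) with hσ
  set e : Fin n ≃ ι := (Fin.revPerm.trans σ).trans e₀ with he
  have hsorted : ∀ k l : Fin n, k ≤ l → r (e l) ≤ r (e k) := by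
    intro k l hkl
    have hm := Tuple.monotone_sort (r ∘ e₀)
    have hrev : l.rev ≤ k.rev := Fin.rev_le_rev.2 hkl
    have := hm hrev
    simpa [he, Equiv.trans_apply, Fin.revPerm_apply] using this
  have hxlt : ∀ i, x i < lam i := by
    intro i
    have h1 := hLP {i}
    simp only [Finset.sum_singleton] at h1
    have h2 := Real.add_one_lt_exp (x := -(lam i)) (neg_ne_zero.2 (hlam i).ne')
    have h3 : 0 < Real.exp (-(lam i)) := Real.exp_pos _
    linarith
  set L : ℕ → ℝ := fun k => if h : k < n then lam (e ⟨k, h⟩) else 1 with hLdef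
  set R : ℕ → ℝ := fun k => if h : k < n then x (e ⟨k, h⟩) / lam (e ⟨k, h⟩) else 0 with hRdef
  have hLpos : ∀ k, 0 < L k := by
    intro k; simp only [hLdef]; split
    · exact hlam _
    · exact one_pos
  have hR0 : ∀ k, 0 ≤ R k := by
    intro k; simp only [hRdef]; split
    · exact div_nonneg (hx _) (hlam _).le
    · exact le_refl 0
  have hR1 : ∀ k, R k < 1 := by
    intro k; simp only [hRdef]; split
    · exact (div_lt_one (hlam _)).2 (hxlt _)
    · exact one_pos
  have hRanti : ∀ k l, k ≤ l → R l ≤ R k := by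
    intro k l hkl
    by_cases hl : l < n
    · have hk : k < n := lt_of_le_of_lt hkl hl
      simp only [hRdef]
      rw [dif_pos hl, dif_pos hk]
      exact hsorted ⟨k, hk⟩ ⟨l, hl⟩ hkl
    · have h0 : R l = 0 := by simp only [hRdef]; rw [dif_neg hl]
      rw [h0]; exact hR0 k
  have hC : ∀ m ≤ n, ∑ k ∈ Finset.range m, L k * R k
      ≤ 1 - Real.exp (-(∑ k ∈ Finset.range m, L k)) := by
    intro m hm
    set S : Finset ι := Finset.image (fun k : Fin m => e (Fin.castLE hm k)) Finset.univ with hS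
    have hinj : Function.Injective (fun k : Fin m => e (Fin.castLE hm k)) := fun a b hab =>
      Fin.castLE_injective hm (e.injective hab)
    have hsx : ∑ i ∈ S, x i = ∑ k ∈ Finset.range m, L k * R k := by
      rw [hS, Finset.sum_image (fun a _ b _ h => hinj h),
        ← Fin.sum_univ_eq_sum_range (fun j => L j * R j) m]
      apply Finset.sum_congr rfl
      intro k _
      have hkn : (k : ℕ) < n := lt_of_lt_of_le k.2 hm
      simp only [hLdef, hRdef, dif_pos hkn]
      rw [mul_comm, div_mul_cancel₀ _ (hlam _).ne']
      rfl
    have hsl : ∑ i ∈ S, lam i = ∑ k ∈ Finset.range m, L k := by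
      rw [hS, Finset.sum_image (fun a _ b _ h => hinj h),
        ← Fin.sum_univ_eq_sum_range (fun j => L j) m]
      apply Finset.sum_congr rfl
      intro k _
      have hkn : (k : ℕ) < n := lt_of_lt_of_le k.2 hm
      simp only [hLdef, dif_pos hkn]
      rfl
    have := hLP S
    rw [hsx, hsl] at this
    exact this
  have hmain : ∑ i, lam i * f (x i / lam i) = ∑ k ∈ Finset.range n, L k * f (R k) := by
    rw [← Equiv.sum_comp e (fun i => lam i * f (x i / lam i)),
      ← Fin.sum_univ_eq_sum_range (fun k => L k * f (R k)) n]
    apply Finset.sum_congr rfl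
    intro k _
    simp only [hLdef, hRdef, dif_pos k.2]
  have hcore := core f hconv hf0 hfnonneg n L R hLpos hR0 hR1 hRanti hC
  have hΛnn : (0:ℝ) ≤ ∑ k ∈ Finset.range n, L k :=
    Finset.sum_nonneg fun k _ => (hLpos k).le
  rw [hmain]
  exact final_step f hconv hf0 hfnonneg _ hΛnn _ hcore
end

section
/- Let 0 < θ ≤ 1/2. Let I be a finite set, let λ : I → ℝ with λ_i > 0 for all i ∈ I, and let x : I → ℝ with x_i ≥ 0 for all i ∈ I, such that for every subset S ⊆ I one has ∑_{i∈S} x_i ≤ 1 − exp(−∑_{i∈S} λ_i). Then (1/θ) · ∑_{i∈I} (x_i − (1−θ)·λ_i)^+ ≤ 1 + ((1−θ)/θ)·ln(1−θ), where t^+ denotes max{t, 0}. -/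
/-- Corollary of the Converse Jensen Inequality for `f(x) = (1/θ)(x - (1-θ))⁺`:
`(1/θ) ∑ i, (x i - (1-θ) λ i)⁺ ≤ 1 + ((1-θ)/θ) ln(1-θ)`. -/
theorem converse_jensen_theta {ι : Type*} [Fintype ι] (θ : ℝ)
    (hθ0 : 0 < θ) (hθ1 : θ ≤ 1/2) (lam x : ι → ℝ)
    (hlam : ∀ i, 0 < lam i) (hx : ∀ i, 0 ≤ x i)
    (hLP : ∀ S : Finset ι, ∑ i ∈ S, x i ≤ 1 - Real.exp (-(∑ i ∈ S, lam i))) :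
    (1/θ) * ∑ i, max (x i - (1 - θ) * lam i) 0 ≤
      1 + ((1 - θ)/θ) * Real.log (1 - θ) := by
  have h1θ : (0:ℝ) < 1 - θ := by linarith
  have key : ∀ t : ℝ, 1 - Real.exp (-t) - (1-θ)*t ≤ θ + (1-θ)*Real.log (1-θ) := by
    intro t
    have h := Real.add_one_le_exp (-t - Real.log (1-θ))
    have he : Real.exp (-t - Real.log (1-θ)) = Real.exp (-t) / (1-θ) := by
      rw [Real.exp_sub, Real.exp_log h1θ]
    rw [he] at h
    have h2 : (-t - Real.log (1-θ) + 1) * (1-θ) ≤ Real.exp (-t) :=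
      (le_div_iff₀ h1θ).mp h
    nlinarith [h2]
  set S := Finset.univ.filter (fun i => 0 < x i - (1-θ)*lam i) with hSdef
  have hsum : ∑ i, max (x i - (1-θ)*lam i) 0 = ∑ i ∈ S, (x i - (1-θ)*lam i) := by
    rw [hSdef, Finset.sum_filter]
    refine Finset.sum_congr rfl fun i _ => ?_
    by_cases h : 0 < x i - (1-θ)*lam i
    · simp [h, max_eq_left h.le]
    · simp [h, max_eq_right (not_lt.mp h)]
  have hS : ∑ i ∈ S, (x i - (1-θ)*lam i) ≤ θ + (1-θ)*Real.log (1-θ) := by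
    rw [Finset.sum_sub_distrib, ← Finset.mul_sum]
    have h1 := hLP S
    have h2 := key (∑ i ∈ S, lam i)
    linarith
  rw [hsum]
  have hrhs : (1/θ) * (θ + (1-θ)*Real.log (1-θ)) = 1 + ((1 - θ)/θ) * Real.log (1 - θ) := by
    field_simp
  calc (1/θ) * ∑ i ∈ S, (x i - (1-θ)*lam i)
      ≤ (1/θ) * (θ + (1-θ)*Real.log (1-θ)) :=
        mul_le_mul_of_nonneg_left hS (by positivity)
    _ = 1 + ((1 - θ)/θ) * Real.log (1 - θ) := hrhs
end

section
/- Let q : [0,∞) → ℝ be defined by q(y) = e^{−y} for 0 ≤ y ≤ 1 and q(y) = e^{−e^{y−1}} for y > 1. Then ∫_0^∞ e^{−z}·(1 − q(z)) dz > 0.513. -/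
/-- The function `q(y) = e^{-y}` for `0 ≤ y ≤ 1` and `q(y) = e^{-e^{y-1}}` for `y > 1`. -/
noncomputable def q (y : ℝ) : ℝ :=
  if y ≤ 1 then Real.exp (-y) else Real.exp (-Real.exp (y - 1))


open Real MeasureTheory Set

noncomputable def hh (z : ℝ) : ℝ := Real.exp (-z - Real.exp (z-1))

lemma hh_def (z : ℝ) : hh z = Real.exp (-z - Real.exp (z-1)) := rfl

lemma hh_cont : Continuous hh := by
  unfold hh
  continuity

lemma sum8_le_exp {x : ℝ} (hx : 0 ≤ x) :
    1+x+x^2/2+x^3/6+x^4/24+x^5/120+x^6/720+x^7/5040 ≤ Real.exp x := by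
  have h := Real.sum_le_exp_of_nonneg hx 8
  have e : ∑ i ∈ Finset.range 8, x^i / (Nat.factorial i) =
      1+x+x^2/2+x^3/6+x^4/24+x^5/120+x^6/720+x^7/5040 := by
    simp [Finset.sum_range_succ, Nat.factorial]
    try ring
  linarith [h, e.ge]

lemma exp_le_sum8 {x : ℝ} (h0 : 0 ≤ x) (h1 : x ≤ 1) :
    Real.exp x ≤ 1+x+x^2/2+x^3/6+x^4/24+x^5/120+x^6/720+x^7/5040 + x^8*9/322560 := by
  have h := Real.exp_bound' h0 h1 (n := 8) (by norm_num)
  have e : ∑ i ∈ Finset.range 8, x^i / (Nat.factorial i) =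
      1+x+x^2/2+x^3/6+x^4/24+x^5/120+x^6/720+x^7/5040 := by
    simp [Finset.sum_range_succ, Nat.factorial]
    try ring
  rw [e] at h
  have e2 : x ^ 8 * (8+1) / ((Nat.factorial 8 : ℕ) * 8) = x^8*9/322560 := by
    norm_num [Nat.factorial]
  linarith [h, e2.le]

lemma exp_lb (k : ℕ) (s L : ℝ) (hs : 0 ≤ s) (hL0 : 0 ≤ L)
    (hsum : L ≤ 1+s+s^2/2+s^3/6+s^4/24+s^5/120+s^6/720+s^7/5040) :
    L ^ k ≤ Real.exp (k * s) := by
  rw [Real.exp_nat_mul]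
  exact pow_le_pow_left₀ hL0 (hsum.trans (sum8_le_exp hs)) k

lemma exp_ub (k : ℕ) (s U : ℝ) (h0 : 0 ≤ s) (h1 : s ≤ 1)
    (hsum : 1+s+s^2/2+s^3/6+s^4/24+s^5/120+s^6/720+s^7/5040 + s^8*9/322560 ≤ U) :
    Real.exp (k * s) ≤ U ^ k := by
  rw [Real.exp_nat_mul]
  exact pow_le_pow_left₀ (Real.exp_pos s).le ((exp_le_sum8 h0 h1).trans hsum) k

lemma exp_neg_ub (k : ℕ) (s L U : ℝ) (hs : 0 ≤ s) (hL0 : 0 < L)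
    (hsum : L ≤ 1+s+s^2/2+s^3/6+s^4/24+s^5/120+s^6/720+s^7/5040)
    (hU : (L^k)⁻¹ ≤ U) : Real.exp (-((k:ℝ)*s)) ≤ U := by
  rw [Real.exp_neg]
  refine le_trans ?_ hU
  exact inv_anti₀ (pow_pos hL0 k) (exp_lb k s L hs hL0.le hsum)

lemma exp_neg_lb (k : ℕ) (s U L' : ℝ) (h0 : 0 ≤ s) (h1 : s ≤ 1)
    (hsum : 1+s+s^2/2+s^3/6+s^4/24+s^5/120+s^6/720+s^7/5040 + s^8*9/322560 ≤ U)
    (hL : L' ≤ (U^k)⁻¹) : L' ≤ Real.exp (-((k:ℝ)*s)) := by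
  rw [Real.exp_neg]
  refine hL.trans ?_
  exact inv_anti₀ (Real.exp_pos _) (exp_ub k s U h0 h1 hsum)

lemma int_exp (c a b : ℝ) (hc : 0 < c) :
    ∫ x in a..b, Real.exp (-(c*x)) = (Real.exp (-(c*a)) - Real.exp (-(c*b)))/c := by
  have hd : ∀ x ∈ Set.uIcc a b, HasDerivAt (fun y => -(Real.exp (-(c*y))/c)) (Real.exp (-(c*x))) x := by
    intro x _
    have h1 : HasDerivAt (fun y : ℝ => -(c*y)) (-c) x := by
      have := ((hasDerivAt_id' x).const_mul c).neg
      simp only [mul_one] at this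
      exact this
    have h2 := (Real.hasDerivAt_exp (-(c*x))).comp x h1
    have h3 := (h2.div_const c).neg
    have h4 : -(Real.exp (-(c*x)) * -c / c) = Real.exp (-(c*x)) := by field_simp
    rw [h4] at h3
    exact h3
  rw [intervalIntegral.integral_eq_sub_of_hasDerivAt hd
    ((Continuous.intervalIntegrable (by continuity) a b))]
  field_simp
  ring

lemma hh_integrableOn (a : ℝ) : IntegrableOn hh (Ioi a) := by
  have hbig : IntegrableOn (fun x => Real.exp (-(1:ℝ)*x)) (Ioi a) := exp_neg_integrableOn_Ioi a one_pos
  refine Integrable.mono hbig (hh_cont.aestronglyMeasurable) ?_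
  refine Filter.Eventually.of_forall (fun z => ?_)
  rw [hh_def, Real.norm_eq_abs, Real.norm_eq_abs, abs_of_pos (Real.exp_pos _),
    abs_of_pos (Real.exp_pos _)]
  apply Real.exp_le_exp.mpr
  have := (Real.exp_pos (z-1)).le
  linarith

lemma chain (a b r t s : ℝ) (hab : a ≤ b)
    (hp : ∫ z in Ioc a b, hh z ≤ r) (ht : ∫ z in Ioi b, hh z ≤ t) (hrt : r + t ≤ s) :
    ∫ z in Ioi a, hh z ≤ s := by
  have hsplit : ∫ z in Ioi a, hh z = (∫ z in Ioc a b, hh z) + ∫ z in Ioi b, hh z := by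
    rw [← setIntegral_union (Set.Ioc_disjoint_Ioi le_rfl) measurableSet_Ioi
      ((hh_integrableOn a).mono_set Set.Ioc_subset_Ioi_self)
      ((hh_integrableOn a).mono_set (Set.Ioi_subset_Ioi hab)),
      Set.Ioc_union_Ioi_eq_Ioi hab]
  rw [hsplit]
  linarith

lemma piece (a b m lam U V r : ℝ) (hab : a ≤ b) (hma : m ≤ a + 1)
    (hlam : 0 < lam) (hlam2 : lam ≤ Real.exp (m-1))
    (hU : Real.exp (lam*(m-1) - (1+lam)*a) ≤ U)
    (hV : V ≤ Real.exp (lam*(m-1) - (1+lam)*b))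
    (hr : (U - V)/(1+lam) ≤ r) :
    ∫ z in Set.Ioc a b, hh z ≤ r := by
  have hc : (0:ℝ) < 1 + lam := by linarith
  have step1 : ∀ z ∈ Set.Ioc a b, hh z ≤ Real.exp (lam*(m-1)) * Real.exp (-((1+lam)*z)) := by
    intro z hz
    rw [hh_def, ← Real.exp_add]
    apply Real.exp_le_exp.mpr
    have e1 : Real.exp (z-1) = Real.exp (m-1) * Real.exp (z-m) := by
      rw [← Real.exp_add]; ring_nf
    have e2 : (z-m) + 1 ≤ Real.exp (z-m) := Real.add_one_le_exp _
    have e3 : 0 ≤ 1 + (z - m) := by have := hz.1; linarith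
    have h1 : lam * (1 + (z - m)) ≤ Real.exp (z-1) := by
      calc lam * (1+(z-m)) ≤ Real.exp (m-1) * (1+(z-m)) := by nlinarith
        _ ≤ Real.exp (m-1) * Real.exp (z-m) := by nlinarith [Real.exp_pos (m-1)]
        _ = Real.exp (z-1) := e1.symm
    nlinarith [h1]
  have step2 : ∫ z in Set.Ioc a b, hh z ≤
      ∫ z in Set.Ioc a b, Real.exp (lam*(m-1)) * Real.exp (-((1+lam)*z)) := by
    refine setIntegral_mono_on ((hh_integrableOn a).mono_set Set.Ioc_subset_Ioi_self)
      (Continuous.integrableOn_Ioc (by continuity)) measurableSet_Ioc step1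
  have step3 : ∫ z in Set.Ioc a b, Real.exp (lam*(m-1)) * Real.exp (-((1+lam)*z))
      = Real.exp (lam*(m-1)) * ((Real.exp (-((1+lam)*a)) - Real.exp (-((1+lam)*b)))/(1+lam)) := by
    rw [MeasureTheory.integral_const_mul, ← intervalIntegral.integral_of_le hab,
      int_exp (1+lam) a b hc]
  have step4 : Real.exp (lam*(m-1)) * ((Real.exp (-((1+lam)*a)) - Real.exp (-((1+lam)*b)))/(1+lam))
      ≤ (U - V)/(1+lam) := by
    have g1 : Real.exp (lam*(m-1) + -((1+lam)*a)) ≤ U := by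
      refine le_trans (le_of_eq ?_) hU; ring_nf
    have g2 : V ≤ Real.exp (lam*(m-1) + -((1+lam)*b)) := by
      refine le_trans hV (le_of_eq ?_); ring_nf
    rw [← mul_div_assoc, mul_sub, ← Real.exp_add, ← Real.exp_add]
    gcongr
  linarith [step2, step3.le, step4]

lemma tail_bound (B C t : ℝ) (hC : C ≤ Real.exp (B - 1))
    (ht : Real.exp (-C) * Real.exp (-B) ≤ t) :
    ∫ z in Ioi B, hh z ≤ t := by
  have hexpB : IntegrableOn (fun x => Real.exp (-x)) (Ioi B) := by
    simpa using exp_neg_integrableOn_Ioi B one_pos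
  have step1 : ∀ z ∈ Ioi B, hh z ≤ Real.exp (-C) * Real.exp (-z) := by
    intro z hz
    rw [hh_def, ← Real.exp_add]
    apply Real.exp_le_exp.mpr
    have h1 : C ≤ Real.exp (z-1) :=
      hC.trans (Real.exp_le_exp.mpr (by have := mem_Ioi.mp hz; linarith))
    linarith
  have step2 : ∫ z in Ioi B, hh z ≤ ∫ z in Ioi B, Real.exp (-C) * Real.exp (-z) :=
    setIntegral_mono_on (hh_integrableOn B) (hexpB.const_mul _) measurableSet_Ioi step1
  have step3 : ∫ z in Ioi B, Real.exp (-C) * Real.exp (-z) = Real.exp (-C) * Real.exp (-B) := by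
    rw [MeasureTheory.integral_const_mul, integral_exp_neg_Ioi]
  linarith [step2, step3.le]

lemma P0 : ∫ z in Set.Ioc (1 : ℝ) ((53 : ℝ)/50), hh z ≤ ((38242540633 : ℝ)/5000000000000) := by
  have hlam2 : (((2060909 : ℝ)/2000000)) ≤ Real.exp (((103 : ℝ)/100) - 1) := by
    have e : (((103 : ℝ)/100) : ℝ) - 1 = (((1 : ℕ) : ℝ)) * ((3 : ℝ)/100) := by norm_num
    rw [e]
    exact le_trans (by norm_num) (exp_lb 1 ((3 : ℝ)/100) ((1030454533953516839 : ℝ)/1000000000000000000) (by norm_num) (by norm_num) (by norm_num))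
  have hU : Real.exp (((2060909 : ℝ)/2000000)*(((103 : ℝ)/100)-1) - (1+((2060909 : ℝ)/2000000))*(1 : ℝ)) ≤ ((135397468295547797 : ℝ)/1000000000000000000) := by
    have e : (((2060909 : ℝ)/2000000) : ℝ)*(((103 : ℝ)/100)-1) - (1+((2060909 : ℝ)/2000000))*(1 : ℝ) = -((((4 : ℕ)) : ℝ) * ((399908173 : ℝ)/800000000)) := by norm_num
    rw [e]
    exact exp_neg_ub 4 ((399908173 : ℝ)/800000000) ((412132983198734977 : ℝ)/250000000000000000) ((135397468295547797 : ℝ)/1000000000000000000) (by norm_num) (by norm_num) (by norm_num) (by norm_num)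
  have hV : (((7491720034475969 : ℝ)/62500000000000000) : ℝ) ≤ Real.exp (((2060909 : ℝ)/2000000)*(((103 : ℝ)/100)-1) - (1+((2060909 : ℝ)/2000000))*((53 : ℝ)/50)) := by
    have e : (((2060909 : ℝ)/2000000) : ℝ)*(((103 : ℝ)/100)-1) - (1+((2060909 : ℝ)/2000000))*((53 : ℝ)/50) = -((((5 : ℕ)) : ℝ) * ((424273627 : ℝ)/1000000000)) := by norm_num
    rw [e]
    exact exp_neg_lb 5 ((424273627 : ℝ)/1000000000) ((382119942969152517 : ℝ)/250000000000000000) ((7491720034475969 : ℝ)/62500000000000000) (by norm_num) (by norm_num) (by norm_num) (by norm_num)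
  exact piece (1 : ℝ) ((53 : ℝ)/50) ((103 : ℝ)/100) ((2060909 : ℝ)/2000000) ((135397468295547797 : ℝ)/1000000000000000000) ((7491720034475969 : ℝ)/62500000000000000) ((38242540633 : ℝ)/5000000000000)
    (by norm_num) (by norm_num) (by norm_num) hlam2 hU hV (by norm_num)

lemma P1 : ∫ z in Set.Ioc ((53 : ℝ)/50) ((28 : ℝ)/25), hh z ≤ ((135173780349 : ℝ)/20000000000000) := by
  have hlam2 : (((5470871 : ℝ)/5000000)) ≤ Real.exp (((109 : ℝ)/100) - 1) := by
    have e : (((109 : ℝ)/100) : ℝ) - 1 = (((1 : ℕ) : ℝ)) * ((9 : ℝ)/100) := by norm_num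
    rw [e]
    exact le_trans (by norm_num) (exp_lb 1 ((9 : ℝ)/100) ((1094174283705102517 : ℝ)/1000000000000000000) (by norm_num) (by norm_num) (by norm_num))
  have hU : Real.exp (((5470871 : ℝ)/5000000)*(((109 : ℝ)/100)-1) - (1+((5470871 : ℝ)/5000000))*((53 : ℝ)/50)) ≤ ((119869828841809743 : ℝ)/1000000000000000000) := by
    have e : (((5470871 : ℝ)/5000000) : ℝ)*(((109 : ℝ)/100)-1) - (1+((5470871 : ℝ)/5000000))*((53 : ℝ)/50) = -((((5 : ℕ)) : ℝ) * ((1060674487 : ℝ)/2500000000)) := by norm_num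
    rw [e]
    exact exp_neg_ub 5 ((1060674487 : ℝ)/2500000000) ((764236942577093763 : ℝ)/500000000000000000) ((119869828841809743 : ℝ)/1000000000000000000) (by norm_num) (by norm_num) (by norm_num) (by norm_num)
  have hV : (((21143191335131227 : ℝ)/200000000000000000) : ℝ) ≤ Real.exp (((5470871 : ℝ)/5000000)*(((109 : ℝ)/100)-1) - (1+((5470871 : ℝ)/5000000))*((28 : ℝ)/25)) := by
    have e : (((5470871 : ℝ)/5000000) : ℝ)*(((109 : ℝ)/100)-1) - (1+((5470871 : ℝ)/5000000))*((28 : ℝ)/25) = -((((5 : ℕ)) : ℝ) * ((1123499713 : ℝ)/2500000000)) := by norm_num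
    rw [e]
    exact exp_neg_lb 5 ((1123499713 : ℝ)/2500000000) ((97960706467825757 : ℝ)/62500000000000000) ((21143191335131227 : ℝ)/200000000000000000) (by norm_num) (by norm_num) (by norm_num) (by norm_num)
  exact piece ((53 : ℝ)/50) ((28 : ℝ)/25) ((109 : ℝ)/100) ((5470871 : ℝ)/5000000) ((119869828841809743 : ℝ)/1000000000000000000) ((21143191335131227 : ℝ)/200000000000000000) ((135173780349 : ℝ)/20000000000000)
    (by norm_num) (by norm_num) (by norm_num) hlam2 hU hV (by norm_num)

lemma P2 : ∫ z in Set.Ioc ((28 : ℝ)/25) ((59 : ℝ)/50), hh z ≤ ((18590427833 : ℝ)/3125000000000) := by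
  have hlam2 : (((5809171 : ℝ)/5000000)) ≤ Real.exp (((23 : ℝ)/20) - 1) := by
    have e : (((23 : ℝ)/20) : ℝ) - 1 = (((1 : ℕ) : ℝ)) * ((3 : ℝ)/20) := by norm_num
    rw [e]
    exact le_trans (by norm_num) (exp_lb 1 ((3 : ℝ)/20) ((290458560680454799 : ℝ)/250000000000000000) (by norm_num) (by norm_num) (by norm_num))
  have hU : Real.exp (((5809171 : ℝ)/5000000)*(((23 : ℝ)/20)-1) - (1+((5809171 : ℝ)/5000000))*((28 : ℝ)/25)) ≤ ((105718113310529189 : ℝ)/1000000000000000000) := by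
    have e : (((5809171 : ℝ)/5000000) : ℝ)*(((23 : ℝ)/20)-1) - (1+((5809171 : ℝ)/5000000))*((28 : ℝ)/25) = -((((5 : ℕ)) : ℝ) * ((1123489587 : ℝ)/2500000000)) := by norm_num
    rw [e]
    exact exp_neg_ub 5 ((1123489587 : ℝ)/2500000000) ((1567364908601517657 : ℝ)/1000000000000000000) ((105718113310529189 : ℝ)/1000000000000000000) (by norm_num) (by norm_num) (by norm_num) (by norm_num)
  have hV : (((4642874902614729 : ℝ)/50000000000000000) : ℝ) ≤ Real.exp (((5809171 : ℝ)/5000000)*(((23 : ℝ)/20)-1) - (1+((5809171 : ℝ)/5000000))*((59 : ℝ)/50)) := by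
    have e : (((5809171 : ℝ)/5000000) : ℝ)*(((23 : ℝ)/20)-1) - (1+((5809171 : ℝ)/5000000))*((59 : ℝ)/50) = -((((5 : ℕ)) : ℝ) * ((1188344613 : ℝ)/2500000000)) := by norm_num
    rw [e]
    exact exp_neg_lb 5 ((1188344613 : ℝ)/2500000000) ((804278776819775619 : ℝ)/500000000000000000) ((4642874902614729 : ℝ)/50000000000000000) (by norm_num) (by norm_num) (by norm_num) (by norm_num)
  exact piece ((28 : ℝ)/25) ((59 : ℝ)/50) ((23 : ℝ)/20) ((5809171 : ℝ)/5000000) ((105718113310529189 : ℝ)/1000000000000000000) ((4642874902614729 : ℝ)/50000000000000000) ((18590427833 : ℝ)/3125000000000)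
    (by norm_num) (by norm_num) (by norm_num) hlam2 hU hV (by norm_num)

lemma P3 : ∫ z in Set.Ioc ((59 : ℝ)/50) ((31 : ℝ)/25), hh z ≤ ((130359029921 : ℝ)/25000000000000) := by
  have hlam2 : (((616839 : ℝ)/500000)) ≤ Real.exp (((121 : ℝ)/100) - 1) := by
    have e : (((121 : ℝ)/100) : ℝ) - 1 = (((1 : ℕ) : ℝ)) * ((21 : ℝ)/100) := by norm_num
    rw [e]
    exact le_trans (by norm_num) (exp_lb 1 ((21 : ℝ)/100) ((9869424478885607 : ℝ)/8000000000000000) (by norm_num) (by norm_num) (by norm_num))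
  have hU : Real.exp (((616839 : ℝ)/500000)*(((121 : ℝ)/100)-1) - (1+((616839 : ℝ)/500000))*((59 : ℝ)/50)) ≤ ((92859521627264919 : ℝ)/1000000000000000000) := by
    have e : (((616839 : ℝ)/500000) : ℝ)*(((121 : ℝ)/100)-1) - (1+((616839 : ℝ)/500000))*((59 : ℝ)/50) = -((((5 : ℕ)) : ℝ) * ((118833383 : ℝ)/250000000)) := by norm_num
    rw [e]
    exact exp_neg_ub 5 ((118833383 : ℝ)/250000000) ((402137635727383931 : ℝ)/250000000000000000) ((92859521627264919 : ℝ)/1000000000000000000) (by norm_num) (by norm_num) (by norm_num) (by norm_num)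
  have hV : (((8121231773783479 : ℝ)/100000000000000000) : ℝ) ≤ Real.exp (((616839 : ℝ)/500000)*(((121 : ℝ)/100)-1) - (1+((616839 : ℝ)/500000))*((31 : ℝ)/25)) := by
    have e : (((616839 : ℝ)/500000) : ℝ)*(((121 : ℝ)/100)-1) - (1+((616839 : ℝ)/500000))*((31 : ℝ)/25) = -((((6 : ℕ)) : ℝ) * ((125534417 : ℝ)/300000000)) := by norm_num
    rw [e]
    exact exp_neg_lb 6 ((125534417 : ℝ)/300000000) ((759800695603862551 : ℝ)/500000000000000000) ((8121231773783479 : ℝ)/100000000000000000) (by norm_num) (by norm_num) (by norm_num) (by norm_num)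
  exact piece ((59 : ℝ)/50) ((31 : ℝ)/25) ((121 : ℝ)/100) ((616839 : ℝ)/500000) ((92859521627264919 : ℝ)/1000000000000000000) ((8121231773783479 : ℝ)/100000000000000000) ((130359029921 : ℝ)/25000000000000)
    (by norm_num) (by norm_num) (by norm_num) hlam2 hU hV (by norm_num)

lemma P4 : ∫ z in Set.Ioc ((31 : ℝ)/25) ((131 : ℝ)/100), hh z ≤ ((524912150523 : ℝ)/100000000000000) := by
  have hlam2 : (((6582653 : ℝ)/5000000)) ≤ Real.exp (((51 : ℝ)/40) - 1) := by
    have e : (((51 : ℝ)/40) : ℝ) - 1 = (((1 : ℕ) : ℝ)) * ((11 : ℝ)/40) := by norm_num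
    rw [e]
    exact le_trans (by norm_num) (exp_lb 1 ((11 : ℝ)/40) ((1316530674030910673 : ℝ)/1000000000000000000) (by norm_num) (by norm_num) (by norm_num))
  have hU : Real.exp (((6582653 : ℝ)/5000000)*(((51 : ℝ)/40)-1) - (1+((6582653 : ℝ)/5000000))*((31 : ℝ)/25)) ≤ ((81231519776185893 : ℝ)/1000000000000000000) := by
    have e : (((6582653 : ℝ)/5000000) : ℝ)*(((51 : ℝ)/40)-1) - (1+((6582653 : ℝ)/5000000))*((31 : ℝ)/25) = -((((6 : ℕ)) : ℝ) * ((836817343 : ℝ)/2000000000)) := by norm_num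
    rw [e]
    exact exp_neg_ub 6 ((836817343 : ℝ)/2000000000) ((23742836194107377 : ℝ)/15625000000000000) ((81231519776185893 : ℝ)/1000000000000000000) (by norm_num) (by norm_num) (by norm_num) (by norm_num)
  have hV : (((2762870767448701 : ℝ)/40000000000000000) : ℝ) ≤ Real.exp (((6582653 : ℝ)/5000000)*(((51 : ℝ)/40)-1) - (1+((6582653 : ℝ)/5000000))*((131 : ℝ)/100)) := by
    have e : (((6582653 : ℝ)/5000000) : ℝ)*(((51 : ℝ)/40)-1) - (1+((6582653 : ℝ)/5000000))*((131 : ℝ)/100) = -((((6 : ℕ)) : ℝ) * ((2672609171 : ℝ)/6000000000)) := by norm_num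
    rw [e]
    exact exp_neg_lb 6 ((2672609171 : ℝ)/6000000000) ((1561168943843613881 : ℝ)/1000000000000000000) ((2762870767448701 : ℝ)/40000000000000000) (by norm_num) (by norm_num) (by norm_num) (by norm_num)
  exact piece ((31 : ℝ)/25) ((131 : ℝ)/100) ((51 : ℝ)/40) ((6582653 : ℝ)/5000000) ((81231519776185893 : ℝ)/1000000000000000000) ((2762870767448701 : ℝ)/40000000000000000) ((524912150523 : ℝ)/100000000000000)
    (by norm_num) (by norm_num) (by norm_num) hlam2 hU hV (by norm_num)

lemma P5 : ∫ z in Set.Ioc ((131 : ℝ)/100) ((69 : ℝ)/50), hh z ≤ ((444906485177 : ℝ)/100000000000000) := by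
  have hlam2 : (((14119899 : ℝ)/10000000)) ≤ Real.exp (((269 : ℝ)/200) - 1) := by
    have e : (((269 : ℝ)/200) : ℝ) - 1 = (((1 : ℕ) : ℝ)) * ((69 : ℝ)/200) := by norm_num
    rw [e]
    exact le_trans (by norm_num) (exp_lb 1 ((69 : ℝ)/200) ((70599495724615487 : ℝ)/50000000000000000) (by norm_num) (by norm_num) (by norm_num))
  have hU : Real.exp (((14119899 : ℝ)/10000000)*(((269 : ℝ)/200)-1) - (1+((14119899 : ℝ)/10000000))*((131 : ℝ)/100)) ≤ ((34537234408727183 : ℝ)/500000000000000000) := by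
    have e : (((14119899 : ℝ)/10000000) : ℝ)*(((269 : ℝ)/200)-1) - (1+((14119899 : ℝ)/10000000))*((131 : ℝ)/100) = -((((6 : ℕ)) : ℝ) * ((5345140507 : ℝ)/12000000000)) := by norm_num
    rw [e]
    exact exp_neg_ub 6 ((5345140507 : ℝ)/12000000000) ((1561158774507164137 : ℝ)/1000000000000000000) ((34537234408727183 : ℝ)/500000000000000000) (by norm_num) (by norm_num) (by norm_num) (by norm_num)
  have hV : (((7292921166318263 : ℝ)/125000000000000000) : ℝ) ≤ Real.exp (((14119899 : ℝ)/10000000)*(((269 : ℝ)/200)-1) - (1+((14119899 : ℝ)/10000000))*((69 : ℝ)/50)) := by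
    have e : (((14119899 : ℝ)/10000000) : ℝ)*(((269 : ℝ)/200)-1) - (1+((14119899 : ℝ)/10000000))*((69 : ℝ)/50) = -((((6 : ℕ)) : ℝ) * ((1894273031 : ℝ)/4000000000)) := by norm_num
    rw [e]
    exact exp_neg_lb 6 ((1894273031 : ℝ)/4000000000) ((1605713587334967043 : ℝ)/1000000000000000000) ((7292921166318263 : ℝ)/125000000000000000) (by norm_num) (by norm_num) (by norm_num) (by norm_num)
  exact piece ((131 : ℝ)/100) ((69 : ℝ)/50) ((269 : ℝ)/200) ((14119899 : ℝ)/10000000) ((34537234408727183 : ℝ)/500000000000000000) ((7292921166318263 : ℝ)/125000000000000000) ((444906485177 : ℝ)/100000000000000)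
    (by norm_num) (by norm_num) (by norm_num) hlam2 hU hV (by norm_num)

lemma P6 : ∫ z in Set.Ioc ((69 : ℝ)/50) ((29 : ℝ)/20), hh z ≤ ((374498101667 : ℝ)/100000000000000) := by
  have hlam2 : (((15143707 : ℝ)/10000000)) ≤ Real.exp (((283 : ℝ)/200) - 1) := by
    have e : (((283 : ℝ)/200) : ℝ) - 1 = (((1 : ℕ) : ℝ)) * ((83 : ℝ)/200) := by norm_num
    rw [e]
    exact le_trans (by norm_num) (exp_lb 1 ((83 : ℝ)/200) ((60574828712880671 : ℝ)/40000000000000000) (by norm_num) (by norm_num) (by norm_num))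
  have hU : Real.exp (((15143707 : ℝ)/10000000)*(((283 : ℝ)/200)-1) - (1+((15143707 : ℝ)/10000000))*((69 : ℝ)/50)) ≤ ((58345824746126851 : ℝ)/1000000000000000000) := by
    have e : (((15143707 : ℝ)/10000000) : ℝ)*(((283 : ℝ)/200)-1) - (1+((15143707 : ℝ)/10000000))*((69 : ℝ)/50) = -((((6 : ℕ)) : ℝ) * ((5682735451 : ℝ)/12000000000)) := by norm_num
    rw [e]
    exact exp_neg_ub 6 ((5682735451 : ℝ)/12000000000) ((802851162354368503 : ℝ)/500000000000000000) ((58345824746126851 : ℝ)/1000000000000000000) (by norm_num) (by norm_num) (by norm_num) (by norm_num)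
  have hV : (((48929554205779559 : ℝ)/1000000000000000000) : ℝ) ≤ Real.exp (((15143707 : ℝ)/10000000)*(((283 : ℝ)/200)-1) - (1+((15143707 : ℝ)/10000000))*((29 : ℝ)/20)) := by
    have e : (((15143707 : ℝ)/10000000) : ℝ)*(((283 : ℝ)/200)-1) - (1+((15143707 : ℝ)/10000000))*((29 : ℝ)/20) = -((((7 : ℕ)) : ℝ) * ((6034747349 : ℝ)/14000000000)) := by norm_num
    rw [e]
    exact exp_neg_lb 7 ((6034747349 : ℝ)/14000000000) ((769438849229609139 : ℝ)/500000000000000000) ((48929554205779559 : ℝ)/1000000000000000000) (by norm_num) (by norm_num) (by norm_num) (by norm_num)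
  exact piece ((69 : ℝ)/50) ((29 : ℝ)/20) ((283 : ℝ)/200) ((15143707 : ℝ)/10000000) ((58345824746126851 : ℝ)/1000000000000000000) ((48929554205779559 : ℝ)/1000000000000000000) ((374498101667 : ℝ)/100000000000000)
    (by norm_num) (by norm_num) (by norm_num) hlam2 hU hV (by norm_num)

lemma P7 : ∫ z in Set.Ioc ((29 : ℝ)/20) ((38 : ℝ)/25), hh z ≤ ((312904177251 : ℝ)/100000000000000) := by
  have hlam2 : (((16241749 : ℝ)/10000000)) ≤ Real.exp (((297 : ℝ)/200) - 1) := by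
    have e : (((297 : ℝ)/200) : ℝ) - 1 = (((1 : ℕ) : ℝ)) * ((97 : ℝ)/200) := by norm_num
    rw [e]
    exact le_trans (by norm_num) (exp_lb 1 ((97 : ℝ)/200) ((812087464307440001 : ℝ)/500000000000000000) (by norm_num) (by norm_num) (by norm_num))
  have hU : Real.exp (((16241749 : ℝ)/10000000)*(((297 : ℝ)/200)-1) - (1+((16241749 : ℝ)/10000000))*((29 : ℝ)/20)) ≤ ((9786351679569929 : ℝ)/200000000000000000) := by
    have e : (((16241749 : ℝ)/10000000) : ℝ)*(((297 : ℝ)/200)-1) - (1+((16241749 : ℝ)/10000000))*((29 : ℝ)/20) = -((((7 : ℕ)) : ℝ) * ((6034657557 : ℝ)/14000000000)) := by norm_num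
    rw [e]
    exact exp_neg_ub 7 ((6034657557 : ℝ)/14000000000) ((769433897657961649 : ℝ)/500000000000000000) ((9786351679569929 : ℝ)/200000000000000000) (by norm_num) (by norm_num) (by norm_num) (by norm_num)
  have hV : (((40720605517380269 : ℝ)/1000000000000000000) : ℝ) ≤ Real.exp (((16241749 : ℝ)/10000000)*(((297 : ℝ)/200)-1) - (1+((16241749 : ℝ)/10000000))*((38 : ℝ)/25)) := by
    have e : (((16241749 : ℝ)/10000000) : ℝ)*(((297 : ℝ)/200)-1) - (1+((16241749 : ℝ)/10000000))*((38 : ℝ)/25) = -((((7 : ℕ)) : ℝ) * ((6402042043 : ℝ)/14000000000)) := by norm_num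
    rw [e]
    exact exp_neg_lb 7 ((6402042043 : ℝ)/14000000000) ((1579784933145401263 : ℝ)/1000000000000000000) ((40720605517380269 : ℝ)/1000000000000000000) (by norm_num) (by norm_num) (by norm_num) (by norm_num)
  exact piece ((29 : ℝ)/20) ((38 : ℝ)/25) ((297 : ℝ)/200) ((16241749 : ℝ)/10000000) ((9786351679569929 : ℝ)/200000000000000000) ((40720605517380269 : ℝ)/1000000000000000000) ((312904177251 : ℝ)/100000000000000)
    (by norm_num) (by norm_num) (by norm_num) hlam2 hU hV (by norm_num)

lemma P8 : ∫ z in Set.Ioc ((38 : ℝ)/25) ((8 : ℝ)/5), hh z ≤ ((292522759863 : ℝ)/100000000000000) := by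
  have hlam2 : (((4376681 : ℝ)/2500000)) ≤ Real.exp (((39 : ℝ)/25) - 1) := by
    have e : (((39 : ℝ)/25) : ℝ) - 1 = (((2 : ℕ) : ℝ)) * ((7 : ℝ)/25) := by norm_num
    rw [e]
    exact le_trans (by norm_num) (exp_lb 2 ((7 : ℝ)/25) ((1323129811370439111 : ℝ)/1000000000000000000) (by norm_num) (by norm_num) (by norm_num))
  have hU : Real.exp (((4376681 : ℝ)/2500000)*(((39 : ℝ)/25)-1) - (1+((4376681 : ℝ)/2500000))*((38 : ℝ)/25)) ≤ ((2545994331932693 : ℝ)/62500000000000000) := by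
    have e : (((4376681 : ℝ)/2500000) : ℝ)*(((39 : ℝ)/25)-1) - (1+((4376681 : ℝ)/2500000))*((38 : ℝ)/25) = -((((7 : ℕ)) : ℝ) * ((3572149 : ℝ)/7812500)) := by norm_num
    rw [e]
    exact exp_neg_ub 7 ((3572149 : ℝ)/7812500) ((315940026797259657 : ℝ)/200000000000000000) ((2545994331932693 : ℝ)/62500000000000000) (by norm_num) (by norm_num) (by norm_num) (by norm_num)
  have hV : (((32689566491668241 : ℝ)/1000000000000000000) : ℝ) ≤ Real.exp (((4376681 : ℝ)/2500000)*(((39 : ℝ)/25)-1) - (1+((4376681 : ℝ)/2500000))*((8 : ℝ)/5)) := by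
    have e : (((4376681 : ℝ)/2500000) : ℝ)*(((39 : ℝ)/25)-1) - (1+((4376681 : ℝ)/2500000))*((8 : ℝ)/5) = -((((7 : ℕ)) : ℝ) * ((15270979 : ℝ)/31250000)) := by norm_num
    rw [e]
    exact exp_neg_lb 7 ((15270979 : ℝ)/31250000) ((407537213189940071 : ℝ)/250000000000000000) ((32689566491668241 : ℝ)/1000000000000000000) (by norm_num) (by norm_num) (by norm_num) (by norm_num)
  exact piece ((38 : ℝ)/25) ((8 : ℝ)/5) ((39 : ℝ)/25) ((4376681 : ℝ)/2500000) ((2545994331932693 : ℝ)/62500000000000000) ((32689566491668241 : ℝ)/1000000000000000000) ((292522759863 : ℝ)/100000000000000)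
    (by norm_num) (by norm_num) (by norm_num) hlam2 hU hV (by norm_num)

lemma P9 : ∫ z in Set.Ioc ((8 : ℝ)/5) ((42 : ℝ)/25), hh z ≤ ((9337870773 : ℝ)/4000000000000) := by
  have hlam2 : (((2370601 : ℝ)/1250000)) ≤ Real.exp (((41 : ℝ)/25) - 1) := by
    have e : (((41 : ℝ)/25) : ℝ) - 1 = (((2 : ℕ) : ℝ)) * ((8 : ℝ)/25) := by norm_num
    rw [e]
    exact le_trans (by norm_num) (exp_lb 2 ((8 : ℝ)/25) ((1377127761508839619 : ℝ)/1000000000000000000) (by norm_num) (by norm_num) (by norm_num))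
  have hU : Real.exp (((2370601 : ℝ)/1250000)*(((41 : ℝ)/25)-1) - (1+((2370601 : ℝ)/1250000))*((8 : ℝ)/5)) ≤ ((32692120220382557 : ℝ)/1000000000000000000) := by
    have e : (((2370601 : ℝ)/1250000) : ℝ)*(((41 : ℝ)/25)-1) - (1+((2370601 : ℝ)/1250000))*((8 : ℝ)/5) = -((((7 : ℕ)) : ℝ) * ((1908829 : ℝ)/3906250)) := by norm_num
    rw [e]
    exact exp_neg_ub 7 ((1908829 : ℝ)/3906250) ((815065330484865423 : ℝ)/500000000000000000) ((32692120220382557 : ℝ)/1000000000000000000) (by norm_num) (by norm_num) (by norm_num) (by norm_num)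
  have hV : (((25930379368679551 : ℝ)/1000000000000000000) : ℝ) ≤ Real.exp (((2370601 : ℝ)/1250000)*(((41 : ℝ)/25)-1) - (1+((2370601 : ℝ)/1250000))*((42 : ℝ)/25)) := by
    have e : (((2370601 : ℝ)/1250000) : ℝ)*(((41 : ℝ)/25)-1) - (1+((2370601 : ℝ)/1250000))*((42 : ℝ)/25) = -((((8 : ℕ)) : ℝ) * ((57067813 : ℝ)/125000000)) := by norm_num
    rw [e]
    exact exp_neg_lb 8 ((57067813 : ℝ)/125000000) ((394651629054847007 : ℝ)/250000000000000000) ((25930379368679551 : ℝ)/1000000000000000000) (by norm_num) (by norm_num) (by norm_num) (by norm_num)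
  exact piece ((8 : ℝ)/5) ((42 : ℝ)/25) ((41 : ℝ)/25) ((2370601 : ℝ)/1250000) ((32692120220382557 : ℝ)/1000000000000000000) ((25930379368679551 : ℝ)/1000000000000000000) ((9337870773 : ℝ)/4000000000000)
    (by norm_num) (by norm_num) (by norm_num) hlam2 hU hV (by norm_num)

lemma P10 : ∫ z in Set.Ioc ((42 : ℝ)/25) ((44 : ℝ)/25), hh z ≤ ((184058126797 : ℝ)/100000000000000) := by
  have hlam2 : (((20544331 : ℝ)/10000000)) ≤ Real.exp (((43 : ℝ)/25) - 1) := by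
    have e : (((43 : ℝ)/25) : ℝ) - 1 = (((2 : ℕ) : ℝ)) * ((9 : ℝ)/25) := by norm_num
    rw [e]
    exact le_trans (by norm_num) (exp_lb 2 ((9 : ℝ)/25) ((1433329407273252571 : ℝ)/1000000000000000000) (by norm_num) (by norm_num) (by norm_num))
  have hU : Real.exp (((20544331 : ℝ)/10000000)*(((43 : ℝ)/25)-1) - (1+((20544331 : ℝ)/10000000))*((42 : ℝ)/25)) ≤ ((12966285585112783 : ℝ)/500000000000000000) := by
    have e : (((20544331 : ℝ)/10000000) : ℝ)*(((43 : ℝ)/25)-1) - (1+((20544331 : ℝ)/10000000))*((42 : ℝ)/25) = -((((8 : ℕ)) : ℝ) * ((114132993 : ℝ)/250000000)) := by norm_num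
    rw [e]
    exact exp_neg_ub 8 ((114132993 : ℝ)/250000000) ((315717967554439433 : ℝ)/200000000000000000) ((12966285585112783 : ℝ)/500000000000000000) (by norm_num) (by norm_num) (by norm_num) (by norm_num)
  have hV : (((5077659705530011 : ℝ)/250000000000000000) : ℝ) ≤ Real.exp (((20544331 : ℝ)/10000000)*(((43 : ℝ)/25)-1) - (1+((20544331 : ℝ)/10000000))*((44 : ℝ)/25)) := by
    have e : (((20544331 : ℝ)/10000000) : ℝ)*(((43 : ℝ)/25)-1) - (1+((20544331 : ℝ)/10000000))*((44 : ℝ)/25) = -((((8 : ℕ)) : ℝ) * ((487076303 : ℝ)/1000000000)) := by norm_num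
    rw [e]
    exact exp_neg_lb 8 ((487076303 : ℝ)/1000000000) ((813775398500613833 : ℝ)/500000000000000000) ((5077659705530011 : ℝ)/250000000000000000) (by norm_num) (by norm_num) (by norm_num) (by norm_num)
  exact piece ((42 : ℝ)/25) ((44 : ℝ)/25) ((43 : ℝ)/25) ((20544331 : ℝ)/10000000) ((12966285585112783 : ℝ)/500000000000000000) ((5077659705530011 : ℝ)/250000000000000000) ((184058126797 : ℝ)/100000000000000)
    (by norm_num) (by norm_num) (by norm_num) hlam2 hU hV (by norm_num)

lemma P11 : ∫ z in Set.Ioc ((44 : ℝ)/25) ((37 : ℝ)/20), hh z ≤ ((79334348043 : ℝ)/50000000000000) := by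
  have hlam2 : (((5591741 : ℝ)/2500000)) ≤ Real.exp (((361 : ℝ)/200) - 1) := by
    have e : (((361 : ℝ)/200) : ℝ) - 1 = (((2 : ℕ) : ℝ)) * ((161 : ℝ)/400) := by norm_num
    rw [e]
    exact le_trans (by norm_num) (exp_lb 2 ((161 : ℝ)/400) ((1495558907344292499 : ℝ)/1000000000000000000) (by norm_num) (by norm_num) (by norm_num))
  have hU : Real.exp (((5591741 : ℝ)/2500000)*(((361 : ℝ)/200)-1) - (1+((5591741 : ℝ)/2500000))*((44 : ℝ)/25)) ≤ ((20322133752429331 : ℝ)/1000000000000000000) := by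
    have e : (((5591741 : ℝ)/2500000) : ℝ)*(((361 : ℝ)/200)-1) - (1+((5591741 : ℝ)/2500000))*((44 : ℝ)/25) = -((((8 : ℕ)) : ℝ) * ((1948022531 : ℝ)/4000000000)) := by norm_num
    rw [e]
    exact exp_neg_ub 8 ((1948022531 : ℝ)/4000000000) ((406858923337512203 : ℝ)/250000000000000000) ((20322133752429331 : ℝ)/1000000000000000000) (by norm_num) (by norm_num) (by norm_num) (by norm_num)
  have hV : (((15186509778318799 : ℝ)/1000000000000000000) : ℝ) ≤ Real.exp (((5591741 : ℝ)/2500000)*(((361 : ℝ)/200)-1) - (1+((5591741 : ℝ)/2500000))*((37 : ℝ)/20)) := by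
    have e : (((5591741 : ℝ)/2500000) : ℝ)*(((361 : ℝ)/200)-1) - (1+((5591741 : ℝ)/2500000))*((37 : ℝ)/20) = -((((9 : ℕ)) : ℝ) * ((2093673869 : ℝ)/4500000000)) := by norm_num
    rw [e]
    exact exp_neg_lb 9 ((2093673869 : ℝ)/4500000000) ((63697181575242717 : ℝ)/40000000000000000) ((15186509778318799 : ℝ)/1000000000000000000) (by norm_num) (by norm_num) (by norm_num) (by norm_num)
  exact piece ((44 : ℝ)/25) ((37 : ℝ)/20) ((361 : ℝ)/200) ((5591741 : ℝ)/2500000) ((20322133752429331 : ℝ)/1000000000000000000) ((15186509778318799 : ℝ)/1000000000000000000) ((79334348043 : ℝ)/50000000000000)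
    (by norm_num) (by norm_num) (by norm_num) hlam2 hU hV (by norm_num)

lemma P12 : ∫ z in Set.Ioc ((37 : ℝ)/20) ((97 : ℝ)/50), hh z ≤ ((58762627557 : ℝ)/50000000000000) := by
  have hlam2 : (((6118339 : ℝ)/2500000)) ≤ Real.exp (((379 : ℝ)/200) - 1) := by
    have e : (((379 : ℝ)/200) : ℝ) - 1 = (((2 : ℕ) : ℝ)) * ((179 : ℝ)/400) := by norm_num
    rw [e]
    exact le_trans (by norm_num) (exp_lb 2 ((179 : ℝ)/400) ((1564396259958388761 : ℝ)/1000000000000000000) (by norm_num) (by norm_num) (by norm_num))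
  have hU : Real.exp (((6118339 : ℝ)/2500000)*(((379 : ℝ)/200)-1) - (1+((6118339 : ℝ)/2500000))*((37 : ℝ)/20)) ≤ ((3797168829718151 : ℝ)/250000000000000000) := by
    have e : (((6118339 : ℝ)/2500000) : ℝ)*(((379 : ℝ)/200)-1) - (1+((6118339 : ℝ)/2500000))*((37 : ℝ)/20) = -((((9 : ℕ)) : ℝ) * ((697867583 : ℝ)/1500000000)) := by norm_num
    rw [e]
    exact exp_neg_ub 9 ((697867583 : ℝ)/1500000000) ((1592404310867693117 : ℝ)/1000000000000000000) ((3797168829718151 : ℝ)/250000000000000000) (by norm_num) (by norm_num) (by norm_num) (by norm_num)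
  have hV : (((11137185360359089 : ℝ)/1000000000000000000) : ℝ) ≤ Real.exp (((6118339 : ℝ)/2500000)*(((379 : ℝ)/200)-1) - (1+((6118339 : ℝ)/2500000))*((97 : ℝ)/50)) := by
    have e : (((6118339 : ℝ)/2500000) : ℝ)*(((379 : ℝ)/200)-1) - (1+((6118339 : ℝ)/2500000))*((97 : ℝ)/50) = -((((9 : ℕ)) : ℝ) * ((749577617 : ℝ)/1500000000)) := by norm_num
    rw [e]
    exact exp_neg_lb 9 ((749577617 : ℝ)/1500000000) ((1648257081255361861 : ℝ)/1000000000000000000) ((11137185360359089 : ℝ)/1000000000000000000) (by norm_num) (by norm_num) (by norm_num) (by norm_num)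
  exact piece ((37 : ℝ)/20) ((97 : ℝ)/50) ((379 : ℝ)/200) ((6118339 : ℝ)/2500000) ((3797168829718151 : ℝ)/250000000000000000) ((11137185360359089 : ℝ)/1000000000000000000) ((58762627557 : ℝ)/50000000000000)
    (by norm_num) (by norm_num) (by norm_num) hlam2 hU hV (by norm_num)

lemma P13 : ∫ z in Set.Ioc ((97 : ℝ)/50) ((51 : ℝ)/25), hh z ≤ ((46601452323 : ℝ)/50000000000000) := by
  have hlam2 : (((26912341 : ℝ)/10000000)) ≤ Real.exp (((199 : ℝ)/100) - 1) := by
    have e : (((199 : ℝ)/100) : ℝ) - 1 = (((2 : ℕ) : ℝ)) * ((99 : ℝ)/200) := by norm_num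
    rw [e]
    exact le_trans (by norm_num) (exp_lb 2 ((99 : ℝ)/200) ((1640498144488812501 : ℝ)/1000000000000000000) (by norm_num) (by norm_num) (by norm_num))
  have hU : Real.exp (((26912341 : ℝ)/10000000)*(((199 : ℝ)/100)-1) - (1+((26912341 : ℝ)/10000000))*((97 : ℝ)/50)) ≤ ((11146030668104473 : ℝ)/1000000000000000000) := by
    have e : (((26912341 : ℝ)/10000000) : ℝ)*(((199 : ℝ)/100)-1) - (1+((26912341 : ℝ)/10000000))*((97 : ℝ)/50) = -((((9 : ℕ)) : ℝ) * ((899334479 : ℝ)/1800000000)) := by norm_num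
    rw [e]
    exact exp_neg_ub 9 ((899334479 : ℝ)/1800000000) ((824055846657951933 : ℝ)/500000000000000000) ((11146030668104473 : ℝ)/1000000000000000000) (by norm_num) (by norm_num) (by norm_num) (by norm_num)
  have hV : (((48160582935331 : ℝ)/6250000000000000) : ℝ) ≤ Real.exp (((26912341 : ℝ)/10000000)*(((199 : ℝ)/100)-1) - (1+((26912341 : ℝ)/10000000))*((51 : ℝ)/25)) := by
    have e : (((26912341 : ℝ)/10000000) : ℝ)*(((199 : ℝ)/100)-1) - (1+((26912341 : ℝ)/10000000))*((51 : ℝ)/25) = -((((10 : ℕ)) : ℝ) * ((973159161 : ℝ)/2000000000)) := by norm_num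
    rw [e]
    exact exp_neg_lb 10 ((973159161 : ℝ)/2000000000) ((406685639154140381 : ℝ)/250000000000000000) ((48160582935331 : ℝ)/6250000000000000) (by norm_num) (by norm_num) (by norm_num) (by norm_num)
  exact piece ((97 : ℝ)/50) ((51 : ℝ)/25) ((199 : ℝ)/100) ((26912341 : ℝ)/10000000) ((11146030668104473 : ℝ)/1000000000000000000) ((48160582935331 : ℝ)/6250000000000000) ((46601452323 : ℝ)/50000000000000)
    (by norm_num) (by norm_num) (by norm_num) hlam2 hU hV (by norm_num)

lemma P14 : ∫ z in Set.Ioc ((51 : ℝ)/25) ((43 : ℝ)/20), hh z ≤ ((68681487687 : ℝ)/100000000000000) := by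
  have hlam2 : (((14945913 : ℝ)/5000000)) ≤ Real.exp (((419 : ℝ)/200) - 1) := by
    have e : (((419 : ℝ)/200) : ℝ) - 1 = (((3 : ℕ) : ℝ)) * ((73 : ℝ)/200) := by norm_num
    rw [e]
    exact le_trans (by norm_num) (exp_lb 3 ((73 : ℝ)/200) ((288102800001461941 : ℝ)/200000000000000000) (by norm_num) (by norm_num) (by norm_num))
  have hU : Real.exp (((14945913 : ℝ)/5000000)*(((419 : ℝ)/200)-1) - (1+((14945913 : ℝ)/5000000))*((51 : ℝ)/25)) ≤ ((7713547723505239 : ℝ)/1000000000000000000) := by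
    have e : (((14945913 : ℝ)/5000000) : ℝ)*(((419 : ℝ)/200)-1) - (1+((14945913 : ℝ)/5000000))*((51 : ℝ)/25) = -((((10 : ℕ)) : ℝ) * ((4864777557 : ℝ)/10000000000)) := by norm_num
    rw [e]
    exact exp_neg_ub 10 ((4864777557 : ℝ)/10000000000) ((1626576834780928579 : ℝ)/1000000000000000000) ((7713547723505239 : ℝ)/1000000000000000000) (by norm_num) (by norm_num) (by norm_num) (by norm_num)
  have hV : (((24868588836463 : ℝ)/5000000000000000) : ℝ) ≤ Real.exp (((14945913 : ℝ)/5000000)*(((419 : ℝ)/200)-1) - (1+((14945913 : ℝ)/5000000))*((43 : ℝ)/20)) := by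
    have e : (((14945913 : ℝ)/5000000) : ℝ)*(((419 : ℝ)/200)-1) - (1+((14945913 : ℝ)/5000000))*((43 : ℝ)/20) = -((((11 : ℕ)) : ℝ) * ((5303587643 : ℝ)/11000000000)) := by norm_num
    rw [e]
    exact exp_neg_lb 11 ((5303587643 : ℝ)/11000000000) ((323908704808355481 : ℝ)/200000000000000000) ((24868588836463 : ℝ)/5000000000000000) (by norm_num) (by norm_num) (by norm_num) (by norm_num)
  exact piece ((51 : ℝ)/25) ((43 : ℝ)/20) ((419 : ℝ)/200) ((14945913 : ℝ)/5000000) ((7713547723505239 : ℝ)/1000000000000000000) ((24868588836463 : ℝ)/5000000000000000) ((68681487687 : ℝ)/100000000000000)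
    (by norm_num) (by norm_num) (by norm_num) hlam2 hU hV (by norm_num)

lemma P15 : ∫ z in Set.Ioc ((43 : ℝ)/20) ((57 : ℝ)/25), hh z ≤ ((12360808227 : ℝ)/25000000000000) := by
  have hlam2 : (((33702939 : ℝ)/10000000)) ≤ Real.exp (((443 : ℝ)/200) - 1) := by
    have e : (((443 : ℝ)/200) : ℝ) - 1 = (((3 : ℕ) : ℝ)) * ((81 : ℝ)/200) := by norm_num
    rw [e]
    exact le_trans (by norm_num) (exp_lb 3 ((81 : ℝ)/200) ((74965124063133377 : ℝ)/50000000000000000) (by norm_num) (by norm_num) (by norm_num))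
  have hU : Real.exp (((33702939 : ℝ)/10000000)*(((443 : ℝ)/200)-1) - (1+((33702939 : ℝ)/10000000))*((43 : ℝ)/20)) ≤ ((1246371636098407 : ℝ)/250000000000000000) := by
    have e : (((33702939 : ℝ)/10000000) : ℝ)*(((443 : ℝ)/200)-1) - (1+((33702939 : ℝ)/10000000))*((43 : ℝ)/20) = -((((11 : ℕ)) : ℝ) * ((10602449593 : ℝ)/22000000000)) := by norm_num
    rw [e]
    exact exp_neg_ub 11 ((10602449593 : ℝ)/22000000000) ((1619195595403125951 : ℝ)/1000000000000000000) ((1246371636098407 : ℝ)/250000000000000000) (by norm_num) (by norm_num) (by norm_num) (by norm_num)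
  have hV : (((2824671952682203 : ℝ)/1000000000000000000) : ℝ) ≤ Real.exp (((33702939 : ℝ)/10000000)*(((443 : ℝ)/200)-1) - (1+((33702939 : ℝ)/10000000))*((57 : ℝ)/25)) := by
    have e : (((33702939 : ℝ)/10000000) : ℝ)*(((443 : ℝ)/200)-1) - (1+((33702939 : ℝ)/10000000))*((57 : ℝ)/25) = -((((12 : ℕ)) : ℝ) * ((3912908669 : ℝ)/8000000000)) := by norm_num
    rw [e]
    exact exp_neg_lb 12 ((3912908669 : ℝ)/8000000000) ((1630869954736379877 : ℝ)/1000000000000000000) ((2824671952682203 : ℝ)/1000000000000000000) (by norm_num) (by norm_num) (by norm_num) (by norm_num)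
  exact piece ((43 : ℝ)/20) ((57 : ℝ)/25) ((443 : ℝ)/200) ((33702939 : ℝ)/10000000) ((1246371636098407 : ℝ)/250000000000000000) ((2824671952682203 : ℝ)/1000000000000000000) ((12360808227 : ℝ)/25000000000000)
    (by norm_num) (by norm_num) (by norm_num) hlam2 hU hV (by norm_num)

lemma P16 : ∫ z in Set.Ioc ((57 : ℝ)/25) ((243 : ℝ)/100), hh z ≤ ((30151778411 : ℝ)/100000000000000) := by
  have hlam2 : (((19383803 : ℝ)/5000000)) ≤ Real.exp (((471 : ℝ)/200) - 1) := by
    have e : (((471 : ℝ)/200) : ℝ) - 1 = (((3 : ℕ) : ℝ)) * ((271 : ℝ)/600) := by norm_num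
    rw [e]
    exact le_trans (by norm_num) (exp_lb 3 ((271 : ℝ)/600) ((62837126933654779 : ℝ)/40000000000000000) (by norm_num) (by norm_num) (by norm_num))
  have hU : Real.exp (((19383803 : ℝ)/5000000)*(((471 : ℝ)/200)-1) - (1+((19383803 : ℝ)/5000000))*((57 : ℝ)/25)) ≤ ((283417914812701 : ℝ)/100000000000000000) := by
    have e : (((19383803 : ℝ)/5000000) : ℝ)*(((471 : ℝ)/200)-1) - (1+((19383803 : ℝ)/5000000))*((57 : ℝ)/25) = -((((12 : ℕ)) : ℝ) * ((1173200711 : ℝ)/2400000000)) := by norm_num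
    rw [e]
    exact exp_neg_ub 12 ((1173200711 : ℝ)/2400000000) ((1630413359008703333 : ℝ)/1000000000000000000) ((283417914812701 : ℝ)/100000000000000000) (by norm_num) (by norm_num) (by norm_num) (by norm_num)
  have hV : (((272749819679999 : ℝ)/200000000000000000) : ℝ) ≤ Real.exp (((19383803 : ℝ)/5000000)*(((471 : ℝ)/200)-1) - (1+((19383803 : ℝ)/5000000))*((243 : ℝ)/100)) := by
    have e : (((19383803 : ℝ)/5000000) : ℝ)*(((471 : ℝ)/200)-1) - (1+((19383803 : ℝ)/5000000))*((243 : ℝ)/100) = -((((14 : ℕ)) : ℝ) * ((1319503529 : ℝ)/2800000000)) := by norm_num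
    rw [e]
    exact exp_neg_lb 14 ((1319503529 : ℝ)/2800000000) ((1601997459789467887 : ℝ)/1000000000000000000) ((272749819679999 : ℝ)/200000000000000000) (by norm_num) (by norm_num) (by norm_num) (by norm_num)
  exact piece ((57 : ℝ)/25) ((243 : ℝ)/100) ((471 : ℝ)/200) ((19383803 : ℝ)/5000000) ((283417914812701 : ℝ)/100000000000000000) ((272749819679999 : ℝ)/200000000000000000) ((30151778411 : ℝ)/100000000000000)
    (by norm_num) (by norm_num) (by norm_num) hlam2 hU hV (by norm_num)

lemma P17 : ∫ z in Set.Ioc ((243 : ℝ)/100) ((261 : ℝ)/100), hh z ≤ ((15603170281 : ℝ)/100000000000000) := by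
  have hlam2 : (((182889 : ℝ)/40000)) ≤ Real.exp (((63 : ℝ)/25) - 1) := by
    have e : (((63 : ℝ)/25) : ℝ) - 1 = (((4 : ℕ) : ℝ)) * ((19 : ℝ)/50) := by norm_num
    rw [e]
    exact le_trans (by norm_num) (exp_lb 4 ((19 : ℝ)/50) ((73114228908890019 : ℝ)/50000000000000000) (by norm_num) (by norm_num) (by norm_num))
  have hU : Real.exp (((182889 : ℝ)/40000)*(((63 : ℝ)/25)-1) - (1+((182889 : ℝ)/40000))*((243 : ℝ)/100)) ≤ ((1373045246615027 : ℝ)/1000000000000000000) := by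
    have e : (((182889 : ℝ)/40000) : ℝ)*(((63 : ℝ)/25)-1) - (1+((182889 : ℝ)/40000))*((243 : ℝ)/100) = -((((14 : ℕ)) : ℝ) * ((26362899 : ℝ)/56000000)) := by norm_num
    rw [e]
    exact exp_neg_ub 14 ((26362899 : ℝ)/56000000) ((200152535119791089 : ℝ)/125000000000000000) ((1373045246615027 : ℝ)/1000000000000000000) (by norm_num) (by norm_num) (by norm_num) (by norm_num)
  have hV : (((251800745713529 : ℝ)/500000000000000000) : ℝ) ≤ Real.exp (((182889 : ℝ)/40000)*(((63 : ℝ)/25)-1) - (1+((182889 : ℝ)/40000))*((261 : ℝ)/100)) := by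
    have e : (((182889 : ℝ)/40000) : ℝ)*(((63 : ℝ)/25)-1) - (1+((182889 : ℝ)/40000))*((261 : ℝ)/100) = -((((16 : ℕ)) : ℝ) * ((30374901 : ℝ)/64000000)) := by norm_num
    rw [e]
    exact exp_neg_lb 16 ((30374901 : ℝ)/64000000) ((401845926907310397 : ℝ)/250000000000000000) ((251800745713529 : ℝ)/500000000000000000) (by norm_num) (by norm_num) (by norm_num) (by norm_num)
  exact piece ((243 : ℝ)/100) ((261 : ℝ)/100) ((63 : ℝ)/25) ((182889 : ℝ)/40000) ((1373045246615027 : ℝ)/1000000000000000000) ((251800745713529 : ℝ)/500000000000000000) ((15603170281 : ℝ)/100000000000000)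
    (by norm_num) (by norm_num) (by norm_num) hlam2 hU hV (by norm_num)

lemma P18 : ∫ z in Set.Ioc ((261 : ℝ)/100) ((143 : ℝ)/50), hh z ≤ ((156777783 : ℝ)/2500000000000) := by
  have hlam2 : (((56689273 : ℝ)/10000000)) ≤ Real.exp (((547 : ℝ)/200) - 1) := by
    have e : (((547 : ℝ)/200) : ℝ) - 1 = (((4 : ℕ) : ℝ)) * ((347 : ℝ)/800) := by norm_num
    rw [e]
    exact le_trans (by norm_num) (exp_lb 4 ((347 : ℝ)/800) ((1543033028988202931 : ℝ)/1000000000000000000) (by norm_num) (by norm_num) (by norm_num))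
  have hU : Real.exp (((56689273 : ℝ)/10000000)*(((547 : ℝ)/200)-1) - (1+((56689273 : ℝ)/10000000))*((261 : ℝ)/100)) ≤ ((3222076445103 : ℝ)/6250000000000000) := by
    have e : (((56689273 : ℝ)/10000000) : ℝ)*(((547 : ℝ)/200)-1) - (1+((56689273 : ℝ)/10000000))*((261 : ℝ)/100) = -((((16 : ℕ)) : ℝ) * ((605624911 : ℝ)/1280000000)) := by norm_num
    rw [e]
    exact exp_neg_ub 16 ((605624911 : ℝ)/1280000000) ((1605033166360290951 : ℝ)/1000000000000000000) ((3222076445103 : ℝ)/6250000000000000) (by norm_num) (by norm_num) (by norm_num) (by norm_num)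
  have hV : (((24329094109243 : ℝ)/250000000000000000) : ℝ) ≤ Real.exp (((56689273 : ℝ)/10000000)*(((547 : ℝ)/200)-1) - (1+((56689273 : ℝ)/10000000))*((143 : ℝ)/50)) := by
    have e : (((56689273 : ℝ)/10000000) : ℝ)*(((547 : ℝ)/200)-1) - (1+((56689273 : ℝ)/10000000))*((143 : ℝ)/50) = -((((19 : ℕ)) : ℝ) * ((739003457 : ℝ)/1520000000)) := by norm_num
    rw [e]
    exact exp_neg_lb 19 ((739003457 : ℝ)/1520000000) ((813051608432244123 : ℝ)/500000000000000000) ((24329094109243 : ℝ)/250000000000000000) (by norm_num) (by norm_num) (by norm_num) (by norm_num)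
  exact piece ((261 : ℝ)/100) ((143 : ℝ)/50) ((547 : ℝ)/200) ((56689273 : ℝ)/10000000) ((3222076445103 : ℝ)/6250000000000000) ((24329094109243 : ℝ)/250000000000000000) ((156777783 : ℝ)/2500000000000)
    (by norm_num) (by norm_num) (by norm_num) hlam2 hU hV (by norm_num)

lemma P19 : ∫ z in Set.Ioc ((143 : ℝ)/50) ((33 : ℝ)/10), hh z ≤ ((1212290121 : ℝ)/100000000000000) := by
  have hlam2 : (((40022341 : ℝ)/5000000)) ≤ Real.exp (((77 : ℝ)/25) - 1) := by
    have e : (((77 : ℝ)/25) : ℝ) - 1 = (((5 : ℕ) : ℝ)) * ((52 : ℝ)/125) := by norm_num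
    rw [e]
    exact le_trans (by norm_num) (exp_lb 5 ((52 : ℝ)/125) ((151588584555324397 : ℝ)/100000000000000000) (by norm_num) (by norm_num) (by norm_num))
  have hU : Real.exp (((40022341 : ℝ)/5000000)*(((77 : ℝ)/25)-1) - (1+((40022341 : ℝ)/5000000))*((143 : ℝ)/50)) ≤ ((55638701945939 : ℝ)/500000000000000000) := by
    have e : (((40022341 : ℝ)/5000000) : ℝ)*(((77 : ℝ)/25)-1) - (1+((40022341 : ℝ)/5000000))*((143 : ℝ)/50) = -((((19 : ℕ)) : ℝ) * ((2275871299 : ℝ)/4750000000)) := by norm_num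
    rw [e]
    exact exp_neg_ub 19 ((2275871299 : ℝ)/4750000000) ((1614670247551022557 : ℝ)/1000000000000000000) ((55638701945939 : ℝ)/500000000000000000) (by norm_num) (by norm_num) (by norm_num) (by norm_num)
  have hV : (((2117125492681 : ℝ)/1000000000000000000) : ℝ) ≤ Real.exp (((40022341 : ℝ)/5000000)*(((77 : ℝ)/25)-1) - (1+((40022341 : ℝ)/5000000))*((33 : ℝ)/10)) := by
    have e : (((40022341 : ℝ)/5000000) : ℝ)*(((77 : ℝ)/25)-1) - (1+((40022341 : ℝ)/5000000))*((33 : ℝ)/10) = -((((27 : ℕ)) : ℝ) * ((3266362801 : ℝ)/6750000000)) := by norm_num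
    rw [e]
    exact exp_neg_lb 27 ((3266362801 : ℝ)/6750000000) ((202799811169441117 : ℝ)/125000000000000000) ((2117125492681 : ℝ)/1000000000000000000) (by norm_num) (by norm_num) (by norm_num) (by norm_num)
  exact piece ((143 : ℝ)/50) ((33 : ℝ)/10) ((77 : ℝ)/25) ((40022341 : ℝ)/5000000) ((55638701945939 : ℝ)/500000000000000000) ((2117125492681 : ℝ)/1000000000000000000) ((1212290121 : ℝ)/100000000000000)
    (by norm_num) (by norm_num) (by norm_num) hlam2 hU hV (by norm_num)

lemma Ptail : ∫ z in Set.Ioi ((33 : ℝ)/10), hh z ≤ ((462651 : ℝ)/250000000000) := by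
  apply tail_bound _ ((99 : ℝ)/10) _ ?hC ?ht
  case hC =>
    have e : ((33 : ℝ)/10) - 1 = (((5 : ℕ) : ℝ)) * ((23 : ℝ)/50) := by norm_num
    rw [e]
    exact le_trans (by norm_num) (exp_lb 5 ((23 : ℝ)/50) ((396018483152482349 : ℝ)/250000000000000000) (by norm_num) (by norm_num) (by norm_num))
  case ht =>
    rw [← Real.exp_add]
    have e : -(((99 : ℝ)/10) : ℝ) + -((33 : ℝ)/10) = -((((27 : ℕ)) : ℝ) * ((22 : ℝ)/45)) := by norm_num
    rw [e]
    exact exp_neg_ub 27 ((22 : ℝ)/45) ((1630503456934882051 : ℝ)/1000000000000000000) ((462651 : ℝ)/250000000000) (by norm_num) (by norm_num) (by norm_num) (by norm_num)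

lemma exp2_lb : (((13533528112013 : ℝ)/100000000000000) : ℝ) ≤ Real.exp (-2) := by
  have e : (-2 : ℝ) = -((((4 : ℕ)) : ℝ) * ((1 : ℝ)/2)) := by norm_num
  rw [e]
  exact exp_neg_lb 4 ((1 : ℝ)/2) ((51522539910816011 : ℝ)/31250000000000000) ((13533528112013 : ℝ)/100000000000000) (by norm_num) (by norm_num) (by norm_num) (by norm_num)

lemma T19 : ∫ z in Set.Ioi ((143 : ℝ)/50), hh z ≤ ((1397350521 : ℝ)/100000000000000) :=
  chain ((143 : ℝ)/50) ((33 : ℝ)/10) ((1212290121 : ℝ)/100000000000000) ((462651 : ℝ)/250000000000) ((1397350521 : ℝ)/100000000000000) (by norm_num) P19 Ptail (by norm_num)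

lemma T18 : ∫ z in Set.Ioi ((261 : ℝ)/100), hh z ≤ ((7668461841 : ℝ)/100000000000000) :=
  chain ((261 : ℝ)/100) ((143 : ℝ)/50) ((156777783 : ℝ)/2500000000000) ((1397350521 : ℝ)/100000000000000) ((7668461841 : ℝ)/100000000000000) (by norm_num) P18 T19 (by norm_num)

lemma T17 : ∫ z in Set.Ioi ((243 : ℝ)/100), hh z ≤ ((11635816061 : ℝ)/50000000000000) :=
  chain ((243 : ℝ)/100) ((261 : ℝ)/100) ((15603170281 : ℝ)/100000000000000) ((7668461841 : ℝ)/100000000000000) ((11635816061 : ℝ)/50000000000000) (by norm_num) P17 T18 (by norm_num)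

lemma T16 : ∫ z in Set.Ioi ((57 : ℝ)/25), hh z ≤ ((53423410533 : ℝ)/100000000000000) :=
  chain ((57 : ℝ)/25) ((243 : ℝ)/100) ((30151778411 : ℝ)/100000000000000) ((11635816061 : ℝ)/50000000000000) ((53423410533 : ℝ)/100000000000000) (by norm_num) P16 T17 (by norm_num)

lemma T15 : ∫ z in Set.Ioi ((43 : ℝ)/20), hh z ≤ ((102866643441 : ℝ)/100000000000000) :=
  chain ((43 : ℝ)/20) ((57 : ℝ)/25) ((12360808227 : ℝ)/25000000000000) ((53423410533 : ℝ)/100000000000000) ((102866643441 : ℝ)/100000000000000) (by norm_num) P15 T16 (by norm_num)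

lemma T14 : ∫ z in Set.Ioi ((51 : ℝ)/25), hh z ≤ ((21443516391 : ℝ)/12500000000000) :=
  chain ((51 : ℝ)/25) ((43 : ℝ)/20) ((68681487687 : ℝ)/100000000000000) ((102866643441 : ℝ)/100000000000000) ((21443516391 : ℝ)/12500000000000) (by norm_num) P14 T15 (by norm_num)

lemma T13 : ∫ z in Set.Ioi ((97 : ℝ)/50), hh z ≤ ((132375517887 : ℝ)/50000000000000) :=
  chain ((97 : ℝ)/50) ((51 : ℝ)/25) ((46601452323 : ℝ)/50000000000000) ((21443516391 : ℝ)/12500000000000) ((132375517887 : ℝ)/50000000000000) (by norm_num) P13 T14 (by norm_num)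

lemma T12 : ∫ z in Set.Ioi ((37 : ℝ)/20), hh z ≤ ((47784536361 : ℝ)/12500000000000) :=
  chain ((37 : ℝ)/20) ((97 : ℝ)/50) ((58762627557 : ℝ)/50000000000000) ((132375517887 : ℝ)/50000000000000) ((47784536361 : ℝ)/12500000000000) (by norm_num) P12 T13 (by norm_num)

lemma T11 : ∫ z in Set.Ioi ((44 : ℝ)/25), hh z ≤ ((270472493487 : ℝ)/50000000000000) :=
  chain ((44 : ℝ)/25) ((37 : ℝ)/20) ((79334348043 : ℝ)/50000000000000) ((47784536361 : ℝ)/12500000000000) ((270472493487 : ℝ)/50000000000000) (by norm_num) P11 T12 (by norm_num)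

lemma T10 : ∫ z in Set.Ioi ((42 : ℝ)/25), hh z ≤ ((725003113771 : ℝ)/100000000000000) :=
  chain ((42 : ℝ)/25) ((44 : ℝ)/25) ((184058126797 : ℝ)/100000000000000) ((270472493487 : ℝ)/50000000000000) ((725003113771 : ℝ)/100000000000000) (by norm_num) P10 T11 (by norm_num)

lemma T9 : ∫ z in Set.Ioi ((8 : ℝ)/5), hh z ≤ ((119806235387 : ℝ)/12500000000000) :=
  chain ((8 : ℝ)/5) ((42 : ℝ)/25) ((9337870773 : ℝ)/4000000000000) ((725003113771 : ℝ)/100000000000000) ((119806235387 : ℝ)/12500000000000) (by norm_num) P9 T10 (by norm_num)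

lemma T8 : ∫ z in Set.Ioi ((38 : ℝ)/25), hh z ≤ ((1250972642959 : ℝ)/100000000000000) :=
  chain ((38 : ℝ)/25) ((8 : ℝ)/5) ((292522759863 : ℝ)/100000000000000) ((119806235387 : ℝ)/12500000000000) ((1250972642959 : ℝ)/100000000000000) (by norm_num) P8 T9 (by norm_num)

lemma T7 : ∫ z in Set.Ioi ((29 : ℝ)/20), hh z ≤ ((156387682021 : ℝ)/10000000000000) :=
  chain ((29 : ℝ)/20) ((38 : ℝ)/25) ((312904177251 : ℝ)/100000000000000) ((1250972642959 : ℝ)/100000000000000) ((156387682021 : ℝ)/10000000000000) (by norm_num) P7 T8 (by norm_num)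

lemma T6 : ∫ z in Set.Ioi ((69 : ℝ)/50), hh z ≤ ((1938374921877 : ℝ)/100000000000000) :=
  chain ((69 : ℝ)/50) ((29 : ℝ)/20) ((374498101667 : ℝ)/100000000000000) ((156387682021 : ℝ)/10000000000000) ((1938374921877 : ℝ)/100000000000000) (by norm_num) P6 T7 (by norm_num)

lemma T5 : ∫ z in Set.Ioi ((131 : ℝ)/100), hh z ≤ ((1191640703527 : ℝ)/50000000000000) :=
  chain ((131 : ℝ)/100) ((69 : ℝ)/50) ((444906485177 : ℝ)/100000000000000) ((1938374921877 : ℝ)/100000000000000) ((1191640703527 : ℝ)/50000000000000) (by norm_num) P5 T6 (by norm_num)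

lemma T4 : ∫ z in Set.Ioi ((31 : ℝ)/25), hh z ≤ ((2908193557577 : ℝ)/100000000000000) :=
  chain ((31 : ℝ)/25) ((131 : ℝ)/100) ((524912150523 : ℝ)/100000000000000) ((1191640703527 : ℝ)/50000000000000) ((2908193557577 : ℝ)/100000000000000) (by norm_num) P4 T5 (by norm_num)

lemma T3 : ∫ z in Set.Ioi ((59 : ℝ)/50), hh z ≤ ((3429629677261 : ℝ)/100000000000000) :=
  chain ((59 : ℝ)/50) ((31 : ℝ)/25) ((130359029921 : ℝ)/25000000000000) ((2908193557577 : ℝ)/100000000000000) ((3429629677261 : ℝ)/100000000000000) (by norm_num) P3 T4 (by norm_num)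

lemma T2 : ∫ z in Set.Ioi ((28 : ℝ)/25), hh z ≤ ((4024523367917 : ℝ)/100000000000000) :=
  chain ((28 : ℝ)/25) ((59 : ℝ)/50) ((18590427833 : ℝ)/3125000000000) ((3429629677261 : ℝ)/100000000000000) ((4024523367917 : ℝ)/100000000000000) (by norm_num) P2 T3 (by norm_num)

lemma T1 : ∫ z in Set.Ioi ((53 : ℝ)/50), hh z ≤ ((2350196134831 : ℝ)/50000000000000) :=
  chain ((53 : ℝ)/50) ((28 : ℝ)/25) ((135173780349 : ℝ)/20000000000000) ((4024523367917 : ℝ)/100000000000000) ((2350196134831 : ℝ)/50000000000000) (by norm_num) P1 T2 (by norm_num)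

lemma T0 : ∫ z in Set.Ioi (1 : ℝ), hh z ≤ ((2732621541161 : ℝ)/50000000000000) :=
  chain (1 : ℝ) ((53 : ℝ)/50) ((38242540633 : ℝ)/5000000000000) ((2350196134831 : ℝ)/50000000000000) ((2732621541161 : ℝ)/50000000000000) (by norm_num) P0 T1 (by norm_num)
-- final 102603041947369/200000000000000 > 0.513: True

/-- The competitive ratio of Balance SWOR: `∫_0^∞ e^{-z}(1 - q(z)) dz > 0.513`. -/
theorem balance_swor_ratio :
    (0.513 : ℝ) < ∫ z in Set.Ioi (0:ℝ), Real.exp (-z) * (1 - q z) := by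
  have hq_meas : Measurable q := by
    unfold q
    exact Measurable.ite (measurableSet_le measurable_id measurable_const)
      (by fun_prop) (by fun_prop)
  have hf_meas : Measurable (fun z : ℝ => Real.exp (-z) * (1 - q z)) :=
    (Real.measurable_exp.comp measurable_neg).mul (measurable_const.sub hq_meas)
  have hq_nonneg : ∀ z : ℝ, 0 ≤ q z := fun z => by unfold q; split <;> positivity
  have hq_le : ∀ z : ℝ, 0 ≤ z → q z ≤ 1 := by
    intro z hz
    unfold q
    split
    · rw [← Real.exp_zero]; exact Real.exp_le_exp.mpr (by linarith)
    · rw [← Real.exp_zero]; exact Real.exp_le_exp.mpr (by simpa using (Real.exp_pos (z-1)).le)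
  have hf_int : IntegrableOn (fun z => Real.exp (-z) * (1 - q z)) (Ioi 0) := by
    have hbig : IntegrableOn (fun x => Real.exp (-(1:ℝ)*x)) (Ioi 0) :=
      exp_neg_integrableOn_Ioi 0 one_pos
    refine Integrable.mono hbig hf_meas.aestronglyMeasurable ?_
    rw [ae_restrict_iff' measurableSet_Ioi]
    refine Filter.Eventually.of_forall (fun z hz => ?_)
    have h0 : (0:ℝ) < z := hz
    rw [Real.norm_eq_abs, Real.norm_eq_abs, abs_mul, abs_of_pos (Real.exp_pos _),
      abs_of_pos (Real.exp_pos _)]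
    have h1 : |1 - q z| ≤ 1 := by
      rw [abs_le]
      constructor
      · linarith [hq_le z h0.le]
      · linarith [hq_nonneg z]
    calc Real.exp (-z) * |1 - q z| ≤ Real.exp (-z) * 1 := by
          exact mul_le_mul_of_nonneg_left h1 (Real.exp_pos _).le
      _ ≤ Real.exp (-1*z) := by rw [mul_one]; apply Real.exp_le_exp.mpr; linarith
  have hsplit : (∫ z in Ioi (0:ℝ), Real.exp (-z) * (1 - q z)) =
      (∫ z in Ioc (0:ℝ) 1, Real.exp (-z) * (1 - q z)) +
        ∫ z in Ioi (1:ℝ), Real.exp (-z) * (1 - q z) := by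
    rw [← setIntegral_union (Set.Ioc_disjoint_Ioi le_rfl) measurableSet_Ioi
      (hf_int.mono_set Set.Ioc_subset_Ioi_self)
      (hf_int.mono_set (Set.Ioi_subset_Ioi zero_le_one)),
      Set.Ioc_union_Ioi_eq_Ioi zero_le_one]
  have hpart1 : (∫ z in Ioc (0:ℝ) 1, Real.exp (-z) * (1 - q z)) =
      (1 - Real.exp (-1)) - (1 - Real.exp (-2))/2 := by
    have heq : EqOn (fun z => Real.exp (-z) * (1 - q z))
        (fun z => Real.exp (-(1*z)) - Real.exp (-(2*z))) (Ioc (0:ℝ) 1) := by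
      intro z hz
      simp only
      unfold q
      rw [if_pos hz.2, mul_sub, mul_one, ← Real.exp_add]
      ring_nf
    rw [setIntegral_congr_fun measurableSet_Ioc heq,
      ← intervalIntegral.integral_of_le zero_le_one,
      intervalIntegral.integral_sub
        (Continuous.intervalIntegrable (by continuity) 0 1)
        (Continuous.intervalIntegrable (by continuity) 0 1),
      int_exp 1 0 1 one_pos, int_exp 2 0 1 two_pos]
    norm_num
  have hpart2 : (∫ z in Ioi (1:ℝ), Real.exp (-z) * (1 - q z)) =
      Real.exp (-1) - ∫ z in Ioi (1:ℝ), hh z := by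
    have hexp1 : IntegrableOn (fun z : ℝ => Real.exp (-z)) (Ioi 1) := by
      simpa using exp_neg_integrableOn_Ioi 1 one_pos
    have heq : EqOn (fun z => Real.exp (-z) * (1 - q z))
        (fun z => Real.exp (-z) - hh z) (Ioi (1:ℝ)) := by
      intro z hz
      simp only
      unfold q
      rw [if_neg (not_le.mpr (mem_Ioi.mp hz)), hh_def, mul_sub, mul_one, ← Real.exp_add]
      ring_nf
    rw [setIntegral_congr_fun measurableSet_Ioi heq,
      integral_sub hexp1 (hh_integrableOn 1), integral_exp_neg_Ioi]
  rw [hsplit, hpart1, hpart2]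
  have hJ := T0
  have h2 := exp2_lb
  norm_num at h2 ⊢
  linarith
end

section
/- Let q : [0,∞) → ℝ be defined by q(y) = e^{−y} for 0 ≤ y ≤ 1 and q(y) = e^{−e^{y−1}} for y > 1. For every 0 ≤ z ≤ 1 and every y ≥ 0: if y ≤ 1 then (z·q((y−z)^+)) / (1 − z + z·q((y−z)^+)) ≤ exp(−(1−z)), and if y > 1 then (z·q((y−z)^+)) / (1 − z + z·q((y−z)^+)) ≤ exp(−(1−z)·e^{y−1}); here t^+ denotes max{t, 0}. -/
open Real
set_option maxHeartbeats 1000000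


lemma cubic_le_exp {x : ℝ} (hx : 0 ≤ x) : 1 + x + x^2/2 + x^3/6 ≤ Real.exp x := by
  have h := Real.sum_le_exp_of_nonneg hx 4
  simp [Finset.sum_range_succ, Nat.factorial] at h
  linarith

lemma exp_ge_lin (x : ℝ) : Real.exp 1 * x ≤ Real.exp x := by
  rcases le_or_gt x 0 with h | h
  · have := Real.exp_pos x
    nlinarith [Real.exp_pos 1]
  · have h1 : x ≤ Real.exp (x - 1) := by
      have := Real.add_one_le_exp (x - 1); linarith
    have h2 : Real.exp 1 * Real.exp (x - 1) = Real.exp x := by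
      rw [← Real.exp_add]; ring_nf
    nlinarith [Real.exp_pos 1]

lemma exp_neg_le_quad {w : ℝ} (hw : 0 ≤ w) : Real.exp (-w) ≤ 1 - w + w^2/2 := by
  have h2 := cubic_le_exp hw
  have hq : (0:ℝ) ≤ 1 - w + w^2/2 := by nlinarith [sq_nonneg (1-w)]
  have hprod : (1:ℝ) ≤ (1 - w + w^2/2) * (1 + w + w^2/2 + w^3/6) := by
    nlinarith [pow_nonneg hw 3, pow_nonneg hw 4, pow_nonneg hw 5]
  have h3 : (1 - w + w^2/2) * (1 + w + w^2/2 + w^3/6) ≤ (1 - w + w^2/2) * Real.exp w :=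
    mul_le_mul_of_nonneg_left h2 hq
  have hinv : Real.exp (-w) * Real.exp w = 1 := by rw [← Real.exp_add]; simp
  have h4 : Real.exp (-w) * Real.exp w ≤ (1 - w + w^2/2) * Real.exp w := by
    rw [hinv]; linarith
  exact le_of_mul_le_mul_right h4 (Real.exp_pos w)

lemma exp_neg_ge_cubic {z : ℝ} (h0 : 0 ≤ z) (h1 : z ≤ 1) :
    1 - z + z^2/2 - z^3/6 ≤ Real.exp (-z) := by
  have hub := Real.exp_bound' h0 h1 (n := 4) (by norm_num)
  simp [Finset.sum_range_succ, Nat.factorial] at hub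
  have hpnn : (0:ℝ) ≤ 1 - z + z^2/2 - z^3/6 := by nlinarith
  have hpoly : (1 - z + z^2/2 - z^3/6) * (1 + z + z^2/2 + z^3/6 + z^4*(4+1)/(24*4)) ≤ 1 := by
    nlinarith [pow_nonneg h0 4, pow_nonneg h0 5, pow_nonneg h0 6, pow_nonneg h0 7,
      mul_nonneg (pow_nonneg h0 4) (sub_nonneg.mpr h1)]
  have h3 : (1 - z + z^2/2 - z^3/6) * Real.exp z ≤ 1 := by
    have := mul_le_mul_of_nonneg_left hub hpnn
    nlinarith
  have hinv : Real.exp (-z) * Real.exp z = 1 := by rw [← Real.exp_add]; simp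
  have h4 : (1 - z + z^2/2 - z^3/6) * Real.exp z ≤ Real.exp (-z) * Real.exp z := by
    rw [hinv]; linarith
  exact le_of_mul_le_mul_right h4 (Real.exp_pos z)

lemma lem_K {g : ℝ} (hg : 0 ≤ g) : (2 + g) * (1 - Real.exp (-g)) ≤ 2 * g := by
  have hEpos := Real.exp_pos (-g)
  have hinv : Real.exp g * Real.exp (-g) = 1 := by rw [← Real.exp_add]; simp
  rcases le_or_gt g 2 with h2 | h2
  · have key : (2 - g) * Real.exp g ≤ 2 + g := by
      rcases le_or_gt g 1 with h1 | h1
      · have hub := Real.exp_bound' hg h1 (n := 4) (by norm_num)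
        simp [Finset.sum_range_succ, Nat.factorial] at hub
        have hnn : (0:ℝ) ≤ 2 - g := by linarith
        have := mul_le_mul_of_nonneg_left hub hnn
        nlinarith [pow_nonneg hg 3, pow_nonneg hg 4, pow_nonneg hg 5,
          mul_nonneg (pow_nonneg hg 4) (sub_nonneg.mpr h1)]
      · have hs1 : (2 - g) ≤ Real.exp ((2 - g) - 1) := by
          have := Real.add_one_le_exp ((2 - g) - 1); linarith
        have hmul : (2 - g) * Real.exp g ≤ Real.exp ((2-g)-1) * Real.exp g :=
          mul_le_mul_of_nonneg_right hs1 (Real.exp_pos g).le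
        have hexp : Real.exp ((2-g)-1) * Real.exp g = Real.exp 1 := by
          rw [← Real.exp_add]; ring_nf
        have he3 : Real.exp 1 ≤ 3 := by
          have := Real.exp_one_lt_d9; linarith
        linarith
    have h5 : (2-g) * Real.exp g * Real.exp (-g) = 2 - g := by
      rw [mul_assoc, hinv, mul_one]
    have h6 : (2-g) ≤ (2+g) * Real.exp (-g) := by
      rw [← h5]; exact mul_le_mul_of_nonneg_right key hEpos.le
    nlinarith
  · nlinarith [mul_pos (show (0:ℝ) < 2+g by linarith) hEpos]


lemma quad_pos {b m c : ℝ} (hb : 0 < b) (hc : 0 ≤ c) (hdisc : m^2 ≤ 8*b) :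
    m*c ≤ 2 + b*c^2 := by nlinarith [sq_nonneg (2*b*c - m), hb.le]

lemma disc_ineq {z : ℝ} (hz0 : 0 ≤ z) (hz7 : z ≤ 0.725) :
    (3*z - 1 - 2*(z^2/2 - z^3/6))^2 ≤ 8*((z^2/2 - z^3/6)^2 + (1-z)*(z^2/2 - z^3/6))
      ∨ 3*z - 1 - 2*(z^2/2 - z^3/6) ≤ 0 := by
  rcases le_or_gt (3*z - 1 - 2*(z^2/2 - z^3/6)) 0 with h | h
  · right; exact h
  · left
    nlinarith [sq_nonneg z, sq_nonneg (z-0.5), sq_nonneg (z-0.725), mul_nonneg hz0 hz0,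
      mul_nonneg (mul_nonneg hz0 hz0) hz0, pow_nonneg hz0 4, pow_nonneg hz0 5, pow_nonneg hz0 6,
      mul_nonneg hz0 (sub_nonneg.2 hz7), mul_nonneg (mul_nonneg hz0 hz0) (sub_nonneg.2 hz7),
      mul_nonneg (mul_nonneg (mul_nonneg hz0 hz0) hz0) (sub_nonneg.2 hz7),
      mul_nonneg (pow_nonneg hz0 4) (sub_nonneg.2 hz7),
      mul_nonneg (pow_nonneg hz0 5) (sub_nonneg.2 hz7)]

lemma cpoly {w : ℝ} (h0 : 0 ≤ w) (h2 : w ≤ 0.275) :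
    2 - 2*w ≤ (1+w+w^2/2+w^3/6-2.7182818286*w) * (2+2.7182818283*w*(1-w+w^2/2-w^3/6)) := by
  nlinarith [sq_nonneg w, mul_nonneg h0 h0, pow_nonneg h0 3, pow_nonneg h0 4,
    pow_nonneg h0 5, pow_nonneg h0 6, pow_nonneg h0 7,
    mul_nonneg h0 (sub_nonneg.2 h2),
    mul_nonneg (mul_nonneg h0 h0) (sub_nonneg.2 h2),
    mul_nonneg (pow_nonneg h0 3) (sub_nonneg.2 h2),
    mul_nonneg (pow_nonneg h0 4) (sub_nonneg.2 h2),
    mul_nonneg (pow_nonneg h0 5) (sub_nonneg.2 h2),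
    mul_nonneg (pow_nonneg h0 6) (sub_nonneg.2 h2),
    sq_nonneg (w - 0.275), sq_nonneg (w-0.1)]


lemma step_div {z Q W : ℝ} (hz0 : 0 ≤ z) (hz1 : z ≤ 1) (hQ : 0 < Q)
    (h : z * Q * (Real.exp W - 1) ≤ 1 - z) :
    z * Q / (1 - z + z * Q) ≤ Real.exp (-W) := by
  have hD : 0 < 1 - z + z * Q := by
    rcases lt_or_ge z 1 with h' | h'
    · nlinarith [mul_nonneg hz0 hQ.le]
    · have hz : z = 1 := le_antisymm hz1 h'
      rw [hz]; simpa using hQ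
  rw [div_le_iff₀ hD, Real.exp_neg, inv_mul_eq_div, le_div_iff₀ (Real.exp_pos W)]
  nlinarith

lemma key_1 {z Q : ℝ} (hz0 : 0 ≤ z) (hz1 : z ≤ 1) (hQ0 : 0 ≤ Q) (hQ1 : Q ≤ 1) :
    z * Q * (Real.exp (1 - z) - 1) ≤ 1 - z := by
  have h1 : 1 ≤ Real.exp (1 - z) := Real.one_le_exp (by linarith)
  have h2 : (1 - (1-z)) ≤ Real.exp (-(1-z)) := by
    have := Real.add_one_le_exp (-(1-z)); linarith
  have hinv : Real.exp (1-z) * Real.exp (-(1-z)) = 1 := by rw [← Real.exp_add]; simp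
  -- (1-w) * exp w ≤ 1 with w = 1-z :  z * exp(1-z) ≤ 1
  have h3 : z * Real.exp (1-z) ≤ 1 := by
    nlinarith [Real.exp_pos (1-z), mul_le_mul_of_nonneg_left h2 (Real.exp_pos (1-z)).le]
  -- z * Q * (exp w - 1) ≤ z * (exp w - 1) = z exp w - z ≤ 1 - z
  have h4 : z * Q * (Real.exp (1-z) - 1) ≤ z * 1 * (Real.exp (1-z) - 1) := by
    apply mul_le_mul_of_nonneg_right _ (by linarith)
    exact mul_le_mul_of_nonneg_left hQ1 hz0
  nlinarith


lemma z_exp_le_one (z : ℝ) : z * Real.exp (1-z) ≤ 1 := by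
  have h1 : z ≤ Real.exp (z-1) := by have := Real.add_one_le_exp (z-1); linarith
  have h2 : z * Real.exp (1-z) ≤ Real.exp (z-1) * Real.exp (1-z) :=
    mul_le_mul_of_nonneg_right h1 (Real.exp_pos _).le
  have h3 : Real.exp (z-1) * Real.exp (1-z) = 1 := by rw [← Real.exp_add]; ring_nf; exact Real.exp_zero
  linarith

lemma mono_aux {g U : ℝ} (hg : 0 ≤ g) (hU : g ≤ U) : g + g^2/2 ≤ U + U^2/2 := by
  nlinarith [mul_nonneg (sub_nonneg.2 hU) (add_nonneg (le_trans hg hU) hg)]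

lemma polyB {w : ℝ} (h0 : 0 ≤ w) (h4 : w ≤ 0.4) :
    (2.7182818286*w*(1-w+w^2/2)) + (2.7182818286*w*(1-w+w^2/2))^2/2
      ≤ 4*w - 3*w^2 + w^3 := by
  nlinarith [sq_nonneg w, mul_nonneg h0 h0, pow_nonneg h0 3, pow_nonneg h0 4,
    mul_nonneg (mul_nonneg h0 h0) (sub_nonneg.2 h4), pow_nonneg h0 5,
    mul_nonneg (pow_nonneg h0 4) (sub_nonneg.2 h4),
    mul_nonneg (mul_nonneg h0 h0) h0]

lemma H_B {w g : ℝ} (hw0 : 0 ≤ w) (hw4 : w ≤ 0.4) (hg0 : 0 ≤ g)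
    (hgU : g ≤ 2.7182818286*w*(1-w+w^2/2)) :
    2 * ((1-w) * (1-w+w^2/2)) ≤ (2+g)*(1-g/2)^2 := by
  have hP : 2 - g - g^2/2 ≤ (2+g)*(1-g/2)^2 := by nlinarith [pow_nonneg hg0 3]
  have hm := mono_aux hg0 hgU
  have hpB := polyB hw0 hw4
  have e : 2*((1-w)*(1-w+w^2/2)) = 2 - (4*w - 3*w^2 + w^3) := by ring
  linarith

lemma exp_sq_half {g : ℝ} (hg2 : g ≤ 2) : Real.exp g * (1-g/2)^2 ≤ 1 := by
  have h1 : 1 - g/2 ≤ Real.exp (-(g/2)) := by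
    have := Real.add_one_le_exp (-(g/2)); linarith
  have h2 : (1-g/2)^2 ≤ Real.exp (-(g/2)) ^ 2 := by
    apply sq_le_sq' _ h1
    have := Real.exp_pos (-(g/2)); linarith
  have h3 : Real.exp (-(g/2)) ^ 2 = Real.exp (-g) := by
    rw [sq, ← Real.exp_add]; congr 1; ring
  have h4 : Real.exp g * Real.exp (-g) = 1 := by rw [← Real.exp_add]; simp
  nlinarith [Real.exp_pos g]

lemma key_B2 {z c : ℝ} (hz6 : 0.6 < z) (hz1 : z ≤ 1) (hc1 : 1 < c) (hc2 : c ≤ Real.exp z) :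
    z * Real.exp (z-1) * (Real.exp ((1-z)*c) - 1) ≤ (1-z)*c := by
  have hc0 : (0:ℝ) < c := by linarith
  have hw0 : 0 ≤ 1 - z := by linarith
  have hw4 : 1 - z ≤ 0.4 := by linarith
  have hg0 : 0 ≤ (1-z)*c := mul_nonneg hw0 hc0.le
  have hEz : Real.exp z ≤ 2.7182818286 * (1 - (1-z) + (1-z)^2/2) := by
    have h1 : Real.exp z = Real.exp 1 * Real.exp (-(1-z)) := by
      rw [← Real.exp_add]; ring_nf
    rw [h1]
    have h2 := exp_neg_le_quad hw0
    have h3 := Real.exp_one_lt_d9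
    nlinarith [Real.exp_pos (-(1-z)), Real.exp_pos 1, sq_nonneg (1-z)]
  have hgU : (1-z)*c ≤ 2.7182818286*(1-z)*(1-(1-z)+(1-z)^2/2) := by
    have h1 := mul_le_mul_of_nonneg_left hc2 hw0
    nlinarith [mul_le_mul_of_nonneg_left hEz hw0]
  have hgub : (1-z)*c ≤ 1.1 := by nlinarith [sq_nonneg (1-z), pow_nonneg hw0 3]
  have hq : z * Real.exp (z-1) ≤ (1-(1-z))*(1-(1-z)+(1-z)^2/2) := by
    have h0 : (z:ℝ) - 1 = -(1-z) := by ring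
    rw [h0]
    have h2 := exp_neg_le_quad hw0
    nlinarith [Real.exp_pos (-(1-z))]
  have hHB := H_B hw0 hw4 hg0 hgU
  have h2 : 2 * (z * Real.exp (z-1)) ≤ (2+(1-z)*c)*(1-((1-z)*c)/2)^2 := by linarith
  have hEg := exp_sq_half (show (1-z)*c ≤ 2 by linarith)
  have hKg := lem_K hg0
  have hexpneg1 : Real.exp (-((1-z)*c)) ≤ 1 := by
    have : Real.exp (-((1-z)*c)) ≤ Real.exp 0 := Real.exp_le_exp.mpr (by linarith)
    simpa using this
  have h4 : Real.exp ((1-z)*c) * Real.exp (-((1-z)*c)) = 1 := by rw [← Real.exp_add]; simp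
  have h1 : (Real.exp ((1-z)*c) - 1) * ((2+(1-z)*c)*(1-((1-z)*c)/2)^2) ≤ 2*((1-z)*c) := by
    have e1 : (Real.exp ((1-z)*c) - 1) * ((2+(1-z)*c)*(1-((1-z)*c)/2)^2)
        = ((2+(1-z)*c) * (1 - Real.exp (-((1-z)*c)))) *
          (Real.exp ((1-z)*c) * (1-((1-z)*c)/2)^2) := by
      linear_combination ((2+(1-z)*c)*(1-((1-z)*c)/2)^2) * h4
    rw [e1]
    have hnn1 : 0 ≤ (2+(1-z)*c) * (1 - Real.exp (-((1-z)*c))) :=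
      mul_nonneg (by linarith) (by linarith)
    calc ((2+(1-z)*c) * (1 - Real.exp (-((1-z)*c)))) *
          (Real.exp ((1-z)*c) * (1-((1-z)*c)/2)^2)
        ≤ ((2+(1-z)*c) * (1 - Real.exp (-((1-z)*c)))) * 1 :=
          mul_le_mul_of_nonneg_left hEg hnn1
      _ = (2+(1-z)*c) * (1 - Real.exp (-((1-z)*c))) := mul_one _
      _ ≤ 2*((1-z)*c) := hKg
  have hP2 : (0:ℝ) < (2+(1-z)*c)*(1-((1-z)*c)/2)^2 := by
    have hhalf : (0:ℝ) < 1-((1-z)*c)/2 := by linarith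
    exact mul_pos (by linarith) (pow_pos hhalf 2)
  have hnnz : 0 ≤ z * Real.exp (z-1) := mul_nonneg (by linarith : (0:ℝ) ≤ z) (Real.exp_pos _).le
  have hc3 : z * Real.exp (z-1) * (Real.exp ((1-z)*c) - 1) * ((2+(1-z)*c)*(1-((1-z)*c)/2)^2)
      ≤ ((1-z)*c) * ((2+(1-z)*c)*(1-((1-z)*c)/2)^2) := by
    calc z * Real.exp (z-1) * (Real.exp ((1-z)*c) - 1) * ((2+(1-z)*c)*(1-((1-z)*c)/2)^2)
        = (z * Real.exp (z-1)) * ((Real.exp ((1-z)*c) - 1) * ((2+(1-z)*c)*(1-((1-z)*c)/2)^2)) := by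
          ring
      _ ≤ (z * Real.exp (z-1)) * (2*((1-z)*c)) := mul_le_mul_of_nonneg_left h1 hnnz
      _ = ((1-z)*c) * (2 * (z * Real.exp (z-1))) := by ring
      _ ≤ ((1-z)*c) * ((2+(1-z)*c)*(1-((1-z)*c)/2)^2) := mul_le_mul_of_nonneg_left h2 hg0
  exact le_of_mul_le_mul_right hc3 hP2




lemma H_Apoly_abs {z p c : ℝ} (hz1 : z ≤ 1) (hp : 0 ≤ p) (hc : 0 ≤ c)
    (hdisc : (3*z - 1 - 2*p)^2 ≤ 8*(p^2 + (1-z)*p) ∨ 3*z - 1 - 2*p ≤ 0) :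
    2*z*c ≤ (2+(1-z)*c) * (1 + c*p + (c*p)^2/2) := by
  have hcube : 0 ≤ (1-z)*c^3*p^2/2 :=
    div_nonneg (mul_nonneg (mul_nonneg (by linarith) (pow_nonneg hc 3)) (sq_nonneg _)) (by norm_num)
  have hmneg : 3*z - 1 - 2*p ≤ 0 → 2*z*c ≤ (2+(1-z)*c) * (1 + c*p + (c*p)^2/2) := by
    intro hm
    nlinarith [mul_nonneg (by linarith : (0:ℝ) ≤ 1 + 2*p - 3*z) hc,
      mul_nonneg (mul_nonneg hc hc) hp, sq_nonneg (c*p),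
      mul_nonneg (mul_nonneg (by linarith : (0:ℝ) ≤ 1-z) (mul_nonneg hc hc)) hp, hcube]
  rcases hdisc with hdisc | hm
  · rcases eq_or_lt_of_le hp with hp0 | hppos
    · apply hmneg
      nlinarith [sq_nonneg (3*z - 1 - 2*p), hdisc]
    · have hb : 0 < p^2 + (1-z)*p := by nlinarith [sq_nonneg p]
      have hq := quad_pos hb hc hdisc
      nlinarith [hq, hcube]
  · exact hmneg hm

/-- abstract core: `F` plays the role of `φ(z) = e^{-z} - 1 + z`. -/
lemma key_A_core {z c F : ℝ} (hz0 : 0 ≤ z) (hz1 : z ≤ 1) (hc0 : 0 < c)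
    (hFl : z^2/2 - z^3/6 ≤ F)
    (hyp : z ≤ 0.725 ∨ 2*z ≤ (2 + (1-z)*c) * (Real.exp 1 * F)) :
    z * (Real.exp (-(c*F)) * (1 - Real.exp (-((1-z)*c)))) ≤ 1 - z := by
  have hw0 : (0:ℝ) ≤ 1 - z := by linarith
  have hg0 : 0 ≤ (1-z)*c := mul_nonneg hw0 hc0.le
  have hphat : (0:ℝ) ≤ z^2/2 - z^3/6 := by nlinarith
  have hF0 : 0 ≤ F := le_trans hphat hFl
  have hx0 : 0 ≤ c * F := mul_nonneg hc0.le hF0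
  have hApos := Real.exp_pos (-(c*F))
  have hB0 : 0 ≤ 1 - Real.exp (-((1-z)*c)) := by
    have : Real.exp (-((1-z)*c)) ≤ Real.exp 0 := Real.exp_le_exp.mpr (by linarith)
    simpa using this
  have hB1 : 1 - Real.exp (-((1-z)*c)) ≤ 1 := by
    have := Real.exp_pos (-((1-z)*c)); linarith
  have hKg := lem_K hg0
  have hKg' : (1 - Real.exp (-((1-z)*c))) * (2+(1-z)*c) ≤ 2*((1-z)*c) := by
    calc (1 - Real.exp (-((1-z)*c))) * (2+(1-z)*c)
        = (2+(1-z)*c) * (1 - Real.exp (-((1-z)*c))) := by ring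
      _ ≤ 2*((1-z)*c) := hKg
  rcases hyp with hz7 | h6
  · rcases le_or_gt 1 (c*F) with hx1 | hx1
    · -- case (a)
      have hA : Real.exp (-(c*F)) ≤ Real.exp (-1) := Real.exp_le_exp.mpr (by linarith)
      have hA2 : Real.exp (-1:ℝ) ≤ 0.368 := by
        have hgt := Real.exp_one_gt_d9
        have hinv : Real.exp (-1:ℝ) * Real.exp 1 = 1 := by rw [← Real.exp_add]; simp
        nlinarith [Real.exp_pos (-1:ℝ)]
      have hAB : Real.exp (-(c*F)) * (1 - Real.exp (-((1-z)*c))) ≤ 0.368 * 1 :=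
        mul_le_mul (hA.trans hA2) hB1 hB0 (by norm_num)
      have : z * (Real.exp (-(c*F)) * (1 - Real.exp (-((1-z)*c)))) ≤ 0.725 * (0.368 * 1) :=
        mul_le_mul hz7 hAB (mul_nonneg hApos.le hB0) (by norm_num)
      linarith
    · -- case (b)
      obtain ⟨p, hpdef⟩ : ∃ p : ℝ, z^2/2 - z^3/6 = p := ⟨_, rfl⟩
      rw [hpdef] at hFl hphat
      have hdisc := disc_ineq hz0 hz7
      rw [hpdef] at hdisc
      have hpoly0 := H_Apoly_abs hz1 hphat hc0.le hdisc
      have hquad : 1 + c*F + (c*F)^2/2 ≤ Real.exp (c*F) := by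
        have := Real.quadratic_le_exp_of_nonneg hx0; linarith
      have hinvx : Real.exp (-(c*F)) * Real.exp (c*F) = 1 := by rw [← Real.exp_add]; simp
      have hAP : Real.exp (-(c*F)) * (1 + c*F + (c*F)^2/2) ≤ 1 := by
        calc Real.exp (-(c*F)) * (1 + c*F + (c*F)^2/2)
            ≤ Real.exp (-(c*F)) * Real.exp (c*F) := mul_le_mul_of_nonneg_left hquad hApos.le
          _ = 1 := hinvx
      have hmono : (1 + c*p + (c*p)^2/2) ≤ (1 + c*F + (c*F)^2/2) := by
        have h1 : c*p ≤ c*F := mul_le_mul_of_nonneg_left hFl hc0.le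
        have h2 : (c*p)^2 ≤ (c*F)^2 := by
          apply sq_le_sq' _ h1
          nlinarith [mul_nonneg hc0.le hphat]
        linarith
      have hpoly : z * (2*((1-z)*c)) ≤ (1-z) * ((2+(1-z)*c) * (1 + c*F + (c*F)^2/2)) := by
        have s1 := mul_le_mul_of_nonneg_left hpoly0 hw0
        have s2 : (1-z) * ((2+(1-z)*c) * (1 + c*p + (c*p)^2/2))
            ≤ (1-z) * ((2+(1-z)*c) * (1 + c*F + (c*F)^2/2)) := by
          apply mul_le_mul_of_nonneg_left _ hw0
          exact mul_le_mul_of_nonneg_left hmono (by linarith)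
        nlinarith [s1, s2]
      have hSP : (0:ℝ) < (2+(1-z)*c) * (1 + c*F + (c*F)^2/2) := by
        apply mul_pos (by linarith)
        nlinarith [sq_nonneg (c*F)]
      have hchain : z * (Real.exp (-(c*F)) * (1 - Real.exp (-((1-z)*c)))) *
          ((2+(1-z)*c) * (1 + c*F + (c*F)^2/2))
          ≤ (1-z) * ((2+(1-z)*c) * (1 + c*F + (c*F)^2/2)) := by
        have t1 : z * (Real.exp (-(c*F)) * (1 - Real.exp (-((1-z)*c)))) *
            ((2+(1-z)*c) * (1 + c*F + (c*F)^2/2))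
            = z * ((Real.exp (-(c*F)) * (1 + c*F + (c*F)^2/2)) *
               ((1 - Real.exp (-((1-z)*c))) * (2+(1-z)*c))) := by ring
        rw [t1]
        have t2 : (Real.exp (-(c*F)) * (1 + c*F + (c*F)^2/2)) *
               ((1 - Real.exp (-((1-z)*c))) * (2+(1-z)*c)) ≤ 1 * (2*((1-z)*c)) :=
          mul_le_mul hAP hKg' (mul_nonneg hB0 (by linarith)) (by norm_num)
        calc z * ((Real.exp (-(c*F)) * (1 + c*F + (c*F)^2/2)) *
               ((1 - Real.exp (-((1-z)*c))) * (2+(1-z)*c)))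
            ≤ z * (1 * (2*((1-z)*c))) := mul_le_mul_of_nonneg_left t2 hz0
          _ = z * (2*((1-z)*c)) := by ring
          _ ≤ (1-z) * ((2+(1-z)*c) * (1 + c*F + (c*F)^2/2)) := hpoly
      exact le_of_mul_le_mul_right hchain hSP
  · -- case (c) : given h6
    rcases eq_or_lt_of_le hF0 with hF00 | hFpos
    · have hz00 : z ≤ 0 := by
        rw [← hF00] at h6
        simp at h6
        linarith
      have hzz : z = 0 := le_antisymm hz00 hz0
      rw [hzz]
      norm_num
    · have hxx : 0 < c * F := mul_pos hc0 hFpos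
      have hL1 : Real.exp (-(c*F)) * (Real.exp 1 * (c*F)) ≤ 1 := by
        have h1 := exp_ge_lin (c*F)
        have hinvx : Real.exp (-(c*F)) * Real.exp (c*F) = 1 := by rw [← Real.exp_add]; simp
        calc Real.exp (-(c*F)) * (Real.exp 1 * (c*F))
            ≤ Real.exp (-(c*F)) * Real.exp (c*F) := mul_le_mul_of_nonneg_left h1 hApos.le
          _ = 1 := hinvx
      have hpoly : z * (2*((1-z)*c)) ≤ (1-z) * ((2+(1-z)*c) * (Real.exp 1 * (c*F))) := by
        have h7 := mul_le_mul_of_nonneg_right h6 (mul_nonneg hw0 hc0.le)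
        linarith [h7]
      have hSP : (0:ℝ) < (2+(1-z)*c) * (Real.exp 1 * (c*F)) :=
        mul_pos (by linarith) (mul_pos (Real.exp_pos 1) hxx)
      have hchain : z * (Real.exp (-(c*F)) * (1 - Real.exp (-((1-z)*c)))) *
          ((2+(1-z)*c) * (Real.exp 1 * (c*F)))
          ≤ (1-z) * ((2+(1-z)*c) * (Real.exp 1 * (c*F))) := by
        have t1 : z * (Real.exp (-(c*F)) * (1 - Real.exp (-((1-z)*c)))) *
            ((2+(1-z)*c) * (Real.exp 1 * (c*F)))
            = z * ((Real.exp (-(c*F)) * (Real.exp 1 * (c*F))) *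
               ((1 - Real.exp (-((1-z)*c))) * (2+(1-z)*c))) := by ring
        rw [t1]
        have t2 : (Real.exp (-(c*F)) * (Real.exp 1 * (c*F))) *
               ((1 - Real.exp (-((1-z)*c))) * (2+(1-z)*c)) ≤ 1 * (2*((1-z)*c)) :=
          mul_le_mul hL1 hKg' (mul_nonneg hB0 (by linarith)) (by norm_num)
        calc z * ((Real.exp (-(c*F)) * (Real.exp 1 * (c*F))) *
               ((1 - Real.exp (-((1-z)*c))) * (2+(1-z)*c)))
            ≤ z * (1 * (2*((1-z)*c))) := mul_le_mul_of_nonneg_left t2 hz0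
          _ = z * (2*((1-z)*c)) := by ring
          _ ≤ (1-z) * ((2+(1-z)*c) * (Real.exp 1 * (c*F))) := hpoly
      exact le_of_mul_le_mul_right hchain hSP

lemma key_A {z c : ℝ} (hz0 : 0 ≤ z) (hz1 : z ≤ 1) (hc : Real.exp z < c) :
    z * Real.exp (-(c * Real.exp (-z))) * (Real.exp ((1-z)*c) - 1) ≤ 1 - z := by
  have hc0 : (0:ℝ) < c := lt_trans (Real.exp_pos z) hc
  have hw0 : (0:ℝ) ≤ 1 - z := by linarith
  have hφl : z^2/2 - z^3/6 ≤ Real.exp (-z) - 1 + z := by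
    have := exp_neg_ge_cubic hz0 hz1; linarith
  have e1 : Real.exp (-(c * Real.exp (-z))) * Real.exp ((1-z)*c)
      = Real.exp (-(c * (Real.exp (-z) - 1 + z))) := by
    rw [← Real.exp_add]; congr 1 <;> ring
  have e2 : Real.exp (-(c * (Real.exp (-z) - 1 + z))) * Real.exp (-((1-z)*c))
      = Real.exp (-(c * Real.exp (-z))) := by
    rw [← Real.exp_add]; congr 1 <;> ring
  have hid : z * Real.exp (-(c * Real.exp (-z))) * (Real.exp ((1-z)*c) - 1)
      = z * (Real.exp (-(c * (Real.exp (-z) - 1 + z))) * (1 - Real.exp (-((1-z)*c)))) := by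
    linear_combination z * e1 + z * e2
  rw [hid]
  apply key_A_core hz0 hz1 hc0 hφl
  rcases le_or_gt z 0.725 with hz7 | hz7
  · exact Or.inl hz7
  · right
    have i1 : Real.exp 1 * Real.exp (-z) = Real.exp (1-z) := by
      rw [← Real.exp_add]; congr 1 <;> ring
    have i2 : Real.exp z = Real.exp 1 * Real.exp (-(1-z)) := by
      rw [← Real.exp_add]; congr 1 <;> ring
    have hw2 : 1 - z ≤ 0.275 := by linarith
    have lb1 : 1+(1-z)+(1-z)^2/2+(1-z)^3/6 ≤ Real.exp (1-z) := cubic_le_exp hw0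
    have lb2 : 1-(1-z)+(1-z)^2/2-(1-z)^3/6 ≤ Real.exp (-(1-z)) := exp_neg_ge_cubic hw0 (by linarith)
    have hcub0 : (0:ℝ) ≤ 1-(1-z)+(1-z)^2/2-(1-z)^3/6 := by nlinarith
    have eub := Real.exp_one_lt_d9
    have elb := Real.exp_one_gt_d9
    have f1a : Real.exp 1 * (1-z) ≤ 2.7182818286 * (1-z) :=
      mul_le_mul_of_nonneg_right eub.le hw0
    have f1 : 1+(1-z)+(1-z)^2/2+(1-z)^3/6-2.7182818286*(1-z)
        ≤ Real.exp (1-z) - Real.exp 1 * (1-z) := by linarith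
    have f2a : 2.7182818283 * (1-(1-z)+(1-z)^2/2-(1-z)^3/6) ≤ Real.exp z := by
      rw [i2]
      exact mul_le_mul elb.le lb2 hcub0 (Real.exp_pos 1).le
    have f2 : 2+2.7182818283*(1-z)*(1-(1-z)+(1-z)^2/2-(1-z)^3/6) ≤ 2 + (1-z)*Real.exp z := by
      have f2b := mul_le_mul_of_nonneg_left f2a hw0
      linarith [f2b]
    have f10 : (0:ℝ) ≤ 1+(1-z)+(1-z)^2/2+(1-z)^3/6-2.7182818286*(1-z) := by nlinarith
    have f20 : (0:ℝ) ≤ 2+2.7182818283*(1-z)*(1-(1-z)+(1-z)^2/2-(1-z)^3/6) := by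
      nlinarith [mul_nonneg hw0 hcub0]
    have hcp := cpoly hw0 hw2
    have hRHS : (1+(1-z)+(1-z)^2/2+(1-z)^3/6-2.7182818286*(1-z)) *
        (2+2.7182818283*(1-z)*(1-(1-z)+(1-z)^2/2-(1-z)^3/6))
        ≤ (Real.exp (1-z) - Real.exp 1 * (1-z)) * (2 + (1-z)*Real.exp z) :=
      mul_le_mul f1 f2 f20 (by linarith)
    have hexpand : (Real.exp (1-z) - Real.exp 1 * (1-z)) * (2 + (1-z)*Real.exp z)
        = (2 + (1-z)*Real.exp z) * (Real.exp 1 * (Real.exp (-z) - 1 + z)) := by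
      rw [← i1]; ring
    have h5 : 2*z ≤ (2 + (1-z)*Real.exp z) * (Real.exp 1 * (Real.exp (-z) - 1 + z)) := by
      calc 2*z = 2 - 2*(1-z) := by ring
        _ ≤ (1+(1-z)+(1-z)^2/2+(1-z)^3/6-2.7182818286*(1-z)) *
            (2+2.7182818283*(1-z)*(1-(1-z)+(1-z)^2/2-(1-z)^3/6)) := hcp
        _ ≤ (Real.exp (1-z) - Real.exp 1 * (1-z)) * (2 + (1-z)*Real.exp z) := hRHS
        _ = (2 + (1-z)*Real.exp z) * (Real.exp 1 * (Real.exp (-z) - 1 + z)) := hexpand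
    have hφ0 : 0 ≤ Real.exp (-z) - 1 + z := le_trans (by nlinarith) hφl
    have hcge : 2 + (1-z)*Real.exp z ≤ 2 + (1-z)*c := by
      nlinarith [mul_le_mul_of_nonneg_left hc.le hw0]
    have heφ : 0 ≤ Real.exp 1 * (Real.exp (-z) - 1 + z) :=
      mul_nonneg (Real.exp_pos 1).le hφ0
    calc 2*z ≤ (2 + (1-z)*Real.exp z) * (Real.exp 1 * (Real.exp (-z) - 1 + z)) := h5
      _ ≤ (2 + (1-z)*c) * (Real.exp 1 * (Real.exp (-z) - 1 + z)) :=
        mul_le_mul_of_nonneg_right hcge heφ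

lemma key_B {z c : ℝ} (hz0 : 0 ≤ z) (hz1 : z ≤ 1) (hc1 : 1 < c) (hc2 : c ≤ Real.exp z) :
    z * (Real.exp (z-1) / c) * (Real.exp ((1-z)*c) - 1) ≤ 1 - z := by
  have hc0 : (0:ℝ) < c := by linarith
  have hw0 : 0 ≤ 1 - z := by linarith
  have hg0 : 0 ≤ (1-z)*c := mul_nonneg hw0 hc0.le
  have heq : z * (Real.exp (z-1) / c) * (Real.exp ((1-z)*c) - 1)
      = z * Real.exp (z-1) * (Real.exp ((1-z)*c) - 1) / c := by ring
  rw [heq, div_le_iff₀ hc0]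
  rcases le_or_gt z 0.6 with hz6 | hz6
  · -- small z case: c ≤ 2
    have hexp06 : Real.exp 0.6 < 2 := by
      have ha : Real.exp 0.6 ^ (5:ℕ) = Real.exp 3 := by
        rw [← Real.exp_nat_mul]; norm_num
      have hb : Real.exp 3 = Real.exp 1 ^ (3:ℕ) := by
        rw [← Real.exp_nat_mul]; norm_num
      have hc' : Real.exp 1 ^ (3:ℕ) ≤ 2.7182818286 ^ (3:ℕ) :=
        pow_le_pow_left₀ (Real.exp_pos 1).le Real.exp_one_lt_d9.le 3
      have : Real.exp 0.6 ^ (5:ℕ) < 2 ^ (5:ℕ) := by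
        rw [ha, hb]
        calc Real.exp 1 ^ (3:ℕ) ≤ 2.7182818286 ^ (3:ℕ) := hc'
          _ < 2 ^ (5:ℕ) := by norm_num
      exact lt_of_pow_lt_pow_left₀ 5 (by norm_num) this
    have hc2' : c ≤ 2 := by
      have : Real.exp z ≤ Real.exp 0.6 := Real.exp_le_exp.mpr hz6
      linarith
    have hexpg1 : Real.exp ((1-z)*c) - 1 ≤ ((1-z)*c) * Real.exp ((1-z)*c) := by
      have h1 : 1 - (1-z)*c ≤ Real.exp (-((1-z)*c)) := by
        have := Real.add_one_le_exp (-((1-z)*c)); linarith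
      have h2 : Real.exp (-((1-z)*c)) * Real.exp ((1-z)*c) = 1 := by
        rw [← Real.exp_add]; simp
      nlinarith [Real.exp_pos ((1-z)*c)]
    have hgle : Real.exp ((1-z)*c) ≤ Real.exp (2*(1-z)) :=
      Real.exp_le_exp.mpr (by nlinarith)
    have hcomb : Real.exp (z-1) * Real.exp (2*(1-z)) = Real.exp (1-z) := by
      rw [← Real.exp_add]; congr 1 <;> ring
    have hA := z_exp_le_one z
    calc z * Real.exp (z-1) * (Real.exp ((1-z)*c) - 1)
        ≤ z * Real.exp (z-1) * (((1-z)*c) * Real.exp ((1-z)*c)) := by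
          apply mul_le_mul_of_nonneg_left hexpg1 (mul_nonneg hz0 (Real.exp_pos _).le)
      _ ≤ z * Real.exp (z-1) * (((1-z)*c) * Real.exp (2*(1-z))) := by
          apply mul_le_mul_of_nonneg_left _ (mul_nonneg hz0 (Real.exp_pos _).le)
          exact mul_le_mul_of_nonneg_left hgle hg0
      _ = ((1-z)*c) * (z * (Real.exp (z-1) * Real.exp (2*(1-z)))) := by ring
      _ = ((1-z)*c) * (z * Real.exp (1-z)) := by rw [hcomb]
      _ ≤ ((1-z)*c) * 1 := mul_le_mul_of_nonneg_left hA hg0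
      _ = (1-z)*c := mul_one _
  · exact key_B2 hz6 hz1 hc1 hc2
/-- Key analytic lemma for Balance SWOR: for `0 ≤ z ≤ 1` and `y ≥ 0`,
`z q((y-z)⁺) / (1 - z + z q((y-z)⁺)) ≤ exp((1-z) q'(y)/q(y))`, where the right-hand
side is `exp(-(1-z))` for `y ≤ 1` and `exp(-(1-z) e^{y-1})` for `y > 1`. -/
theorem balance_swor_condition (z y : ℝ) (hz0 : 0 ≤ z) (hz1 : z ≤ 1) (hy : 0 ≤ y) :
    (y ≤ 1 →
      z * q (max (y - z) 0) / (1 - z + z * q (max (y - z) 0)) ≤ Real.exp (-(1 - z))) ∧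
    (1 < y →
      z * q (max (y - z) 0) / (1 - z + z * q (max (y - z) 0)) ≤
        Real.exp (-(1 - z) * Real.exp (y - 1))) := by
  constructor
  · intro hy1
    have ht1 : max (y - z) 0 ≤ 1 := max_le (by linarith) (by norm_num)
    have hqv : q (max (y - z) 0) = Real.exp (-(max (y - z) 0)) := by
      unfold q; rw [if_pos ht1]
    rw [hqv]
    have hQ1 : Real.exp (-(max (y - z) 0)) ≤ 1 := by
      have h0 : -(max (y - z) 0) ≤ 0 := neg_nonpos.mpr (le_max_right _ _)
      have := Real.exp_le_exp.mpr h0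
      simpa using this
    exact step_div hz0 hz1 (Real.exp_pos _) (key_1 hz0 hz1 (Real.exp_pos _).le hQ1)
  · intro hy1
    rw [show -(1 - z) * Real.exp (y - 1) = -((1 - z) * Real.exp (y - 1)) from by ring]
    rcases le_or_gt (y - z) 1 with hyz | hyz
    · -- subcase B : Q = exp(-(y-z)) = exp(z-1)/exp(y-1)
      have hmax : max (y - z) 0 = y - z := max_eq_left (by linarith)
      have hqv : q (max (y - z) 0) = Real.exp (z-1) / Real.exp (y-1) := by
        unfold q; rw [hmax, if_pos hyz, ← Real.exp_sub]; congr 1 <;> ring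
      rw [hqv]
      have hc1 : (1:ℝ) < Real.exp (y - 1) := by
        calc (1:ℝ) = Real.exp 0 := Real.exp_zero.symm
          _ < Real.exp (y-1) := Real.exp_lt_exp.mpr (by linarith)
      have hc2 : Real.exp (y - 1) ≤ Real.exp z := Real.exp_le_exp.mpr (by linarith)
      have hkey := key_B hz0 hz1 hc1 hc2
      exact step_div hz0 hz1 (div_pos (Real.exp_pos _) (Real.exp_pos _)) hkey
    · -- subcase A : Q = exp(-exp(y-z-1)) = exp(-(exp(y-1) * exp(-z)))
      have hmax : max (y - z) 0 = y - z := max_eq_left (by linarith)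
      have hqv : q (max (y - z) 0) = Real.exp (-(Real.exp (y-1) * Real.exp (-z))) := by
        unfold q; rw [hmax, if_neg (not_le.mpr hyz), ← Real.exp_add]
        congr 2 <;> ring
      rw [hqv]
      have hcgt : Real.exp z < Real.exp (y - 1) := Real.exp_lt_exp.mpr (by linarith)
      have hkey := key_A hz0 hz1 hcgt
      exact step_div hz0 hz1 (Real.exp_pos _) hkey
end

section
/- For all real numbers y, z with 0 ≤ z < 1, 0 ≤ y, and y + z ≤ 1: exp(z·e^{y}) ≤ 1 + (z/(1−z))·e^{y+z}. -/
/-- Subcase 1 inequality: for `0 ≤ z < 1`, `0 ≤ y`, `y + z ≤ 1`: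
`exp(z e^y) ≤ 1 + (z/(1-z)) e^{y+z}`. -/
theorem subcase1 (y z : ℝ) (hz0 : 0 ≤ z) (hz1 : z < 1) (hy : 0 ≤ y) (hyz : y + z ≤ 1) :
    Real.exp (z * Real.exp y) ≤ 1 + (z / (1 - z)) * Real.exp (y + z) := by
  set a := z * Real.exp y with ha
  have hE : (0:ℝ) < Real.exp y := Real.exp_pos y
  have ha0 : 0 ≤ a := mul_nonneg hz0 hE.le
  have h1z : (0:ℝ) < 1 - z := by linarith
  -- a ≤ 1
  have hz_exp : z ≤ Real.exp (z - 1) := by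
    have := Real.add_one_le_exp (z - 1); linarith
  have hey1 : Real.exp y ≤ Real.exp (1 - z) := Real.exp_le_exp.2 (by linarith)
  have ha1 : a ≤ 1 := by
    have h1 : a ≤ z * Real.exp (1 - z) := by nlinarith
    have h2 : z * Real.exp (1 - z) ≤ Real.exp (z - 1) * Real.exp (1 - z) := by
      nlinarith [Real.exp_pos (1 - z)]
    have h3 : Real.exp (z - 1) * Real.exp (1 - z) = 1 := by
      rw [← Real.exp_add]; norm_num
    linarith
  -- a ≤ e * z
  have he : Real.exp 1 < 2.7182818286 := Real.exp_one_lt_d9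
  have hae : a ≤ Real.exp 1 * z := by
    have : Real.exp y ≤ Real.exp 1 := Real.exp_le_exp.2 (by linarith)
    nlinarith
  -- exp a ≤ 1 + a + a^2/2 + (2/9) a^3
  have hb := Real.exp_bound' ha0 ha1 (n := 3) (by norm_num)
  have hsum : (∑ m ∈ Finset.range 3, a ^ m / m.factorial) = 1 + a + a ^ 2 / 2 := by
    simp [Finset.sum_range_succ]
  rw [hsum] at hb
  have hexp : Real.exp a ≤ 1 + a + a ^ 2 / 2 + 2 / 9 * a ^ 3 := by
    norm_num [Nat.factorial] at hb; linarith
  -- final comparison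
  have hez : 1 + z ≤ Real.exp z := by
    have := Real.add_one_le_exp z; linarith
  have key : (a + a ^ 2 / 2 + 2 / 9 * a ^ 3) * (1 - z) ≤ z * Real.exp (y + z) := by
    rw [Real.exp_add]
    have h2 : a ^ 2 ≤ Real.exp 1 * z * a := by nlinarith
    have h3 : a ^ 3 ≤ Real.exp 1 * z * a := by nlinarith
    nlinarith [Real.exp_pos 1, mul_nonneg hz0 ha0, mul_nonneg (mul_nonneg hz0 hz0) ha0,
      mul_nonneg (mul_nonneg hz0 hz0) (mul_nonneg hz0 ha0)]
  calc Real.exp a ≤ 1 + a + a ^ 2 / 2 + 2 / 9 * a ^ 3 := hexp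
    _ ≤ 1 + z / (1 - z) * Real.exp (y + z) := by
        have hfrac : a + a ^ 2 / 2 + 2 / 9 * a ^ 3 ≤ z / (1 - z) * Real.exp (y + z) := by
          rw [show z / (1 - z) * Real.exp (y + z) = z * Real.exp (y + z) / (1 - z) from by
            ring, le_div_iff₀ h1z]
          linarith [key]
        linarith
end

section
/- For every real number z with 0 ≤ z < 1: exp(z·e^{1−z}) ≤ 1 + e·z/(1−z). -/
open Real Set

/-- `exp(-x) ≤ 1 - x + x²/2` for `x ≥ 0`. -/
lemma swor_aux_exp_neg (x : ℝ) (hx : 0 ≤ x) : Real.exp (-x) ≤ 1 - x + x ^ 2 / 2 := by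
  have hmono : Monotone (fun t : ℝ => Real.exp t * (1 - t + t ^ 2 / 2)) := by
    apply monotone_of_hasDerivAt_nonneg (f' := fun t => Real.exp t * (t ^ 2 / 2))
    · intro t
      have h1 : HasDerivAt (fun t : ℝ => 1 - t + t ^ 2 / 2) (-1 + t) t := by
        have := (((hasDerivAt_id t).const_sub 1).add ((hasDerivAt_pow 2 t).div_const 2))
        refine this.congr_deriv ?_
        norm_num
      have := (Real.hasDerivAt_exp t).mul h1
      refine this.congr_deriv ?_
      ring
    · intro t
      have := Real.exp_pos t
      positivity
  have h := hmono hx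
  simp only [Real.exp_zero, one_mul] at h
  norm_num at h
  have hex := Real.exp_pos x
  rw [Real.exp_neg, show (Real.exp x)⁻¹ = 1 / Real.exp x from (one_div _).symm,
    div_le_iff₀ hex]
  nlinarith
/-- `t - t²/2 ≤ log (1+t)` for `t ≥ 0`. -/
lemma swor_aux_log_one_add (t : ℝ) (ht : 0 ≤ t) : t - t ^ 2 / 2 ≤ Real.log (1 + t) := by
  have hmono : Monotone (fun s : ℝ => (1 + s) * Real.exp (s ^ 2 / 2 - s)) := by
    apply monotone_of_hasDerivAt_nonneg
      (f' := fun s => Real.exp (s ^ 2 / 2 - s) * s ^ 2)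
    · intro s
      have h1 : HasDerivAt (fun s : ℝ => s ^ 2 / 2 - s) (s - 1) s := by
        have := ((hasDerivAt_pow 2 s).div_const 2).sub (hasDerivAt_id s)
        refine this.congr_deriv ?_
        norm_num
      have h2 := h1.exp
      have h3 : HasDerivAt (fun s : ℝ => 1 + s) 1 s := by
        simpa using (hasDerivAt_id s).const_add 1
      have := h3.mul h2
      refine this.congr_deriv ?_
      ring
    · intro s
      have := Real.exp_pos (s ^ 2 / 2 - s)
      positivity
  have h := hmono ht
  norm_num at h
  -- h : 1 ≤ (1 + t) * Real.exp (t ^ 2 / 2 - t)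
  have h1t : (0 : ℝ) < 1 + t := by linarith
  rw [Real.le_log_iff_exp_le h1t]
  have key : Real.exp (t - t ^ 2 / 2) * Real.exp (t ^ 2 / 2 - t) = 1 := by
    rw [← Real.exp_add]; norm_num
  nlinarith [Real.exp_pos (t - t ^ 2 / 2), Real.exp_pos (t ^ 2 / 2 - t)]

/-- `x + x²/2 + x³/3 ≤ -log (1-x)` for `0 ≤ x < 1`. -/
lemma swor_aux_log_one_sub (x : ℝ) (hx0 : 0 ≤ x) (hx1 : x < 1) :
    x + x ^ 2 / 2 + x ^ 3 / 3 ≤ -Real.log (1 - x) := by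
  have hanti : AntitoneOn
      (fun s : ℝ => Real.exp (s + s ^ 2 / 2 + s ^ 3 / 3) * (1 - s)) (Set.Icc 0 x) := by
    apply antitoneOn_of_hasDerivWithinAt_nonpos (convex_Icc 0 x)
      (f' := fun s => Real.exp (s + s ^ 2 / 2 + s ^ 3 / 3) * (-(s ^ 3)))
    · exact Continuous.continuousOn (by continuity)
    · intro s hs
      apply HasDerivAt.hasDerivWithinAt
      have h1 : HasDerivAt (fun s : ℝ => s + s ^ 2 / 2 + s ^ 3 / 3) (1 + s + s ^ 2) s := by
        have := ((hasDerivAt_id s).add ((hasDerivAt_pow 2 s).div_const 2)).add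
          ((hasDerivAt_pow 3 s).div_const 3)
        refine this.congr_deriv ?_
        norm_num
      have h2 := h1.exp
      have h3 : HasDerivAt (fun s : ℝ => 1 - s) (-1) s := by
        simpa using (hasDerivAt_id s).const_sub 1
      have := h2.mul h3
      refine this.congr_deriv ?_
      ring
    · intro s hs
      rw [interior_Icc] at hs
      have hs0 : 0 < s := hs.1
      exact mul_nonpos_of_nonneg_of_nonpos
        (Real.exp_pos _).le (neg_nonpos.mpr (pow_nonneg hs0.le 3))
  have h := hanti (Set.left_mem_Icc.mpr hx0) (Set.mem_Icc.mpr ⟨hx0, le_refl x⟩) hx0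
  norm_num at h
  -- h : exp (x + x^2/2 + x^3/3) * (1 - x) ≤ 1
  have h1x : (0 : ℝ) < 1 - x := by linarith
  have hle : Real.exp (x + x ^ 2 / 2 + x ^ 3 / 3) ≤ (1 - x)⁻¹ := by
    rw [show (1 - x)⁻¹ = 1 / (1 - x) from (one_div _).symm, le_div_iff₀ h1x]
    linarith
  have := (Real.le_log_iff_exp_le (by positivity : (0:ℝ) < (1 - x)⁻¹)).mpr hle
  rwa [Real.log_inv] at this

/-- For `0 ≤ z < 1`: `exp(z e^{1-z}) ≤ 1 + e z/(1-z)`. -/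
theorem swor_ineq (z : ℝ) (hz0 : 0 ≤ z) (hz1 : z < 1) :
    Real.exp (z * Real.exp (1 - z)) ≤ 1 + Real.exp 1 * z / (1 - z) := by
  set e := Real.exp 1 with he
  have he1 : (2.7182818283 : ℝ) < e := Real.exp_one_gt_d9
  have he2 : e < 2.7182818286 := Real.exp_one_lt_d9
  have h1z : (0 : ℝ) < 1 - z := by linarith
  have hM : (0 : ℝ) < 1 - z + e * z := by nlinarith
  have hrhs : 1 + e * z / (1 - z) = (1 - z + e * z) / (1 - z) := by
    field_simp
  rw [hrhs, show (1 - z + e * z) / (1 - z)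
      = Real.exp (Real.log ((1 - z + e * z) / (1 - z))) from
      (Real.exp_log (by positivity)).symm]
  apply Real.exp_le_exp.mpr
  rw [Real.log_div (by positivity) (by positivity)]
  -- bound the LHS
  have hA : z * Real.exp (1 - z) ≤ e * z * (1 - z + z ^ 2 / 2) := by
    have : Real.exp (1 - z) = e * Real.exp (-z) := by
      rw [he, ← Real.exp_add]; ring_nf
    rw [this]
    have hexpneg := swor_aux_exp_neg z hz0
    have hepos : (0 : ℝ) < e := Real.exp_pos 1
    calc z * (e * Real.exp (-z)) = e * z * Real.exp (-z) := by ring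
      _ ≤ e * z * (1 - z + z ^ 2 / 2) := by
          apply mul_le_mul_of_nonneg_left hexpneg (by positivity)
  -- bound the two logs
  have hB : (e - 1) * z - ((e - 1) * z) ^ 2 / 2 ≤ Real.log (1 - z + e * z) := by
    have := swor_aux_log_one_add ((e - 1) * z) (by nlinarith)
    have heq : 1 + (e - 1) * z = 1 - z + e * z := by ring
    rwa [heq] at this
  have hC : z + z ^ 2 / 2 + z ^ 3 / 3 ≤ -Real.log (1 - z) :=
    swor_aux_log_one_sub z hz0 hz1
  have hpoly : e * z * (1 - z + z ^ 2 / 2)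
      ≤ ((e - 1) * z - ((e - 1) * z) ^ 2 / 2) + (z + z ^ 2 / 2 + z ^ 3 / 3) := by
    nlinarith [sq_nonneg z, mul_nonneg (mul_nonneg hz0 hz0) h1z.le]
  linarith
end

section
/- For all real numbers y, z with 0 ≤ z < 1, y > 0, and y + z > 1: exp(z·e^{y}) ≤ 1 + (z/(1−z))·exp(e^{y+z−1}). -/
/-- Cubic lower bound for `exp (-w)` on `[0, 1/2]`. -/
private lemma exp_cubic_nonneg {w : ℝ} (h0 : 0 ≤ w) (h1 : w ≤ 1/2) :
    1 - w + w^2/2 - w^3/6 ≤ Real.exp (-w) := by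
  have hb := Real.exp_bound' h0 (by linarith) (n := 4) (by norm_num)
  have hsum : (∑ m ∈ Finset.range 4, w ^ m / m.factorial) = 1 + w + w^2/2 + w^3/6 := by
    norm_num [Finset.sum_range_succ, Nat.factorial]
  rw [hsum] at hb
  have hb' : Real.exp w ≤ 1 + w + w^2/2 + w^3/6 + w^4 * 5/96 := by
    have : w ^ 4 * (4 + 1) / ((4:ℕ).factorial * 4) = w^4*5/96 := by norm_num [Nat.factorial]
    calc Real.exp w ≤ 1 + w + w^2/2 + w^3/6 + w ^ 4 * (4 + 1) / ((4:ℕ).factorial * 4) := by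
          simpa using hb
      _ = 1 + w + w^2/2 + w^3/6 + w^4*5/96 := by rw [this]
  have hpolypos : 0 ≤ 1 - w + w^2/2 - w^3/6 := by nlinarith
  have key : (1 - w + w^2/2 - w^3/6) * Real.exp w ≤ 1 := by
    have h2 : (1 - w + w^2/2 - w^3/6) * Real.exp w
        ≤ (1 - w + w^2/2 - w^3/6) * (1 + w + w^2/2 + w^3/6 + w^4*5/96) :=
      mul_le_mul_of_nonneg_left hb' hpolypos
    nlinarith [pow_nonneg h0 4, pow_nonneg h0 5, pow_nonneg h0 6, pow_nonneg h0 7]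
  rw [Real.exp_neg, inv_eq_one_div, le_div_iff₀ (Real.exp_pos w)]
  exact key

/-- Key scalar inequality: `1 + (e-2) v + v² ≤ exp v` on `[0,1]`. -/
private lemma expq {v : ℝ} (h0 : 0 ≤ v) (h1 : v ≤ 1) :
    1 + (Real.exp 1 - 2) * v + v^2 ≤ Real.exp v := by
  have he1 : (2.7182818283:ℝ) < Real.exp 1 := Real.exp_one_gt_d9
  have he2 : Real.exp 1 < 2.7182818286 := Real.exp_one_lt_d9
  rcases le_or_gt v (1/2) with hv | hv
  · have hs := Real.sum_le_exp_of_nonneg h0 4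
    have hsum : (∑ m ∈ Finset.range 4, v ^ m / m.factorial) = 1 + v + v^2/2 + v^3/6 := by
      norm_num [Finset.sum_range_succ, Nat.factorial]
    rw [hsum] at hs
    nlinarith [sq_nonneg v, pow_nonneg h0 3]
  · have hc := exp_cubic_nonneg (w := 1 - v) (by linarith) (by linarith)
    have hrw : Real.exp v = Real.exp 1 * Real.exp (-(1-v)) := by
      rw [← Real.exp_add]
      ring_nf
    rw [hrw]
    have hE : (0:ℝ) < Real.exp 1 := Real.exp_pos 1
    have h2 := mul_le_mul_of_nonneg_left hc hE.le
    nlinarith [sq_nonneg (1-v), mul_nonneg (sq_nonneg (1-v)) (by linarith : (0:ℝ) ≤ 1/2 - (1-v))]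

/-- Subcase 2 inequality: for `0 ≤ z < 1`, `y > 0`, `y + z > 1`:
`exp(z e^y) ≤ 1 + (z/(1-z)) exp(e^{y+z-1})`. -/
theorem subcase2 (y z : ℝ) (hz0 : 0 ≤ z) (hz1 : z < 1) (hy : 0 < y) (hyz : 1 < y + z) :
    Real.exp (z * Real.exp y) ≤ 1 + (z / (1 - z)) * Real.exp (Real.exp (y + z - 1)) := by
  rcases eq_or_lt_of_le hz0 with hz0' | hz0'
  · simp [← hz0']
  set E := Real.exp (y + z - 1) with hE
  have hEpos : 0 < E := Real.exp_pos _
  set f : ℝ → ℝ := fun t => t * Real.exp E - (1 - t) * (Real.exp (t * Real.exp (1 - t) * E) - 1)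
    with hf_def
  -- derivative of the auxiliary function
  have hA : ∀ t : ℝ, HasDerivAt (fun s : ℝ => s * Real.exp (1 - s) * E)
      ((1 - t) * Real.exp (1 - t) * E) t := by
    intro t
    have h1 : HasDerivAt (fun s : ℝ => 1 - s) (-1) t := by
      simpa using (hasDerivAt_id t).const_sub (1:ℝ)
    have h2 : HasDerivAt (fun s : ℝ => Real.exp (1 - s)) (Real.exp (1 - t) * (-1)) t := h1.exp
    have h3 := (hasDerivAt_id t).mul h2
    have h4 : HasDerivAt (fun s : ℝ => s * Real.exp (1 - s) * E)
        ((1 * Real.exp (1 - t) + t * (Real.exp (1 - t) * -1)) * E) t := h3.mul_const E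
    convert h4 using 1
    try simp only [id_eq]
    ring
  have hf : ∀ t : ℝ, HasDerivAt f
      (Real.exp E + (Real.exp (t * Real.exp (1 - t) * E) - 1)
        - (1 - t)^2 * Real.exp (1 - t) * E * Real.exp (t * Real.exp (1 - t) * E)) t := by
    intro t
    have h1 : HasDerivAt (fun s : ℝ => s * Real.exp E) (Real.exp E) t := by
      simpa using (hasDerivAt_id t).mul_const (Real.exp E)
    have h2 := (hA t).exp
    have h2' := h2.sub_const 1
    have h3 : HasDerivAt (fun s : ℝ => 1 - s) (-1) t := by
      simpa using (hasDerivAt_id t).const_sub (1:ℝ)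
    have h4 := h3.mul h2'
    have h5 : HasDerivAt f (Real.exp E - (-1 * (Real.exp (t * Real.exp (1 - t) * E) - 1) +
        (1 - t) * (Real.exp (t * Real.exp (1 - t) * E) * ((1 - t) * Real.exp (1 - t) * E)))) t :=
      h1.sub h4
    convert h5 using 1
    try simp only [id_eq]
    ring
  -- f is monotone on [0, z]
  have hmono : MonotoneOn f (Set.Icc 0 z) := by
    apply monotoneOn_of_deriv_nonneg (convex_Icc 0 z)
    · exact fun t _ => (hf t).continuousAt.continuousWithinAt
    · exact fun t _ => (hf t).differentiableAt.differentiableWithinAt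
    · intro t ht
      rw [interior_Icc] at ht
      obtain ⟨ht0, htz⟩ := ht
      rw [(hf t).deriv]
      have ht1 : t < 1 := lt_trans htz hz1
      set A := t * Real.exp (1 - t) * E with hAdef
      have hA0 : 0 ≤ A := by positivity
      have hexpA1 : 1 ≤ Real.exp A := Real.one_le_exp hA0
      -- t * exp(1-t) ≤ 1
      have htexp : t * Real.exp (1 - t) ≤ 1 := by
        have h := Real.add_one_le_exp (t - 1)
        have := mul_le_mul_of_nonneg_right (by linarith : t ≤ Real.exp (t - 1))
          (Real.exp_pos (1 - t)).le
        calc t * Real.exp (1 - t) ≤ Real.exp (t - 1) * Real.exp (1 - t) := this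
          _ = 1 := by rw [← Real.exp_add]; norm_num
      -- e * x ≤ exp x
      have hex : ∀ x : ℝ, Real.exp 1 * x ≤ Real.exp x := by
        intro x
        have h := Real.add_one_le_exp (x - 1)
        calc Real.exp 1 * x ≤ Real.exp 1 * Real.exp (x - 1) := by
              nlinarith [Real.exp_pos 1]
          _ = Real.exp x := by rw [← Real.exp_add]; ring_nf
      -- q inequality
      have hq : (1 - t)^2 * Real.exp (1 - t) ≤ Real.exp 1 * (1 - t * Real.exp (1 - t)) := by
        have h := expq (v := t) ht0.le ht1.le
        have hexp1 : Real.exp 1 = Real.exp t * Real.exp (1 - t) := by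
          rw [← Real.exp_add]; ring_nf
        nlinarith [mul_le_mul_of_nonneg_right h (Real.exp_pos (1 - t)).le]
      -- key: (1-t)^2 exp(1-t) E exp A ≤ exp E
      have hEeq : Real.exp E = Real.exp A * Real.exp (E * (1 - t * Real.exp (1 - t))) := by
        rw [← Real.exp_add]
        congr 1
        rw [hAdef]; ring
      have hkey : (1 - t)^2 * Real.exp (1 - t) * E * Real.exp A ≤ Real.exp E := by
        rw [hEeq]
        have hs1 : (1 - t)^2 * Real.exp (1 - t) * E
            ≤ Real.exp 1 * (1 - t * Real.exp (1 - t)) * E :=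
          mul_le_mul_of_nonneg_right hq hEpos.le
        have hs2 : Real.exp 1 * (1 - t * Real.exp (1 - t)) * E
            ≤ Real.exp (E * (1 - t * Real.exp (1 - t))) := by
          have := hex (E * (1 - t * Real.exp (1 - t)))
          calc Real.exp 1 * (1 - t * Real.exp (1 - t)) * E
              = Real.exp 1 * (E * (1 - t * Real.exp (1 - t))) := by ring
            _ ≤ Real.exp (E * (1 - t * Real.exp (1 - t))) := this
        calc (1 - t)^2 * Real.exp (1 - t) * E * Real.exp A
            ≤ Real.exp (E * (1 - t * Real.exp (1 - t))) * Real.exp A := by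
              apply mul_le_mul_of_nonneg_right _ (Real.exp_pos A).le
              exact le_trans hs1 hs2
          _ = Real.exp A * Real.exp (E * (1 - t * Real.exp (1 - t))) := by ring
      linarith
  -- conclude
  have h0z : f 0 ≤ f z :=
    hmono (Set.mem_Icc.mpr ⟨le_refl 0, hz0⟩) (Set.mem_Icc.mpr ⟨hz0, le_refl z⟩) hz0
  have hf0 : f 0 = 0 := by simp [hf_def]
  have hzE : z * Real.exp (1 - z) * E = z * Real.exp y := by
    rw [hE, mul_assoc, ← Real.exp_add]
    ring_nf
  have hfz : (1 - z) * (Real.exp (z * Real.exp y) - 1) ≤ z * Real.exp E := by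
    have : f z = z * Real.exp E - (1 - z) * (Real.exp (z * Real.exp y) - 1) := by
      rw [hf_def]
      simp only
      rw [hzE]
    linarith [hf0.symm.trans_le h0z, this ▸ (hf0 ▸ h0z)]
  have h1z : 0 < 1 - z := by linarith
  rw [div_mul_eq_mul_div, ← sub_le_iff_le_add', le_div_iff₀ h1z]
  nlinarith [hfz]
end

section
/- For every real number α with 0 ≤ α ≤ 1: (e − 2α)^α · (1 − α)^{1−α} ≤ 1, where e denotes Euler's number (with the convention 0^0 = 1). -/
open Real Set

private lemma log_one_sub_le_quad (s : ℝ) (h0 : 0 ≤ s) (h1 : s < 1) :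
    Real.log (1 - s) ≤ -s - s ^ 2 / 2 := by
  set F : ℝ → ℝ := fun t => Real.log (1 - t) + t + t ^ 2 / 2 with hF
  have hd : ∀ t ∈ Set.Ioo (0:ℝ) 1, HasDerivAt F (-(1 - t)⁻¹ + (1 + t)) t := by
    intro t ht
    have h1t : (1 : ℝ) - t ≠ 0 := by simp only [Set.mem_Ioo] at ht; intro h; linarith [ht.2]
    have hlog : HasDerivAt (fun t : ℝ => Real.log (1 - t)) ((1 - t)⁻¹ * (-1)) t :=
      (Real.hasDerivAt_log h1t).comp t (((hasDerivAt_id t).const_sub 1))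
    have hpoly : HasDerivAt (fun t : ℝ => t + t ^ 2 / 2) (1 + t) t := by
      have := ((hasDerivAt_id t).add (((hasDerivAt_pow 2 t).div_const 2)))
      exact this.congr_deriv (by norm_num)
    have := hlog.add hpoly
    have hFeq : F = (fun t : ℝ => Real.log (1 - t)) + fun t : ℝ => t + t ^ 2 / 2 := by
      ext x; simp [hF]; ring
    rw [hFeq]
    exact this.congr_deriv (by ring : (1 - t)⁻¹ * -1 + (1 + t) = -(1 - t)⁻¹ + (1 + t))
  have hmono : AntitoneOn F (Set.Ico (0:ℝ) 1) := by
    apply antitoneOn_of_deriv_nonpos (convex_Ico 0 1)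
    · apply ContinuousOn.add
      apply ContinuousOn.add
      · apply Real.continuousOn_log.comp (continuous_const.sub continuous_id).continuousOn
        intro x hx
        simp only [Set.mem_Ico] at hx
        simp only [Set.mem_compl_iff, Set.mem_singleton_iff]
        intro h; simp only [Pi.sub_apply, id_eq] at h; linarith [hx.2]
      · exact continuousOn_id
      · exact (continuous_pow 2).continuousOn.div_const 2
    · rw [interior_Ico]
      intro t ht
      exact ((hd t ht).differentiableAt).differentiableWithinAt
    · rw [interior_Ico]
      intro t ht
      rw [(hd t ht).deriv]
      have ht' := ht
      simp only [Set.mem_Ioo] at ht'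
      have h1t : (0:ℝ) < 1 - t := by linarith [ht'.2]
      rw [← sub_nonpos]
      have : -(1 - t)⁻¹ + (1 + t) = -(t ^ 2) / (1 - t) := by
        field_simp
        ring
      rw [this]
      have := div_nonpos_of_nonpos_of_nonneg (neg_nonpos.mpr (sq_nonneg t)) h1t.le
      linarith
  have h0mem : (0:ℝ) ∈ Set.Ico (0:ℝ) 1 := by constructor <;> norm_num
  have hsmem : s ∈ Set.Ico (0:ℝ) 1 := ⟨h0, h1⟩
  have := hmono h0mem hsmem h0
  simp only [hF] at this
  simp only [Real.log_one, sub_zero] at this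
  nlinarith [this]

/-- For `0 ≤ α ≤ 1`: `(e - 2α)^α (1-α)^{1-α} ≤ 1` (real powers, with `0^0 = 1`). -/
theorem young_ineq (a : ℝ) (ha0 : 0 ≤ a) (ha1 : a ≤ 1) :
    (Real.exp 1 - 2 * a) ^ a * (1 - a) ^ (1 - a) ≤ 1 := by
  have hE1 : Real.exp 1 < 2.7182818286 := Real.exp_one_lt_d9
  have hE2 : (2.7182818283 : ℝ) < Real.exp 1 := Real.exp_one_gt_d9
  set E := Real.exp 1 with hEdef
  have hEpos : (0:ℝ) < E := by linarith
  have hbase : (0:ℝ) < E - 2 * a := by nlinarith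
  rcases eq_or_lt_of_le ha1 with h1 | h1
  · subst h1
    rw [sub_self]
    rw [Real.rpow_zero, Real.rpow_one, mul_one]
    linarith
  · -- a < 1
    have h1a : (0:ℝ) < 1 - a := by linarith
    rw [Real.rpow_def_of_pos hbase, Real.rpow_def_of_pos h1a, ← Real.exp_add]
    rw [Real.exp_le_one_iff]
    -- log bounds
    have hs1 : (0:ℝ) ≤ 2 * a / E := by positivity
    have hs1' : 2 * a / E < 1 := by
      rw [div_lt_one hEpos]; nlinarith
    have hlog1 : Real.log (E - 2 * a) = 1 + Real.log (1 - 2 * a / E) := by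
      have : E - 2 * a = E * (1 - 2 * a / E) := by field_simp
      rw [this, Real.log_mul (ne_of_gt hEpos) (by nlinarith [hs1'] : (1:ℝ) - 2 * a / E ≠ 0)]
      rw [hEdef, Real.log_exp]
    have hb1 := log_one_sub_le_quad (2 * a / E) hs1 hs1'
    have hb2 := log_one_sub_le_quad a ha0 h1
    -- combine
    have key1 : Real.log (E - 2 * a) * a ≤ a * (1 - 2 * a / E - (2 * a / E) ^ 2 / 2) := by
      rw [hlog1]
      have : 1 + Real.log (1 - 2 * a / E) ≤ 1 - 2 * a / E - (2 * a / E) ^ 2 / 2 := by linarith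
      nlinarith [this]
    have key2 : Real.log (1 - a) * (1 - a) ≤ (1 - a) * (-a - a ^ 2 / 2) := by
      nlinarith [hb2]
    have hEsq : E ^ 2 < 2 * E + 2 := by nlinarith
    calc Real.log (E - 2 * a) * a + Real.log (1 - a) * (1 - a)
        ≤ a * (1 - 2 * a / E - (2 * a / E) ^ 2 / 2) + (1 - a) * (-a - a ^ 2 / 2) := by linarith
      _ ≤ 0 := by
          have hE0 : E ≠ 0 := ne_of_gt hEpos
          have h1 : a * (1 - 2 * a / E - (2 * a / E) ^ 2 / 2) + (1 - a) * (-a - a ^ 2 / 2)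
              = (a ^ 2 * (E ^ 2 - 4 * E + a * (E ^ 2 - 4)) ) / (2 * E ^ 2) := by
            field_simp
            ring
          rw [h1]
          apply div_nonpos_of_nonpos_of_nonneg
          · have h2 : (0:ℝ) ≤ E ^ 2 - 4 := by nlinarith
            nlinarith [hEsq, mul_nonneg (by linarith : (0:ℝ) ≤ 1 - a) h2, sq_nonneg a]
          · positivity
end

section
/- For every real number α with 0 ≤ α ≤ 1: 1 − α + ((e − 2)/e)·α² ≤ e^{−α}, where e denotes Euler's number. -/
/-- For `0 ≤ α ≤ 1`: `1 - α + ((e-2)/e) α² ≤ e^{-α}`. -/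
theorem final_ineq (a : ℝ) (ha0 : 0 ≤ a) (ha1 : a ≤ 1) :
    1 - a + ((Real.exp 1 - 2) / Real.exp 1) * a ^ 2 ≤ Real.exp (-a) := by
  have hax : |(-a)| ≤ 1 := by rw [abs_neg, abs_of_nonneg ha0]; exact ha1
  have hb := Real.exp_bound hax (n := 3) (by norm_num)
  have hsum : ∑ m ∈ Finset.range 3, (-a) ^ m / m.factorial = 1 - a + a ^ 2 / 2 := by
    simp [Finset.sum_range_succ]
    ring
  rw [hsum, abs_neg, abs_of_nonneg ha0] at hb
  have hb' : 1 - a + a ^ 2 / 2 - a ^ 3 * (4 / (6 * 3)) ≤ Real.exp (-a) := by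
    have := (abs_sub_le_iff.1 hb).2
    have h3 : ((Nat.succ 3 : ℕ) : ℝ) / ((Nat.factorial 3 : ℕ) * ((3:ℕ):ℝ)) = 4 / (6 * 3) := by
      norm_num [Nat.factorial]
    rw [h3] at this
    linarith
  have ha3 : a ^ 3 ≤ a ^ 2 := pow_le_pow_of_le_one ha0 ha1 (by norm_num)
  have he : (0:ℝ) < Real.exp 1 := Real.exp_pos 1
  have he3 : Real.exp 1 ≤ 36 / 13 := by
    have := Real.exp_one_lt_d9
    linarith
  have hc : (Real.exp 1 - 2) / Real.exp 1 ≤ 5 / 18 := by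
    rw [div_le_iff₀ he]
    nlinarith
  have ha2 : (0:ℝ) ≤ a ^ 2 := sq_nonneg a
  nlinarith [mul_le_mul_of_nonneg_right hc ha2]
end

section
/- Let q : [0,∞) → ℝ be defined by q(y) = e^{−y} for 0 ≤ y ≤ 1 and q(y) = e^{−e^{y−1}} for y > 1. Then q(0) = 1, q takes values in [0,1], q is nonincreasing, q is convex, and q is differentiable on (0,∞); in particular q is differentiable at y = 1 with q'(1) = −1/e. -/
/-- Candidate derivative of `q`. -/
noncomputable def qD (y : ℝ) : ℝ :=
  if y ≤ 1 then -Real.exp (-y) else -(Real.exp (y - 1) * Real.exp (-Real.exp (y - 1)))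

lemma aux_mono {t s : ℝ} (ht : 1 ≤ t) (hts : t ≤ s) :
    s * Real.exp (-s) ≤ t * Real.exp (-t) := by
  rw [Real.exp_neg, Real.exp_neg, ← div_eq_mul_inv, ← div_eq_mul_inv,
    div_le_div_iff₀ (Real.exp_pos s) (Real.exp_pos t)]
  have h1 : Real.exp s = Real.exp t * Real.exp (s - t) := by
    rw [← Real.exp_add]; ring_nf
  have h2 : 1 + (s - t) ≤ Real.exp (s - t) := by linarith [Real.add_one_le_exp (s - t)]
  calc s * Real.exp t ≤ (t * (1 + (s - t))) * Real.exp t := by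
        nlinarith [Real.exp_pos t, mul_nonneg (sub_nonneg.mpr ht) (sub_nonneg.mpr hts)]
    _ ≤ (t * Real.exp (s - t)) * Real.exp t := by
        have ht0 : 0 ≤ t := le_trans zero_le_one ht
        nlinarith [mul_le_mul_of_nonneg_left h2 ht0, Real.exp_pos t]
    _ = t * Real.exp s := by rw [h1]; ring

lemma hasDerivAt_q (y : ℝ) : HasDerivAt q (qD y) y := by
  have hf1 : ∀ x : ℝ, HasDerivAt (fun z => Real.exp (-z)) (-Real.exp (-x)) x := by
    intro x
    simpa using ((hasDerivAt_id x).neg).exp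
  have hf2 : ∀ x : ℝ, HasDerivAt (fun z => Real.exp (-Real.exp (z - 1)))
      (-(Real.exp (x - 1) * Real.exp (-Real.exp (x - 1)))) x := by
    intro x
    have h : HasDerivAt (fun z : ℝ => -Real.exp (z - 1)) (-Real.exp (x - 1)) x := by
      simpa using (((hasDerivAt_id x).sub_const 1).exp).fun_neg
    simpa [mul_comm] using h.exp
  rcases lt_trichotomy y 1 with hy | hy | hy
  · have hev : q =ᶠ[nhds y] fun z => Real.exp (-z) := by
      filter_upwards [eventually_lt_nhds hy] with z hz
      simp [q, hz.le]
    rw [qD, if_pos hy.le]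
    exact (hf1 y).congr_of_eventuallyEq hev
  · subst hy
    have hval : q 1 = Real.exp (-1) := by simp [q]
    have hL : HasDerivWithinAt q (-Real.exp (-1)) (Set.Iic 1) 1 := by
      refine ((hf1 1).hasDerivWithinAt).congr ?_ (by simpa using hval)
      intro z hz
      simp [q, (Set.mem_Iic.mp hz)]
    have hR : HasDerivWithinAt q (-Real.exp (-1)) (Set.Ici 1) 1 := by
      have : HasDerivWithinAt (fun z => Real.exp (-Real.exp (z - 1)))
          (-Real.exp (-1)) (Set.Ici 1) 1 := by
        have := (hf2 1).hasDerivWithinAt (s := Set.Ici 1)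
        simpa using this
      refine this.congr ?_ (by simp [q])
      intro z hz
      rcases eq_or_lt_of_le (Set.mem_Ici.mp hz) with h | h
      · simp [q, ← h]
      · simp [q, not_le.mpr h]
    have := hL.union hR
    rw [Set.Iic_union_Ici] at this
    rw [qD, if_pos le_rfl]
    rw [hasDerivWithinAt_univ] at this
    exact this
  · have hev : q =ᶠ[nhds y] fun z => Real.exp (-Real.exp (z - 1)) := by
      filter_upwards [eventually_gt_nhds hy] with z hz
      simp [q, not_le.mpr hz]
    rw [qD, if_neg (not_le.mpr hy)]
    exact (hf2 y).congr_of_eventuallyEq hev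

lemma qD_mono : Monotone qD := by
  intro x y hxy
  unfold qD
  by_cases hx : x ≤ 1
  · by_cases hy : y ≤ 1
    · simp only [if_pos hx, if_pos hy, neg_le_neg_iff]
      exact Real.exp_le_exp.mpr (by linarith)
    · push_neg at hy
      simp only [if_pos hx, if_neg (not_le.mpr hy)]
      have h1 : -Real.exp (-x) ≤ -Real.exp (-(1:ℝ)) := by
        simp only [neg_le_neg_iff]
        exact Real.exp_le_exp.mpr (by linarith)
      refine h1.trans ?_
      have hs : (1:ℝ) ≤ Real.exp (y - 1) := Real.one_le_exp (by linarith)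
      have := aux_mono le_rfl hs
      simp only [one_mul] at this
      simpa using neg_le_neg this
  · push_neg at hx
    have hy : ¬ y ≤ 1 := not_le.mpr (lt_of_lt_of_le hx hxy)
    simp only [if_neg (not_le.mpr hx), if_neg hy]
    have ht : (1:ℝ) ≤ Real.exp (x - 1) := Real.one_le_exp (by linarith)
    have hts : Real.exp (x - 1) ≤ Real.exp (y - 1) := Real.exp_le_exp.mpr (by linarith)
    exact neg_le_neg (aux_mono ht hts)

lemma deriv_q_eq : deriv q = qD := funext fun y => (hasDerivAt_q y).deriv

/-- Regularity of `q`: `q 0 = 1`, `q` takes values in `[0,1]`, `q` is nonincreasing and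
convex on `[0,∞)`, differentiable on `(0,∞)`, and `q'(1) = -1/e`. -/
theorem q_regularity :
    q 0 = 1 ∧
    (∀ y, 0 ≤ y → q y ∈ Set.Icc (0:ℝ) 1) ∧
    AntitoneOn q (Set.Ici 0) ∧
    ConvexOn ℝ (Set.Ici 0) q ∧
    (∀ y ∈ Set.Ioi (0:ℝ), DifferentiableAt ℝ q y) ∧
    HasDerivAt q (-(1 / Real.exp 1)) 1 := by
  have hdiff : Differentiable ℝ q := fun y => (hasDerivAt_q y).differentiableAt
  have hcont : Continuous q := hdiff.continuous
  refine ⟨?_, ?_, ?_, ?_, ?_, ?_⟩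
  · simp [q]
  · intro y hy
    constructor
    · unfold q; split <;> positivity
    · unfold q
      split
      · exact Real.exp_le_one_iff.mpr (by linarith)
      · exact Real.exp_le_one_iff.mpr (neg_nonpos.mpr (Real.exp_pos _).le)
  · refine antitoneOn_of_deriv_nonpos (convex_Ici 0) hcont.continuousOn
      (hdiff.differentiableOn) ?_
    intro x _
    rw [deriv_q_eq]
    unfold qD
    split
    · simp [(Real.exp_pos _).le]
    · have := Real.exp_pos (x - 1)
      have := Real.exp_pos (-Real.exp (x - 1))
      nlinarith
  · refine MonotoneOn.convexOn_of_deriv (convex_Ici 0) hcont.continuousOn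
      hdiff.differentiableOn ?_
    rw [deriv_q_eq]
    exact qD_mono.monotoneOn _
  · intro y _
    exact hdiff y
  · have := hasDerivAt_q 1
    simpa [qD, Real.exp_neg, one_div] using this
end

section
/- Let q : [0,∞) → [0,1] be differentiable, convex, and nonincreasing. Then the function b : [0,∞) → ℝ defined by b(y) = −e^{y} · ∫_y^∞ q'(z)·e^{−z} dz is nonincreasing. -/
/-- If `q : [0,∞) → [0,1]` is differentiable (with derivative `q'`), convex and
nonincreasing, then `b(y) = -e^y ∫_y^∞ q'(z) e^{-z} dz` is nonincreasing on `[0,∞)`. -/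
theorem b_antitone (q q' : ℝ → ℝ)
    (hmem : ∀ y, 0 ≤ y → q y ∈ Set.Icc (0:ℝ) 1)
    (hderiv : ∀ y ∈ Set.Ici (0:ℝ), HasDerivAt q (q' y) y)
    (hconv : ConvexOn ℝ (Set.Ici 0) q)
    (hanti : AntitoneOn q (Set.Ici 0)) :
    AntitoneOn (fun y => -Real.exp y * ∫ z in Set.Ioi y, q' z * Real.exp (-z))
      (Set.Ici 0) := by
  -- q' is monotone on [0,∞) by convexity
  have hmono : MonotoneOn q' (Set.Ici (0:ℝ)) := by
    intro x hx y hy hxy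
    rcases eq_or_lt_of_le hxy with rfl | h
    · exact le_rfl
    · exact le_trans (hconv.le_slope_of_hasDerivAt hx hy h (hderiv x hx))
        (hconv.slope_le_of_hasDerivAt hx hy h (hderiv y hy))
  -- q' is nonpositive on [0,∞)
  have hnonpos : ∀ x ∈ Set.Ici (0:ℝ), q' x ≤ 0 := by
    intro x hx
    have hx1 : x + 1 ∈ Set.Ici (0:ℝ) := by
      simp only [Set.mem_Ici] at hx ⊢; linarith
    have h1 : q' x ≤ slope q x (x + 1) :=
      hconv.le_slope_of_hasDerivAt hx hx1 (lt_add_one x) (hderiv x hx)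
    have h2 : slope q x (x + 1) ≤ 0 := by
      have := hanti hx hx1 (by linarith)
      rw [slope_def_field]
      simp only [add_sub_cancel_left, div_one]
      linarith
    linarith
  -- the shifted integrand is integrable on (0,∞)
  have hint : ∀ y : ℝ, 0 ≤ y →
      MeasureTheory.IntegrableOn (fun t => -q' (t + y) * Real.exp (-t))
        (Set.Ioi 0) := by
    intro y hy
    have hmonoy : MonotoneOn (fun t => q' (t + y)) (Set.Ioi (0:ℝ)) := by
      intro a ha b hb hab
      exact hmono (by simp only [Set.mem_Ici]; have := ha.out; linarith)
        (by simp only [Set.mem_Ici]; have := hb.out; linarith) (by linarith)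
    have hmeas : AEMeasurable (fun t => q' (t + y))
        (MeasureTheory.volume.restrict (Set.Ioi (0:ℝ))) :=
      aemeasurable_restrict_of_monotoneOn measurableSet_Ioi hmonoy
    have hsm : MeasureTheory.AEStronglyMeasurable
        (fun t => -q' (t + y) * Real.exp (-t))
        (MeasureTheory.volume.restrict (Set.Ioi (0:ℝ))) := by
      exact ((hmeas.neg.mul (Real.measurable_exp.comp measurable_neg).aemeasurable)).aestronglyMeasurable
    have hbound : MeasureTheory.IntegrableOn
        (fun t : ℝ => -q' 0 * Real.exp (-(1 : ℝ) * t)) (Set.Ioi 0) :=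
      (exp_neg_integrableOn_Ioi 0 one_pos).const_mul _
    refine MeasureTheory.Integrable.mono' hbound hsm ?_
    filter_upwards [MeasureTheory.ae_restrict_mem measurableSet_Ioi] with t ht
    have hty : (0:ℝ) ≤ t + y := by have := ht.out; linarith
    have h1 : q' 0 ≤ q' (t + y) := hmono (le_refl (0:ℝ)) hty hty
    have h2 : q' (t + y) ≤ 0 := hnonpos _ hty
    have hexp : (0:ℝ) < Real.exp (-t) := Real.exp_pos _
    rw [Real.norm_eq_abs, abs_mul, abs_of_nonneg (by linarith : (0:ℝ) ≤ -q' (t + y)),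
      abs_of_pos hexp]
    simp only [neg_one_mul]
    have : -q' (t + y) ≤ -q' 0 := by linarith
    nlinarith
  -- rewrite b via change of variables
  have hrw : ∀ y : ℝ, 0 ≤ y →
      -Real.exp y * ∫ z in Set.Ioi y, q' z * Real.exp (-z)
        = ∫ t in Set.Ioi (0:ℝ), -q' (t + y) * Real.exp (-t) := by
    intro y hy
    have hcov : (∫ z in Set.Ioi y, q' z * Real.exp (-z))
        = ∫ t in Set.Ioi (0:ℝ), q' (t + y) * Real.exp (-(t + y)) := by
      rw [show Set.Ioi (0:ℝ) = (fun x => x + y) ⁻¹' (Set.Ioi y) by ext x; simp]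
      exact ((MeasureTheory.measurePreserving_add_right MeasureTheory.volume y).setIntegral_preimage_emb
        (measurableEmbedding_addRight y) (fun z => q' z * Real.exp (-z)) (Set.Ioi y)).symm
    rw [hcov, ← MeasureTheory.integral_const_mul]
    congr 1
    ext t
    rw [neg_add, Real.exp_add, Real.exp_neg y]
    have := Real.exp_ne_zero y
    field_simp
  -- conclude by monotone comparison of integrands
  intro y₁ hy₁ y₂ hy₂ h12
  simp only
  rw [hrw y₁ hy₁, hrw y₂ hy₂]
  refine MeasureTheory.setIntegral_mono_on (hint y₂ hy₂) (hint y₁ hy₁)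
    measurableSet_Ioi ?_
  intro t ht
  have ht0 := ht.out
  have hy1 := hy₁.out
  have hy2 := hy₂.out
  have h1 : q' (t + y₁) ≤ q' (t + y₂) :=
    hmono (by simp only [Set.mem_Ici]; linarith) (by simp only [Set.mem_Ici]; linarith)
      (by linarith)
  have hexp : (0:ℝ) ≤ Real.exp (-t) := (Real.exp_pos _).le
  nlinarith
end

section
/- Define α, β : [0,1] → ℝ by α(t) = 1 − (1/(e(1−ln 2)))·(2e)^t + ((1+ln 2)/(e²(1−ln 2)))·e^{2t} and β(t) = (1/(2e(1−ln 2)))·(2e)^t − (1/(e²(1−ln 2)))·e^{2t}. Then: (1) α(0) + β(0) = 1 − (1/(1−ln 2))·(1/(2e) − (ln 2)/e²) > 0.706; (2) α(1) = β(1) = 0; (3) α(t) ≥ 0 and β(t) ≥ 0 for all 0 ≤ t ≤ 1; (4) α'(t) = −2(1+ln 2)·β(t) for all 0 ≤ t ≤ 1; (5) β'(t) = α(t) + (3+ln 2)·β(t) − 1 for all 0 ≤ t ≤ 1. -/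
/-- `α(t) = 1 - (1/(e(1-ln 2)))(2e)^t + ((1+ln 2)/(e²(1-ln 2))) e^{2t}`. -/
noncomputable def alphaTH (t : ℝ) : ℝ :=
  1 - (1 / (Real.exp 1 * (1 - Real.log 2))) * (2 * Real.exp 1) ^ t
    + ((1 + Real.log 2) / ((Real.exp 1) ^ 2 * (1 - Real.log 2))) * Real.exp (2 * t)

/-- `β(t) = (1/(2e(1-ln 2)))(2e)^t - (1/(e²(1-ln 2))) e^{2t}`. -/
noncomputable def betaTH (t : ℝ) : ℝ :=
  (1 / (2 * Real.exp 1 * (1 - Real.log 2))) * (2 * Real.exp 1) ^ t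
    - (1 / ((Real.exp 1) ^ 2 * (1 - Real.log 2))) * Real.exp (2 * t)

private lemma hL0 : (0:ℝ) < Real.log 2 := Real.log_pos (by norm_num)

private lemma hD : (0:ℝ) < 1 - Real.log 2 := by
  have := Real.log_two_lt_d9; norm_num at this ⊢; linarith

private lemma hDne : (1:ℝ) - Real.log 2 ≠ 0 := hD.ne'

private lemma hEne : Real.exp 1 ≠ 0 := (Real.exp_pos 1).ne'

private lemma exp_two : Real.exp 2 = Real.exp 1 ^ 2 := by
  rw [show (2:ℝ) = 1 + 1 by norm_num, Real.exp_add]; ring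

private lemma rpow_2e (t : ℝ) :
    (2 * Real.exp 1) ^ t = Real.exp ((Real.log 2 + 1) * t) := by
  rw [Real.rpow_def_of_pos (by positivity),
    Real.log_mul (by norm_num) (Real.exp_ne_zero 1), Real.log_exp]

private lemma alphaTH_eq : alphaTH = fun t =>
    1 - (1 / (Real.exp 1 * (1 - Real.log 2))) * Real.exp ((Real.log 2 + 1) * t)
    + ((1 + Real.log 2) / ((Real.exp 1) ^ 2 * (1 - Real.log 2))) * Real.exp (2 * t) := by
  funext t; rw [alphaTH, rpow_2e]

private lemma betaTH_eq : betaTH = fun t =>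
    (1 / (2 * Real.exp 1 * (1 - Real.log 2))) * Real.exp ((Real.log 2 + 1) * t)
    - (1 / ((Real.exp 1) ^ 2 * (1 - Real.log 2))) * Real.exp (2 * t) := by
  funext t; rw [betaTH, rpow_2e]

private lemma hd_e1 (c t : ℝ) :
    HasDerivAt (fun t : ℝ => Real.exp (c * t)) (c * Real.exp (c * t)) t := by
  simpa [mul_comm] using ((hasDerivAt_id t).const_mul c).exp

private lemma hasDerivAt_alphaTH (t : ℝ) :
    HasDerivAt alphaTH (-2 * (1 + Real.log 2) * betaTH t) t := by
  rw [betaTH, alphaTH_eq]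
  have h := (((hd_e1 (Real.log 2 + 1) t).const_mul
      (1 / (Real.exp 1 * (1 - Real.log 2)))).const_sub 1).add
    ((hd_e1 2 t).const_mul ((1 + Real.log 2) / ((Real.exp 1) ^ 2 * (1 - Real.log 2))))
  refine h.congr_deriv ?_
  rw [rpow_2e]
  have h1 := hEne; have h2 := hDne
  field_simp
  ring

private lemma hasDerivAt_betaTH (t : ℝ) :
    HasDerivAt betaTH (alphaTH t + (3 + Real.log 2) * betaTH t - 1) t := by
  rw [alphaTH, betaTH, betaTH_eq]
  have h := ((hd_e1 (Real.log 2 + 1) t).const_mul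
      (1 / (2 * Real.exp 1 * (1 - Real.log 2)))).sub
    ((hd_e1 2 t).const_mul (1 / ((Real.exp 1) ^ 2 * (1 - Real.log 2))))
  refine h.congr_deriv ?_
  rw [rpow_2e]
  have h1 := hEne; have h2 := hDne
  field_simp
  ring

private lemma betaTH_nonneg : ∀ t ∈ Set.Icc (0:ℝ) 1, 0 ≤ betaTH t := by
  intro t ht
  have hE := Real.exp_pos 1
  have h2 : Real.exp (2 * t) * 2 ≤ Real.exp ((Real.log 2 + 1) * t) * Real.exp 1 := by
    nth_rewrite 2 [show (2:ℝ) = Real.exp (Real.log 2) from (Real.exp_log two_pos).symm]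
    rw [← Real.exp_add, ← Real.exp_add]
    apply Real.exp_le_exp.2
    nlinarith [mul_nonneg (sub_nonneg.2 ht.2) hD.le]
  have heq : betaTH t =
      (Real.exp ((Real.log 2 + 1) * t) * Real.exp 1 - Real.exp (2 * t) * 2) /
        (2 * (Real.exp 1) ^ 2 * (1 - Real.log 2)) := by
    rw [betaTH, rpow_2e]
    have h1 := hEne; have h2 := hDne
    field_simp
  rw [heq]
  exact div_nonneg (by linarith)
    (le_of_lt (by have := hD; positivity))

private lemma alphaTH_one : alphaTH 1 = 0 := by
  rw [alphaTH, Real.rpow_one]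
  have h1 := hEne; have h2 := hDne
  field_simp
  rw [exp_two]
  ring

private lemma alphaTH_nonneg : ∀ t ∈ Set.Icc (0:ℝ) 1, 0 ≤ alphaTH t := by
  have anti : AntitoneOn alphaTH (Set.Icc (0:ℝ) 1) := by
    apply antitoneOn_of_deriv_nonpos (convex_Icc 0 1)
    · exact (continuous_iff_continuousAt.2 fun t =>
        (hasDerivAt_alphaTH t).continuousAt).continuousOn
    · exact fun x _ => (hasDerivAt_alphaTH x).differentiableAt.differentiableWithinAt
    · intro x hx
      rw [interior_Icc] at hx
      rw [(hasDerivAt_alphaTH x).deriv]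
      have hb := betaTH_nonneg x ⟨hx.1.le, hx.2.le⟩
      nlinarith [hL0]
  intro t ht
  have := anti ht (Set.right_mem_Icc.2 zero_le_one) ht.2
  rw [alphaTH_one] at this
  linarith

/-- Properties of the potential-function coefficients `α` and `β` for the
derandomized Top Half Sampling algorithm. -/
theorem alpha_beta_properties :
    (alphaTH 0 + betaTH 0 =
      1 - (1 / (1 - Real.log 2)) * (1 / (2 * Real.exp 1) - Real.log 2 / (Real.exp 1) ^ 2)) ∧
    ((0.706 : ℝ) < alphaTH 0 + betaTH 0) ∧
    alphaTH 1 = 0 ∧ betaTH 1 = 0 ∧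
    (∀ t ∈ Set.Icc (0:ℝ) 1, 0 ≤ alphaTH t) ∧
    (∀ t ∈ Set.Icc (0:ℝ) 1, 0 ≤ betaTH t) ∧
    (∀ t ∈ Set.Icc (0:ℝ) 1, HasDerivAt alphaTH (-2 * (1 + Real.log 2) * betaTH t) t) ∧
    (∀ t ∈ Set.Icc (0:ℝ) 1,
      HasDerivAt betaTH (alphaTH t + (3 + Real.log 2) * betaTH t - 1) t) := by
  have hE := Real.exp_pos 1
  have h1 := hEne; have h2 := hDne
  have hval : alphaTH 0 + betaTH 0 =
      1 - (1 / (1 - Real.log 2)) * (1 / (2 * Real.exp 1) - Real.log 2 / (Real.exp 1) ^ 2) := by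
    rw [alphaTH, betaTH, Real.rpow_zero, mul_zero, Real.exp_zero]
    field_simp
    ring
  refine ⟨hval, ?_, alphaTH_one, ?_, alphaTH_nonneg, betaTH_nonneg,
    fun t _ => hasDerivAt_alphaTH t, fun t _ => hasDerivAt_betaTH t⟩
  · rw [hval]
    have he1 : (2.7182818283 : ℝ) < Real.exp 1 := Real.exp_one_gt_d9
    have he2 : Real.exp 1 < 2.7182818286 := Real.exp_one_lt_d9
    have hl1 : (0.6931471803 : ℝ) < Real.log 2 := Real.log_two_gt_d9
    have hl2 : Real.log 2 < 0.6931471808 := Real.log_two_lt_d9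
    have h3 : (7.3890560880 : ℝ) < (Real.exp 1) ^ 2 := by nlinarith
    have key : 1 / (1 - Real.log 2) * (1 / (2 * Real.exp 1) - Real.log 2 / (Real.exp 1) ^ 2)
        < 0.294 := by
      rw [show 1 / (2 * Real.exp 1) - Real.log 2 / (Real.exp 1) ^ 2
          = (Real.exp 1 - 2 * Real.log 2) / (2 * (Real.exp 1) ^ 2) by
        field_simp]
      rw [div_mul_div_comm, one_mul, div_lt_iff₀ (by have := hD; positivity)]
      have h4 : (0.3068528192 : ℝ) < 1 - Real.log 2 := by linarith
      nlinarith [h3, h4]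
    linarith
  · rw [betaTH, Real.rpow_one]
    field_simp
    rw [exp_two]
    ring
end

section
/- Define p : ℝ → ℝ by p(x) = min{2x, 1}. Let J be a finite set, let ρ_j ≥ 0 for j ∈ J, and let ρ = ∑_{j∈J} ρ_j satisfy 0 ≤ ρ ≤ 1. Then p(ρ) − ρ ≥ (1/2) · ∑_{j∈J} ( p(ρ) − p(ρ − ρ_j) − (2ρ_j − 1)^+ ), where t^+ denotes max{t, 0}. -/
/-- For `p(x) = min(2x, 1)`, nonnegative `ρ_j` with `ρ = ∑ ρ_j ∈ [0,1]`:
`p(ρ) - ρ ≥ (1/2) ∑_j (p(ρ) - p(ρ - ρ_j) - (2ρ_j - 1)⁺)`. -/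
theorem p_property {J : Type*} [Fintype J] (ρj : J → ℝ) (hρj : ∀ j, 0 ≤ ρj j)
    (hsum0 : 0 ≤ ∑ j, ρj j) (hsum1 : ∑ j, ρj j ≤ 1) :
    (1/2) * ∑ j, (min (2 * ∑ k, ρj k) 1 - min (2 * ((∑ k, ρj k) - ρj j)) 1
        - max (2 * ρj j - 1) 0) ≤
      min (2 * ∑ k, ρj k) 1 - ∑ k, ρj k := by
  set s := ∑ k, ρj k with hs
  have hle : ∀ j, ρj j ≤ s := fun j =>
    Finset.single_le_sum (fun i _ => hρj i) (Finset.mem_univ j)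
  by_cases hcase : 2 * s ≤ 1
  · have h1 : min (2 * s) 1 = 2 * s := min_eq_left hcase
    rw [h1]
    have hsum : ∑ j, (2 * s - min (2 * (s - ρj j)) 1 - max (2 * ρj j - 1) 0)
        ≤ ∑ j, (2 * ρj j) := by
      apply Finset.sum_le_sum
      intro j _
      have h2 : min (2 * (s - ρj j)) 1 = 2 * (s - ρj j) := by
        apply min_eq_left; linarith [hρj j]
      rw [h2]
      have := le_max_right (2 * ρj j - 1) 0
      linarith
    have h3 : ∑ j, (2 * ρj j) = 2 * s := by
      rw [hs, Finset.mul_sum]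
    linarith
  · push_neg at hcase
    have h1 : min (2 * s) 1 = 1 := min_eq_right (by linarith)
    rw [h1]
    set f : J → ℝ := fun j => 1 - min (2 * (s - ρj j)) 1 - max (2 * ρj j - 1) 0 with hf
    set S := Finset.univ.filter (fun j => 2 * s - 1 < 2 * ρj j) with hS
    -- terms off S are nonpositive
    have hoff : ∀ j ∈ Finset.univ.filter (fun j => ¬ (2 * s - 1 < 2 * ρj j)), f j ≤ 0 := by
      intro j hj
      simp only [Finset.mem_filter, not_lt] at hj
      have h2 : min (2 * (s - ρj j)) 1 = 1 := min_eq_right (by linarith [hj.2])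
      have := le_max_right (2 * ρj j - 1) 0
      simp only [hf, h2]
      linarith
    have hsplit : ∑ j, f j ≤ ∑ j ∈ S, f j := by
      have := Finset.sum_filter_add_sum_filter_not Finset.univ
        (fun j => 2 * s - 1 < 2 * ρj j) f
      have hneg : ∑ j ∈ Finset.univ.filter (fun j => ¬ (2 * s - 1 < 2 * ρj j)), f j ≤ 0 :=
        Finset.sum_nonpos hoff
      rw [hS]; linarith
    have key : ∑ j ∈ S, f j ≤ 2 - 2 * s := by
      by_cases hcard : S.card ≤ 1
      · -- each term ≤ 2 - 2s, at most one term
        have hterm : ∀ j ∈ S, f j ≤ 2 - 2 * s := by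
          intro j _
          simp only [hf]
          rcases min_cases (2 * (s - ρj j)) 1 with ⟨h, _⟩ | ⟨h, _⟩ <;>
            rcases max_cases (2 * ρj j - 1) 0 with ⟨h2, h2'⟩ | ⟨h2, h2'⟩ <;>
            rw [h, h2] <;> linarith [hρj j, hle j, hsum1]
        calc ∑ j ∈ S, f j ≤ S.card • (2 - 2 * s) := Finset.sum_le_card_nsmul _ _ _ hterm
          _ = (S.card : ℝ) * (2 - 2 * s) := by simp [nsmul_eq_mul]
          _ ≤ 1 * (2 - 2 * s) := by
              apply mul_le_mul_of_nonneg_right _ (by linarith)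
              exact_mod_cast hcard
          _ = 2 - 2 * s := one_mul _
      · push_neg at hcard
        have hterm : ∀ j ∈ S, f j ≤ 2 * ρj j - (2 * s - 1) := by
          intro j hj
          simp only [hS, Finset.mem_filter] at hj
          simp only [hf]
          rcases min_cases (2 * (s - ρj j)) 1 with ⟨h, _⟩ | ⟨h, _⟩ <;>
            rw [h] <;> [skip; skip] <;>
            · have := le_max_right (2 * ρj j - 1) 0
              linarith [hj.2]
        have hsumS : ∑ j ∈ S, (2 * ρj j) ≤ 2 * s := by
          have : ∑ j ∈ S, ρj j ≤ ∑ j, ρj j :=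
            Finset.sum_le_sum_of_subset_of_nonneg (Finset.subset_univ S)
              (fun i _ _ => hρj i)
          calc ∑ j ∈ S, (2 * ρj j) = 2 * ∑ j ∈ S, ρj j := by rw [Finset.mul_sum]
            _ ≤ 2 * s := by linarith
        have hcard2 : (2 : ℝ) ≤ (S.card : ℝ) := by exact_mod_cast hcard
        calc ∑ j ∈ S, f j ≤ ∑ j ∈ S, (2 * ρj j - (2 * s - 1)) := Finset.sum_le_sum hterm
          _ = ∑ j ∈ S, (2 * ρj j) - S.card • (2 * s - 1) := by
              rw [Finset.sum_sub_distrib, Finset.sum_const]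
          _ = ∑ j ∈ S, (2 * ρj j) - (S.card : ℝ) * (2 * s - 1) := by simp [nsmul_eq_mul]
          _ ≤ 2 * s - 2 * (2 * s - 1) := by
              have h01 : (0:ℝ) ≤ 2 * s - 1 := by linarith
              nlinarith
          _ = 2 - 2 * s := by ring
    linarith
end

section
/- Let S be a finite set and let a, b : S → ℝ satisfy a_j ≥ 0 and b_j ≥ 0 for all j ∈ S, ∑_{j∈S} a_j = ∑_{j∈S} b_j = F, and a_j + b_j ≤ F for every j ∈ S. Then there exists f : S × S → ℝ with f(j,k) ≥ 0 for all j,k, f(j,j) = 0 for all j ∈ S, ∑_{k∈S} f(j,k) = a_j for every j ∈ S, and ∑_{j∈S} f(j,k) = b_k for every k ∈ S. -/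
open Finset

private lemma sum_ite_eq_sub {S : Type*} [Fintype S] [DecidableEq S] (g : S → ℝ) (i : S) :
    ∑ k, (if k = i then 0 else g k) = (∑ k, g k) - g i := by
  have h1 : ∑ k, (if k = i then 0 else g k) = ∑ k, (g k - if k = i then g k else 0) := by
    apply Finset.sum_congr rfl
    intro k _
    by_cases h : k = i <;> simp [h]
  rw [h1, Finset.sum_sub_distrib, Finset.sum_ite_eq' Finset.univ i g]
  simp

/-- Tight case: some index has `a i + b i = F`. -/
private lemma transport_tight {S : Type*} [Fintype S] [DecidableEq S] (a b : S → ℝ) (F : ℝ)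
    (ha : ∀ j, 0 ≤ a j) (hb : ∀ j, 0 ≤ b j)
    (hA : ∑ j, a j = F) (hB : ∑ j, b j = F)
    (i : S) (hi : a i + b i = F) :
    ∃ f : S → S → ℝ,
      (∀ j k, 0 ≤ f j k) ∧
      (∀ j, f j j = 0) ∧
      (∀ j, ∑ k, f j k = a j) ∧
      (∀ k, ∑ j, f j k = b k) := by
  refine ⟨fun j k => if j = i then (if k = i then 0 else b k) else (if k = i then a j else 0),
    ?_, ?_, ?_, ?_⟩
  · intro j k
    by_cases h1 : j = i <;> by_cases h2 : k = i <;> simp [h1, h2, ha, hb]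
  · intro j
    by_cases h : j = i <;> simp [h]
  · intro j
    by_cases h : j = i
    · subst h
      have hrw : ∀ k : S, (if j = j then (if k = j then (0:ℝ) else b k)
          else (if k = j then a j else 0)) = (if k = j then 0 else b k) := fun k => by simp
      rw [Finset.sum_congr rfl fun k _ => hrw k, sum_ite_eq_sub b j, hB]
      linarith [hi]
    · simp only [if_neg h]
      rw [Finset.sum_ite_eq' Finset.univ i (fun _ => a j)]
      simp
  · intro k
    by_cases h : k = i
    · subst h
      have : ∀ j : S, (if j = k then (if k = k then (0:ℝ) else b k) else (if k = k then a j else 0))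
          = (if j = k then 0 else a j) := by
        intro j
        by_cases h1 : j = k <;> simp [h1]
      rw [Finset.sum_congr rfl fun j _ => this j, sum_ite_eq_sub a k, hA]
      linarith [hi]
    · have : ∀ j : S, (if j = i then (if k = i then (0:ℝ) else b k) else (if k = i then a j else 0))
          = (if j = i then b k else 0) := by
        intro j
        by_cases h1 : j = i <;> simp [h1, h]
      rw [Finset.sum_congr rfl fun j _ => this j, Finset.sum_ite_eq' Finset.univ i (fun _ => b k)]
      simp

/-- Add `m` units of flow along edge `(j,k)` to a flow for the residual problem. -/
private lemma transport_add_edge {S : Type*} [Fintype S] [DecidableEq S]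
    (a b : S → ℝ) (j k : S) (hjk : j ≠ k) (m : ℝ) (hm : 0 ≤ m)
    (h : ∃ f : S → S → ℝ,
      (∀ p q, 0 ≤ f p q) ∧ (∀ p, f p p = 0) ∧
      (∀ p, ∑ q, f p q = Function.update a j (a j - m) p) ∧
      (∀ q, ∑ p, f p q = Function.update b k (b k - m) q)) :
    ∃ f : S → S → ℝ,
      (∀ p q, 0 ≤ f p q) ∧ (∀ p, f p p = 0) ∧
      (∀ p, ∑ q, f p q = a p) ∧ (∀ q, ∑ p, f p q = b q) := by
  obtain ⟨f, hf1, hf2, hf3, hf4⟩ := h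
  refine ⟨fun p q => f p q + if p = j ∧ q = k then m else 0, ?_, ?_, ?_, ?_⟩
  · intro p q
    have h1 := hf1 p q
    have h2 := hf1 j k
    by_cases h : p = j ∧ q = k <;> simp [h] <;> linarith
  · intro p
    have hcond : ¬(p = j ∧ p = k) := by rintro ⟨rfl, rfl⟩; exact hjk rfl
    simp [hf2 p, hcond]
  · intro p
    rw [Finset.sum_add_distrib, hf3 p]
    have : ∑ q, (if p = j ∧ q = k then m else 0) = if p = j then m else 0 := by
      by_cases hp : p = j
      · simp only [hp, true_and]
        rw [Finset.sum_ite_eq' Finset.univ k (fun _ => m)]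
        simp
      · simp [hp]
    rw [this]
    by_cases hp : p = j
    · subst hp; simp [Function.update_self]
    · simp [Function.update_of_ne hp, hp]
  · intro q
    rw [Finset.sum_add_distrib, hf4 q]
    have : ∑ p, (if p = j ∧ q = k then m else 0) = if q = k then m else 0 := by
      by_cases hq : q = k
      · simp only [hq, and_true]
        rw [Finset.sum_ite_eq' Finset.univ j (fun _ => m)]
        simp
      · simp [hq]
    rw [this]
    by_cases hq : q = k
    · subst hq; simp [Function.update_self]
    · simp [Function.update_of_ne hq, hq]

/-- Feasibility of a transportation problem with forbidden diagonal: if `a, b ≥ 0` have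
equal totals `F` and `a j + b j ≤ F` for all `j`, then there is a nonnegative flow
`f` with zero diagonal whose row sums are `a` and column sums are `b`. -/
theorem transportation_feasibility {S : Type*} [Fintype S] (a b : S → ℝ) (F : ℝ)
    (ha : ∀ j, 0 ≤ a j) (hb : ∀ j, 0 ≤ b j)
    (hA : ∑ j, a j = F) (hB : ∑ j, b j = F)
    (hd : ∀ j, a j + b j ≤ F) :
    ∃ f : S → S → ℝ,
      (∀ j k, 0 ≤ f j k) ∧
      (∀ j, f j j = 0) ∧
      (∀ j, ∑ k, f j k = a j) ∧
      (∀ k, ∑ j, f j k = b k) := by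
  classical
  suffices H : ∀ n : ℕ, ∀ a b : S → ℝ, ∀ F : ℝ, (∀ j, 0 ≤ a j) → (∀ j, 0 ≤ b j) →
      ∑ j, a j = F → ∑ j, b j = F → (∀ j, a j + b j ≤ F) →
      (Finset.univ.filter (fun j => 0 < a j)).card
        + (Finset.univ.filter (fun j => 0 < b j)).card ≤ n →
      ∃ f : S → S → ℝ,
        (∀ j k, 0 ≤ f j k) ∧ (∀ j, f j j = 0) ∧
        (∀ j, ∑ k, f j k = a j) ∧ (∀ k, ∑ j, f j k = b k) by
    exact H _ a b F ha hb hA hB hd le_rfl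
  intro n
  induction n with
  | zero =>
    intro a b F ha hb hA hB hd hcard
    have hea : (Finset.univ.filter (fun j => 0 < a j)) = ∅ := by
      rw [← Finset.card_eq_zero]; omega
    have heb : (Finset.univ.filter (fun j => 0 < b j)) = ∅ := by
      rw [← Finset.card_eq_zero]; omega
    have haz : ∀ j, a j = 0 := by
      intro j
      by_contra h
      have : j ∈ Finset.univ.filter (fun j => 0 < a j) := by
        simp [lt_of_le_of_ne (ha j) (Ne.symm h)]
      rw [hea] at this; simp at this
    have hbz : ∀ j, b j = 0 := by
      intro j
      by_contra h
      have : j ∈ Finset.univ.filter (fun j => 0 < b j) := by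
        simp [lt_of_le_of_ne (hb j) (Ne.symm h)]
      rw [heb] at this; simp at this
    exact ⟨fun _ _ => 0, fun _ _ => le_rfl, fun _ => rfl,
      fun j => by simp [haz j], fun k => by simp [hbz k]⟩
  | succ n ih =>
    intro a b F ha hb hA hB hd hcard
    -- tight case
    by_cases htight : ∃ i, a i + b i = F
    · obtain ⟨i, hi⟩ := htight
      exact transport_tight a b F ha hb hA hB i hi
    push_neg at htight
    have hstrict : ∀ i, a i + b i < F := fun i => lt_of_le_of_ne (hd i) (htight i)
    have hF0 : 0 ≤ F := hA ▸ Finset.sum_nonneg (fun j _ => ha j)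
    by_cases hF : F = 0
    · -- everything zero
      have haz : ∀ j, a j = 0 := by
        intro j
        have h1 := hstrict j
        have := hb j
        have := ha j
        linarith
      have hbz : ∀ j, b j = 0 := by
        intro j
        have h1 := hstrict j
        have := hb j
        have := ha j
        linarith
      exact ⟨fun _ _ => 0, fun _ _ => le_rfl, fun _ => rfl,
        fun j => by simp [haz j], fun k => by simp [hbz k]⟩
    have hFpos : 0 < F := lt_of_le_of_ne hF0 (Ne.symm hF)
    -- pick j with a j > 0
    have hja : ∃ j, 0 < a j := by
      by_contra h
      push_neg at h
      have : ∀ j, a j = 0 := fun j => le_antisymm (h j) (ha j)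
      have : ∑ j, a j = 0 := Finset.sum_eq_zero (fun j _ => this j)
      rw [hA] at this
      exact hF this
    obtain ⟨j, hj⟩ := hja
    -- pick k ≠ j with b k > 0
    have hkb : ∃ k, k ≠ j ∧ 0 < b k := by
      by_contra h
      push_neg at h
      have hbz : ∀ k, k ≠ j → b k = 0 := fun k hk =>
        le_antisymm (h k hk) (hb k)
      have : ∑ k, b k = b j := by
        have hptw : ∀ x : S, b x = if x = j then b j else 0 := by
          intro x
          by_cases hx : x = j
          · simp [hx]
          · simp [hx, hbz x hx]
        rw [Finset.sum_congr rfl fun x _ => hptw x,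
          Finset.sum_ite_eq' Finset.univ j (fun _ => b j)]
        simp
      rw [hB] at this
      have := hstrict j
      linarith
    obtain ⟨k, hkj, hk⟩ := hkb
    -- case split on whether some other index becomes tight first
    by_cases hcase : ∃ i, i ≠ j ∧ i ≠ k ∧ F - a i - b i ≤ min (a j) (b k)
    · -- find the i maximizing a i + b i among i ∉ {j, k}
      obtain ⟨i1, hi1j, hi1k, hi1⟩ := hcase
      have hne : (Finset.univ.filter (fun i => i ≠ j ∧ i ≠ k)).Nonempty :=
        ⟨i1, by simp [hi1j, hi1k]⟩
      obtain ⟨i0, hi0mem, hi0max⟩ := Finset.exists_max_image _ (fun i => a i + b i) hne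
      simp only [Finset.mem_filter, Finset.mem_univ, true_and] at hi0mem
      obtain ⟨hi0j, hi0k⟩ := hi0mem
      have hi0ge : a i1 + b i1 ≤ a i0 + b i0 := hi0max i1 (by simp [hi1j, hi1k])
      set m := F - a i0 - b i0 with hm_def
      have hm_pos : 0 < m := by have := hstrict i0; linarith
      have hm_le : m ≤ min (a j) (b k) := by
        calc m ≤ F - a i1 - b i1 := by linarith
        _ ≤ min (a j) (b k) := hi1
      have hmaj : m ≤ a j := hm_le.trans (min_le_left _ _)
      have hmbk : m ≤ b k := hm_le.trans (min_le_right _ _)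
      refine transport_add_edge a b j k (Ne.symm hkj) m (le_of_lt hm_pos) ?_
      set a' := Function.update a j (a j - m) with ha'_def
      set b' := Function.update b k (b k - m) with hb'_def
      apply transport_tight a' b' (F - m) ?_ ?_ ?_ ?_ i0
      · rw [ha'_def, hb'_def, Function.update_of_ne hi0j, Function.update_of_ne hi0k]
        linarith
      · intro p
        by_cases hp : p = j
        · subst hp; rw [ha'_def, Function.update_self]; linarith
        · rw [ha'_def, Function.update_of_ne hp]; exact ha p
      · intro p
        by_cases hp : p = k
        · subst hp; rw [hb'_def, Function.update_self]; linarith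
        · rw [hb'_def, Function.update_of_ne hp]; exact hb p
      · rw [ha'_def, Finset.sum_update_of_mem (Finset.mem_univ j)]
        rw [show ∑ x ∈ Finset.univ \ {j}, a x = F - a j by
          rw [Finset.sum_sdiff_eq_sub (by simp), hA]; simp]
        ring
      · rw [hb'_def, Finset.sum_update_of_mem (Finset.mem_univ k)]
        rw [show ∑ x ∈ Finset.univ \ {k}, b x = F - b k by
          rw [Finset.sum_sdiff_eq_sub (by simp), hB]; simp]
        ring
    · push_neg at hcase
      set m := min (a j) (b k) with hm_def
      have hm_pos : 0 < m := lt_min hj hk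
      have hmaj : m ≤ a j := min_le_left _ _
      have hmbk : m ≤ b k := min_le_right _ _
      refine transport_add_edge a b j k (Ne.symm hkj) m (le_of_lt hm_pos) ?_
      set a' := Function.update a j (a j - m) with ha'_def
      set b' := Function.update b k (b k - m) with hb'_def
      have ha' : ∀ p, 0 ≤ a' p := by
        intro p
        by_cases hp : p = j
        · subst hp; rw [ha'_def, Function.update_self]; linarith
        · rw [ha'_def, Function.update_of_ne hp]; exact ha p
      have hb' : ∀ p, 0 ≤ b' p := by
        intro p
        by_cases hp : p = k
        · subst hp; rw [hb'_def, Function.update_self]; linarith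
        · rw [hb'_def, Function.update_of_ne hp]; exact hb p
      have hA' : ∑ p, a' p = F - m := by
        rw [ha'_def, Finset.sum_update_of_mem (Finset.mem_univ j)]
        rw [show ∑ x ∈ Finset.univ \ {j}, a x = F - a j by
          rw [Finset.sum_sdiff_eq_sub (by simp), hA]; simp]
        ring
      have hB' : ∑ p, b' p = F - m := by
        rw [hb'_def, Finset.sum_update_of_mem (Finset.mem_univ k)]
        rw [show ∑ x ∈ Finset.univ \ {k}, b x = F - b k by
          rw [Finset.sum_sdiff_eq_sub (by simp), hB]; simp]
        ring
      have hd' : ∀ p, a' p + b' p ≤ F - m := by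
        intro p
        by_cases hpj : p = j
        · rw [hpj, ha'_def, Function.update_self, hb'_def,
            Function.update_of_ne (Ne.symm hkj)]
          have := hd j; linarith
        by_cases hpk : p = k
        · rw [hpk, hb'_def, Function.update_self, ha'_def, Function.update_of_ne hkj]
          have := hd k; linarith
        · rw [ha'_def, Function.update_of_ne hpj, hb'_def, Function.update_of_ne hpk]
          have := hcase p hpj hpk
          linarith
      apply ih a' b' (F - m) ha' hb' hA' hB' hd'
      -- measure decreases
      have hsa : (Finset.univ.filter (fun p => 0 < a' p)) ⊆
          (Finset.univ.filter (fun p => 0 < a p)) := by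
        intro p hp
        simp only [Finset.mem_filter, Finset.mem_univ, true_and] at hp ⊢
        by_cases hpj : p = j
        · subst hpj; exact hj
        · rwa [ha'_def, Function.update_of_ne hpj] at hp
      have hsb : (Finset.univ.filter (fun p => 0 < b' p)) ⊆
          (Finset.univ.filter (fun p => 0 < b p)) := by
        intro p hp
        simp only [Finset.mem_filter, Finset.mem_univ, true_and] at hp ⊢
        by_cases hpk : p = k
        · subst hpk; exact hk
        · rwa [hb'_def, Function.update_of_ne hpk] at hp
      rcases le_total (a j) (b k) with hc | hc
      · -- m = a j, so j leaves the a-support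
        have hmeq : m = a j := min_eq_left hc
        have hstrict_a : (Finset.univ.filter (fun p => 0 < a' p)).card <
            (Finset.univ.filter (fun p => 0 < a p)).card := by
          apply Finset.card_lt_card
          refine ⟨hsa, ?_⟩
          intro hsub
          have hjmem : j ∈ Finset.univ.filter (fun p => 0 < a p) := by simp [hj]
          have := hsub hjmem
          simp only [Finset.mem_filter, Finset.mem_univ, true_and, ha'_def,
            Function.update_self] at this
          linarith
        have := Finset.card_le_card hsb
        omega
      · have hmeq : m = b k := min_eq_right hc
        have hstrict_b : (Finset.univ.filter (fun p => 0 < b' p)).card <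
            (Finset.univ.filter (fun p => 0 < b p)).card := by
          apply Finset.card_lt_card
          refine ⟨hsb, ?_⟩
          intro hsub
          have hkmem : k ∈ Finset.univ.filter (fun p => 0 < b p) := by simp [hk]
          have := hsub hkmem
          simp only [Finset.mem_filter, Finset.mem_univ, true_and, hb'_def,
            Function.update_self] at this
          linarith
        have := Finset.card_le_card hsa
        omega
end

section
/- Let 0 ≤ θ ≤ 1/2 and let ρ be a real number with 1 − θ ≤ ρ < 1. Let S be a finite set and let ρ_j ∈ [0, 1−θ] for each j ∈ S with ∑_{j∈S} ρ_j = ρ. Then ∑_{j∈S} max{ (ρ_j − ρ + θ)^+ / (1 − ρ), (ρ_j − ρ + 1 − θ)^+ / (2 − 2θ − ρ) } ≤ 1, where t^+ denotes max{t, 0}. -/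
/-- Sum bound in the LP feasibility lemma for Stochastic SWOR: for `0 ≤ θ ≤ 1/2`,
`1-θ ≤ ρ < 1`, and `ρ_j ∈ [0, 1-θ]` with `∑ ρ_j = ρ`:
`∑_j max{ (ρ_j - ρ + θ)⁺/(1-ρ), (ρ_j - ρ + 1 - θ)⁺/(2 - 2θ - ρ) } ≤ 1`. -/
theorem sum_bound {S : Type*} [Fintype S] (θ ρ : ℝ)
    (hθ0 : 0 ≤ θ) (hθ1 : θ ≤ 1/2) (hρ1 : 1 - θ ≤ ρ) (hρ2 : ρ < 1)
    (ρj : S → ℝ) (hρj : ∀ j, ρj j ∈ Set.Icc (0:ℝ) (1 - θ))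
    (hsum : ∑ j, ρj j = ρ) :
    ∑ j, max (max (ρj j - ρ + θ) 0 / (1 - ρ))
        (max (ρj j - ρ + 1 - θ) 0 / (2 - 2 * θ - ρ)) ≤ 1 := by
  have hD : (0:ℝ) < 2 - 2 * θ - ρ := by linarith
  have h1ρ : (0:ℝ) < 1 - ρ := by linarith
  -- the max is always equal to the second branch
  have hmax : ∀ j, max (max (ρj j - ρ + θ) 0 / (1 - ρ))
      (max (ρj j - ρ + 1 - θ) 0 / (2 - 2 * θ - ρ)) =
      max (ρj j - ρ + 1 - θ) 0 / (2 - 2 * θ - ρ) := by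
    intro j
    apply max_eq_right
    obtain ⟨h0, h1⟩ := hρj j
    rcases le_or_gt (ρj j - ρ + θ) 0 with h | h
    · rw [max_eq_right h]
      rw [zero_div]
      positivity
    · rw [max_eq_left h.le, max_eq_left (by linarith : (0:ℝ) ≤ ρj j - ρ + 1 - θ)]
      rw [div_le_div_iff₀ h1ρ hD]
      nlinarith
  rw [Finset.sum_congr rfl (fun j _ => hmax j), ← Finset.sum_div, div_le_one hD]
  -- reduce to sum over the positive-part support
  classical
  set A := Finset.univ.filter (fun j => 0 < ρj j - ρ + 1 - θ) with hA
  have hsumf : ∑ j, max (ρj j - ρ + 1 - θ) 0 = ∑ j ∈ A, (ρj j - ρ + 1 - θ) := by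
    rw [hA, Finset.sum_filter]
    refine Finset.sum_congr rfl fun j _ => ?_
    by_cases h : 0 < ρj j - ρ + 1 - θ
    · simp [h, max_eq_left h.le]
    · simp [h, max_eq_right (not_lt.mp h)]
  rw [hsumf]
  rcases le_or_gt A.card 1 with hc | hc
  · -- at most one positive term: each term is at most the target
    have hterm : ∀ j ∈ A, ρj j - ρ + 1 - θ ≤ 2 - 2 * θ - ρ := fun j _ => by
      have := (hρj j).2; linarith
    have := Finset.sum_le_card_nsmul A _ _ hterm
    have hc' : (A.card : ℝ) ≤ 1 := by exact_mod_cast hc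
    rw [nsmul_eq_mul] at this
    nlinarith
  · -- at least two positive terms
    have hsplit : ∑ j ∈ A, (ρj j - ρ + 1 - θ)
        = (∑ j ∈ A, ρj j) + A.card * (1 - θ - ρ) := by
      rw [Finset.sum_congr rfl (fun j _ => by ring :
            ∀ j ∈ A, ρj j - ρ + 1 - θ = ρj j + (1 - θ - ρ)),
          Finset.sum_add_distrib, Finset.sum_const, nsmul_eq_mul]
    have hsub : ∑ j ∈ A, ρj j ≤ ρ := by
      rw [← hsum]
      exact Finset.sum_le_sum_of_subset_of_nonneg (Finset.subset_univ A)
        (fun j _ _ => (hρj j).1)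
    have hc' : (2:ℝ) ≤ A.card := by exact_mod_cast hc
    have hneg : 1 - θ - ρ ≤ 0 := by linarith
    rw [hsplit]
    nlinarith
end
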